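/- arXiv:1203.2713 — 11 statements merged into one kernel-verified Lean document; each statement's English description precedes it below -/
import Mathlib

section
/- Let f(z) = z + \sum_{n=2}^{\infty} a_n z^n with complex coefficients a_n satisfying \sum_{n=2}^{\infty} n|a_n| \le 1. Then f defines an analytic function on the unit disk D = {z : |z| < 1}, f(z) \ne 0 for all z \in D with z \ne 0, and |f'(z) (z/f(z))^2 - 1| < 1 for all z \in D with z \ne 0; that is, f belongs to the class U. -/
/-- The class `U`: normalized analytic functions `f` on the unit disk with
`f(z)/z ≠ 0` and `|f'(z)(z/f(z))² - 1| < 1` on the disk. -/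
def ClassU (f : ℂ → ℂ) : Prop :=
  DifferentiableOn ℂ f (Metric.ball 0 1) ∧
  f 0 = 0 ∧ deriv f 0 = 1 ∧
  (∀ z ∈ Metric.ball (0 : ℂ) 1, z ≠ 0 → f z ≠ 0) ∧
  (∀ z ∈ Metric.ball (0 : ℂ) 1, z ≠ 0 → ‖deriv f z * (z / f z) ^ 2 - 1‖ < 1)

/-- If `∑_{n≥2} n |a_n| ≤ 1`, then `f(z) = z + ∑_{n≥2} a_n zⁿ` belongs to the class `U`. -/
theorem stmt0 (a : ℕ → ℂ)
    (hsum : Summable (fun n : ℕ => ((n + 2 : ℕ) : ℝ) * ‖a (n + 2)‖))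
    (hle : ∑' n : ℕ, ((n + 2 : ℕ) : ℝ) * ‖a (n + 2)‖ ≤ 1) :
    ClassU (fun z : ℂ => z + ∑' n : ℕ, a (n + 2) * z ^ (n + 2)) := by
  have hM : Summable (fun n : ℕ => ‖a (n + 2)‖) := by
    apply hsum.of_nonneg_of_le (fun n => norm_nonneg _)
    intro n
    have h1 : (1:ℝ) ≤ ((n+2:ℕ):ℝ) := by push_cast; linarith [Nat.cast_nonneg (α := ℝ) n]
    nlinarith [norm_nonneg (a (n+2))]
  have hN : Summable (fun n : ℕ => (n:ℝ) * ‖a (n + 2)‖) := by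
    apply hsum.of_nonneg_of_le (fun n => by positivity)
    intro n
    have h1 : ((n:ℝ)) ≤ ((n+2:ℕ):ℝ) := by push_cast; linarith
    nlinarith [norm_nonneg (a (n+2))]
  set M := ∑' n : ℕ, ‖a (n + 2)‖ with hMdef
  set N := ∑' n : ℕ, (n:ℝ) * ‖a (n + 2)‖ with hNdef
  have hM0 : 0 ≤ M := tsum_nonneg fun n => norm_nonneg _
  have hN0 : 0 ≤ N := tsum_nonneg fun n => by positivity
  have hNM : N + 2 * M ≤ 1 := by
    have h1 : N + 2 * M = ∑' n : ℕ, ((n:ℝ) * ‖a (n + 2)‖ + 2 * ‖a (n + 2)‖) := by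
      rw [hN.tsum_add (hM.mul_left 2), tsum_mul_left]
    rw [h1]
    refine le_trans (le_of_eq (tsum_congr fun n => ?_)) hle
    push_cast; ring
  -- summability of the series and its derivative series
  have hsg : ∀ z : ℂ, ‖z‖ ≤ 1 → Summable (fun n : ℕ => a (n+2) * z ^ (n+2)) := by
    intro z hz
    apply Summable.of_norm_bounded hM
    intro n
    rw [norm_mul, norm_pow]
    calc ‖a (n+2)‖ * ‖z‖^(n+2) ≤ ‖a (n+2)‖ * 1 :=
          mul_le_mul_of_nonneg_left (pow_le_one₀ (norm_nonneg z) hz) (norm_nonneg _)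
      _ = ‖a (n+2)‖ := mul_one _
  have hbound : ∀ (n : ℕ) (z : ℂ), z ∈ Metric.ball (0:ℂ) 1 →
      ‖((n+2:ℕ):ℂ) * a (n+2) * z ^ (n+1)‖ ≤ ((n+2:ℕ):ℝ) * ‖a (n+2)‖ := by
    intro n z hz
    rw [Metric.mem_ball, dist_zero_right] at hz
    rw [norm_mul, norm_mul, norm_pow, Complex.norm_natCast]
    have h1 : ‖z‖^(n+1) ≤ 1 := pow_le_one₀ (norm_nonneg z) hz.le
    have h2 : (0:ℝ) ≤ ((n+2:ℕ):ℝ) * ‖a (n+2)‖ := by positivity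
    nlinarith [norm_nonneg (a (n+2)), Nat.cast_nonneg (α := ℝ) (n+2)]
  have hsg' : ∀ z : ℂ, z ∈ Metric.ball (0:ℂ) 1 →
      Summable (fun n : ℕ => ((n+2:ℕ):ℂ) * a (n+2) * z ^ (n+1)) := by
    intro z hz
    exact Summable.of_norm_bounded hsum (fun n => hbound n z hz)
  have hderiv : ∀ (n : ℕ) (z : ℂ), z ∈ Metric.ball (0:ℂ) 1 →
      HasDerivAt (fun z : ℂ => a (n+2) * z ^ (n+2))
      (((n+2:ℕ):ℂ) * a (n+2) * z ^ (n+1)) z := by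
    intro n z _
    have := (hasDerivAt_pow (n+2) z).const_mul (a (n+2))
    refine this.congr_deriv ?_
    push_cast; ring_nf
  have hg0 : Summable (fun n : ℕ => a (n+2) * (0:ℂ) ^ (n+2)) := by
    apply summable_zero.congr
    intro n; simp
  have hT : ∀ z ∈ Metric.ball (0:ℂ) 1,
      HasDerivAt (fun w : ℂ => ∑' n : ℕ, a (n+2) * w ^ (n+2))
        (∑' n : ℕ, ((n+2:ℕ):ℂ) * a (n+2) * z ^ (n+1)) z := by
    intro z hz
    exact hasDerivAt_tsum_of_isPreconnected hsum Metric.isOpen_ball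
      (convex_ball (0:ℂ) 1).isPreconnected hderiv hbound
      (Metric.mem_ball_self one_pos) hg0 hz
  have hF : ∀ z ∈ Metric.ball (0:ℂ) 1,
      HasDerivAt (fun w : ℂ => w + ∑' n : ℕ, a (n+2) * w ^ (n+2))
        (1 + ∑' n : ℕ, ((n+2:ℕ):ℂ) * a (n+2) * z ^ (n+1)) z := by
    intro z hz
    exact (hasDerivAt_id z).add (hT z hz)
  -- norm bounds on the two auxiliary sums
  have hGb : ∀ z : ℂ, ‖z‖ ≤ 1 → ‖∑' n : ℕ, a (n+2) * z ^ (n+2)‖ ≤ M * ‖z‖^2 := by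
    intro z hz
    apply tsum_of_norm_bounded (hM.hasSum.mul_right (‖z‖^2))
    intro n
    rw [norm_mul, norm_pow]
    exact mul_le_mul_of_nonneg_left (pow_le_pow_of_le_one (norm_nonneg z) hz (by omega))
      (norm_nonneg _)
  have hEs : ∀ z : ℂ, ‖z‖ ≤ 1 → Summable (fun n : ℕ => (n:ℂ) * a (n+2) * z ^ (n+3)) := by
    intro z hz
    apply Summable.of_norm_bounded hN
    intro n
    rw [norm_mul, norm_mul, norm_pow, Complex.norm_natCast]
    have h1 : ‖z‖^(n+3) ≤ 1 := pow_le_one₀ (norm_nonneg z) hz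
    exact mul_le_of_le_one_right (by positivity) h1
  have hEb : ∀ z : ℂ, ‖z‖ ≤ 1 →
      ‖∑' n : ℕ, (n:ℂ) * a (n+2) * z ^ (n+3)‖ ≤ N * ‖z‖^3 := by
    intro z hz
    apply tsum_of_norm_bounded (hN.hasSum.mul_right (‖z‖^3))
    intro n
    rw [norm_mul, norm_mul, norm_pow, Complex.norm_natCast]
    exact mul_le_mul_of_nonneg_left (pow_le_pow_of_le_one (norm_nonneg z) hz (by omega))
      (by positivity)
  -- nonvanishing
  have hne : ∀ z ∈ Metric.ball (0:ℂ) 1, z ≠ 0 →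
      (z + ∑' n : ℕ, a (n+2) * z ^ (n+2)) ≠ 0 ∧
      ‖z‖ - M * ‖z‖^2 ≤ ‖z + ∑' n : ℕ, a (n+2) * z ^ (n+2)‖ ∧
      0 < ‖z‖ - M * ‖z‖^2 := by
    intro z hz hz0
    rw [Metric.mem_ball, dist_zero_right] at hz
    have ht0 : 0 < ‖z‖ := norm_pos_iff.mpr hz0
    set G := ∑' n : ℕ, a (n+2) * z ^ (n+2) with hGdef
    have hG : ‖G‖ ≤ M * ‖z‖^2 := hGb z hz.le
    have hlow : ‖z‖ - ‖G‖ ≤ ‖z + G‖ := by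
      have h1 : ‖z‖ ≤ ‖z + G‖ + ‖G‖ := by
        calc ‖z‖ = ‖(z + G) + (-G)‖ := by ring_nf
          _ ≤ ‖z + G‖ + ‖-G‖ := norm_add_le _ _
          _ = ‖z + G‖ + ‖G‖ := by rw [norm_neg]
      linarith
    have hpos : 0 < ‖z‖ - M * ‖z‖^2 := by nlinarith
    refine ⟨?_, by linarith, hpos⟩
    intro h
    rw [h, norm_zero] at hlow
    linarith
  refine ⟨?_, ?_, ?_, fun z hz hz0 => (hne z hz hz0).1, ?_⟩
  · intro z hz
    exact ((hF z hz).differentiableAt).differentiableWithinAt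
  · simp
  · rw [(hF 0 (Metric.mem_ball_self one_pos)).deriv]
    simp
  · intro z hz hz0
    have hzn : ‖z‖ < 1 := by rwa [Metric.mem_ball, dist_zero_right] at hz
    have ht0 : 0 < ‖z‖ := norm_pos_iff.mpr hz0
    obtain ⟨hfne, hlow, hpos⟩ := hne z hz hz0
    rw [(hF z hz).deriv]
    set t := ‖z‖ with htdef
    set G := ∑' n : ℕ, a (n+2) * z ^ (n+2) with hGdef
    set D := ∑' n : ℕ, ((n+2:ℕ):ℂ) * a (n+2) * z ^ (n+1) with hDdef
    set E := ∑' n : ℕ, (n:ℂ) * a (n+2) * z ^ (n+3) with hEdef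
    have hkey : D * z^2 - 2*z*G = E := by
      rw [hGdef, hDdef, hEdef, ← tsum_mul_right, ← tsum_mul_left,
        ← Summable.tsum_sub ((hsg' z hz).mul_right (z^2)) ((hsg z hzn.le).mul_left (2*z))]
      apply tsum_congr
      intro n
      push_cast
      ring
    have key : (1 + D) * (z / (z + G))^2 - 1 = (E - G^2) / (z + G)^2 := by
      have h2 : (z + G)^2 ≠ 0 := pow_ne_zero 2 hfne
      rw [div_pow, ← mul_div_assoc, div_sub_one h2]
      congr 1
      linear_combination hkey
    have hnpos : (0:ℝ) < ‖z + G‖^2 := pow_pos (norm_pos_iff.mpr hfne) 2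
    rw [key, norm_div, norm_pow, div_lt_one hnpos]
    have hG : ‖G‖ ≤ M * t^2 := hGb z hzn.le
    have hE : ‖E‖ ≤ N * t^3 := hEb z hzn.le
    have h1 : ‖E - G^2‖ ≤ ‖E‖ + ‖G‖^2 := by
      calc ‖E - G^2‖ ≤ ‖E‖ + ‖G^2‖ := norm_sub_le _ _
        _ = ‖E‖ + ‖G‖^2 := by rw [norm_pow]
    have h2 : (t - M*t^2)^2 ≤ ‖z+G‖^2 := by nlinarith
    nlinarith [norm_nonneg G, norm_nonneg E,
      mul_nonneg (mul_nonneg (add_nonneg hN0 (by linarith : (0:ℝ) ≤ 2*M)) ht0.le) ht0.le,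
      mul_pos (mul_pos ht0 ht0) (sub_pos.mpr hzn),
      mul_nonneg (sub_nonneg.mpr hNM) (by positivity : (0:ℝ) ≤ t^3)]
end

section
/- Let f(z) = z - \sum_{n=2}^{\infty} |a_n| z^n, where the a_n are complex numbers such that the series converges on the unit disk D and f(z)/z \ne 0 on D. If |f'(z)(z/f(z))^2 - 1| < 1 for all z \in D with z \ne 0 (i.e. f belongs to the class U), then \sum_{n=2}^{\infty} n|a_n| \le 1. -/
open Metric Finset Filter

/-- Summability of the derivative series at radius `ρ < 1`. -/
lemma stmt2_sumB (c : ℕ → ℝ) (hc0 : ∀ n, 0 ≤ c n)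
    (sumA : ∀ ρ : ℝ, 0 ≤ ρ → ρ < 1 → Summable (fun n => c n * ρ ^ (n + 2)))
    (ρ : ℝ) (h0 : 0 ≤ ρ) (h1 : ρ < 1) :
    Summable (fun n : ℕ => ((n : ℝ) + 2) * c n * ρ ^ (n + 1)) := by
  set σ : ℝ := (ρ + 1) / 2 with hσ
  have hσ0 : 0 < σ := by rw [hσ]; linarith
  have hρσ : ρ < σ := by rw [hσ]; linarith
  have hσ1 : σ < 1 := by rw [hσ]; linarith
  have hsum := sumA σ hσ0.le hσ1
  set M : ℝ := ∑' n, c n * σ ^ (n + 2) with hM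
  have hMn : ∀ n, c n * σ ^ (n + 2) ≤ M := fun n =>
    Summable.le_tsum hsum n (fun m _ => mul_nonneg (hc0 m) (pow_nonneg hσ0.le _))
  have hM0 : 0 ≤ M := le_trans (mul_nonneg (hc0 0) (pow_nonneg hσ0.le _)) (hMn 0)
  set t : ℝ := ρ / σ with ht
  have ht0 : 0 ≤ t := div_nonneg h0 hσ0.le
  have ht1 : t < 1 := (div_lt_one hσ0).2 hρσ
  have hgeo : Summable (fun n : ℕ => (M / σ) * ((n : ℝ) * t ^ n + 2 * t ^ n)) := by
    refine Summable.mul_left _ (Summable.add ?_ ?_)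
    · simpa using summable_pow_mul_geometric_of_norm_lt_one 1 (by rwa [Real.norm_eq_abs, abs_of_nonneg ht0])
    · exact (summable_geometric_of_lt_one ht0 ht1).mul_left 2
  refine Summable.of_nonneg_of_le (fun n => mul_nonneg (mul_nonneg (by positivity) (hc0 n)) (pow_nonneg h0 _)) (fun n => ?_) hgeo
  have h1n : c n * ρ ^ (n + 1) ≤ (M / σ) * t ^ (n + 1) := by
    have e1 : t ^ (n + 1) = ρ ^ (n + 1) / σ ^ (n + 1) := div_pow ρ σ (n + 1)
    have e2 : c n * σ ^ (n + 2) * (ρ ^ (n + 1) / σ ^ (n + 2)) ≤ M * (ρ ^ (n + 1) / σ ^ (n + 2)) :=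
      mul_le_mul_of_nonneg_right (hMn n) (by positivity)
    have e3 : c n * σ ^ (n + 2) * (ρ ^ (n + 1) / σ ^ (n + 2)) = c n * ρ ^ (n + 1) := by
      field_simp
    have e4 : M * (ρ ^ (n + 1) / σ ^ (n + 2)) = (M / σ) * t ^ (n + 1) := by
      rw [e1, ← mul_div_assoc, div_mul_div_comm]; congr 1; ring
    calc c n * ρ ^ (n + 1) = _ := e3.symm
      _ ≤ _ := e2
      _ = _ := e4
  have h2n : ((n : ℝ) + 2) * ((M / σ) * t ^ (n + 1)) ≤ (M / σ) * ((n : ℝ) * t ^ n + 2 * t ^ n) := by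
    have htt : t ^ (n + 1) ≤ t ^ n := pow_le_pow_of_le_one ht0 ht1.le (Nat.le_succ n)
    have hMσ : 0 ≤ M / σ := by positivity
    have : ((n : ℝ) + 2) * t ^ (n + 1) ≤ (n : ℝ) * t ^ n + 2 * t ^ n := by
      nlinarith [mul_le_mul_of_nonneg_left htt (Nat.cast_nonneg n : (0:ℝ) ≤ n)]
    nlinarith
  calc ((n : ℝ) + 2) * c n * ρ ^ (n + 1) = ((n : ℝ) + 2) * (c n * ρ ^ (n + 1)) := by ring
    _ ≤ ((n : ℝ) + 2) * ((M / σ) * t ^ (n + 1)) := mul_le_mul_of_nonneg_left h1n (by positivity)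
    _ ≤ _ := h2n

/-- Term-by-term differentiation of the power series inside the unit disk. -/
lemma stmt2_deriv (c : ℕ → ℝ) (hc0 : ∀ n, 0 ≤ c n) (f : ℂ → ℂ)
    (hf : ∀ z ∈ Metric.ball (0 : ℂ) 1,
      f z = z - ∑' n : ℕ, (c n : ℂ) * z ^ (n + 2))
    (sumB : ∀ ρ : ℝ, 0 ≤ ρ → ρ < 1 →
      Summable (fun n : ℕ => ((n : ℝ) + 2) * c n * ρ ^ (n + 1)))
    (z₀ : ℂ) (hz₀ : z₀ ∈ Metric.ball (0 : ℂ) 1) :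
    deriv f z₀ = 1 - ∑' n : ℕ, ((((n : ℝ) + 2) * c n : ℝ) : ℂ) * z₀ ^ (n + 1) := by
  have hz1 : ‖z₀‖ < 1 := by simpa [dist_zero_right] using hz₀
  set ρ : ℝ := (‖z₀‖ + 1) / 2 with hρ
  have hρ0 : 0 < ρ := by rw [hρ]; positivity
  have hρ1 : ρ < 1 := by rw [hρ]; linarith
  have hzρ : ‖z₀‖ < ρ := by rw [hρ]; linarith [norm_nonneg z₀]
  set u : ℕ → ℝ := fun n => ((n : ℝ) + 2) * c n * ρ ^ (n + 1) with hu
  have hU : Summable u := sumB ρ hρ0.le hρ1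
  set G : ℕ → ℂ → ℂ := fun n z => (c n : ℂ) * z ^ (n + 2) with hG
  set G' : ℕ → ℂ → ℂ := fun n z => ((((n : ℝ) + 2) * c n : ℝ) : ℂ) * z ^ (n + 1) with hG'
  have hg : ∀ n y, y ∈ ball (0 : ℂ) ρ → HasDerivAt (G n) (G' n y) y := by
    intro n y _
    have h := (hasDerivAt_pow (n + 2) y).const_mul (c n : ℂ)
    refine h.congr_deriv ?_
    rw [hG']
    norm_num
    push_cast
    ring
  have hg' : ∀ n y, y ∈ ball (0 : ℂ) ρ → ‖G' n y‖ ≤ u n := by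
    intro n y hy
    have hyρ : ‖y‖ ≤ ρ := by
      have := mem_ball_iff_norm.mp hy
      simpa using this.le
    have hnn : (0:ℝ) ≤ ((n : ℝ) + 2) * c n := mul_nonneg (by positivity) (hc0 n)
    have heq : ‖G' n y‖ = (((n : ℝ) + 2) * c n) * ‖y‖ ^ (n + 1) := by
      rw [hG']
      rw [norm_mul, norm_pow, Complex.norm_real, Real.norm_eq_abs, abs_of_nonneg hnn]
    rw [heq, hu]
    have h1 : ‖y‖ ^ (n + 1) ≤ ρ ^ (n + 1) := pow_le_pow_left₀ (norm_nonneg y) hyρ (n + 1)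
    exact mul_le_mul_of_nonneg_left h1 hnn
  have hg0 : Summable (fun n => G n 0) := by
    simpa [hG] using summable_zero
  have key : HasDerivAt (fun z => ∑' n, G n z) (∑' n, G' n z₀) z₀ :=
    hasDerivAt_tsum_of_isPreconnected hU isOpen_ball (convex_ball _ _).isPreconnected
      hg hg' (mem_ball_self hρ0) hg0 (by simpa [mem_ball_iff_norm] using hzρ)
  have keyf : HasDerivAt (fun z => z - ∑' n, G n z) (1 - ∑' n, G' n z₀) z₀ :=
    (hasDerivAt_id z₀).sub key
  have heq : f =ᶠ[nhds z₀] fun z => z - ∑' n, G n z := by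
    filter_upwards [isOpen_ball.mem_nhds hz₀] with z hz
    exact hf z hz
  rw [Filter.EventuallyEq.deriv_eq heq, keyf.deriv]

/-- If `f(z) = z - ∑_{n≥2} |a_n| zⁿ` (negative coefficients), the series converges
on the unit disk, `f(z)/z ≠ 0` there, and `f` satisfies the defining inequality of
the class `U`, then `∑_{n≥2} n |a_n| ≤ 1`. -/
theorem stmt2 (a : ℕ → ℂ)
    (f : ℂ → ℂ)
    (hconv : ∀ z ∈ Metric.ball (0 : ℂ) 1,
      Summable (fun n : ℕ => (‖a (n + 2)‖ : ℂ) * z ^ (n + 2)))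
    (hf : ∀ z ∈ Metric.ball (0 : ℂ) 1,
      f z = z - ∑' n : ℕ, (‖a (n + 2)‖ : ℂ) * z ^ (n + 2))
    (hne : ∀ z ∈ Metric.ball (0 : ℂ) 1, z ≠ 0 → f z ≠ 0)
    (hU : ∀ z ∈ Metric.ball (0 : ℂ) 1, z ≠ 0 →
      ‖deriv f z * (z / f z) ^ 2 - 1‖ < 1) :
    Summable (fun n : ℕ => ((n + 2 : ℕ) : ℝ) * ‖a (n + 2)‖) ∧
      ∑' n : ℕ, ((n + 2 : ℕ) : ℝ) * ‖a (n + 2)‖ ≤ 1 := by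
  classical
  set c : ℕ → ℝ := fun n => ‖a (n + 2)‖ with hc
  have hc0 : ∀ n, 0 ≤ c n := fun n => norm_nonneg _
  -- summability of the real series at radius ρ < 1
  have sumA : ∀ ρ : ℝ, 0 ≤ ρ → ρ < 1 → Summable (fun n => c n * ρ ^ (n + 2)) := by
    intro ρ h0 h1
    have hzb : ((ρ : ℂ)) ∈ ball (0 : ℂ) 1 := by
      simp [mem_ball_iff_norm, Complex.norm_real, abs_of_nonneg h0, h1]
    have hsum := hconv _ hzb
    have hns := summable_norm_iff.mpr hsum
    have : (fun n : ℕ => ‖(‖a (n + 2)‖ : ℂ) * (ρ : ℂ) ^ (n + 2)‖) =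
        fun n : ℕ => c n * ρ ^ (n + 2) := by
      funext n
      rw [norm_mul, norm_pow, Complex.norm_real, Complex.norm_real,
        Real.norm_eq_abs, Real.norm_eq_abs, abs_of_nonneg (hc0 n), abs_of_nonneg h0]
    rwa [this] at hns
  have sumB := stmt2_sumB c hc0 sumA
  -- the key inequality T(r) < 1 for real 0 < r < 1
  have key : ∀ r : ℝ, 0 < r → r < 1 →
      (∑' n : ℕ, ((n : ℝ) + 2) * c n * r ^ (n + 1)) < 1 := by
    intro r hr0 hr1
    set z : ℂ := (r : ℂ) with hz
    have hzb : z ∈ ball (0 : ℂ) 1 := by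
      simp [hz, mem_ball_iff_norm, Complex.norm_real, abs_of_nonneg hr0.le, hr1]
    have hz0 : z ≠ 0 := by
      simp [hz, Complex.ofReal_ne_zero, hr0.ne']
    set S : ℝ := ∑' n : ℕ, c n * r ^ (n + 2) with hS
    set T : ℝ := ∑' n : ℕ, ((n : ℝ) + 2) * c n * r ^ (n + 1) with hT
    have hfS : f z = ((r - S : ℝ) : ℂ) := by
      rw [hf z hzb, Complex.ofReal_sub, hS, Complex.ofReal_tsum]
      congr 1
      refine tsum_congr fun n => ?_
      push_cast
      ring
    have hderiv : deriv f z = ((1 - T : ℝ) : ℂ) := by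
      rw [stmt2_deriv c hc0 f hf sumB z hzb, Complex.ofReal_sub, hT, Complex.ofReal_tsum]
      norm_num
      rw [hz]
    have hrS : r - S ≠ 0 := by
      have := hne z hzb hz0
      rw [hfS] at this
      exact fun h => this (by rw [h]; simp)
    have hx := hU z hzb hz0
    rw [hfS, hderiv] at hx
    have hcast : ((1 - T : ℝ) : ℂ) * (z / ((r - S : ℝ) : ℂ)) ^ 2 - 1 =
        (((1 - T) * (r / (r - S)) ^ 2 - 1 : ℝ) : ℂ) := by
      rw [hz]
      push_cast
      ring
    rw [hcast, Complex.norm_real, Real.norm_eq_abs] at hx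
    have hx' := abs_lt.mp hx
    have hq : 0 < (r / (r - S)) ^ 2 := by
      have hd : r / (r - S) ≠ 0 := div_ne_zero hr0.ne' hrS
      exact (sq_nonneg _).lt_of_ne (Ne.symm (pow_ne_zero 2 hd))
    by_contra hcon
    push_neg at hcon
    have h1T : 1 - T ≤ 0 := by linarith
    nlinarith [hx'.1]
  -- partial sums are bounded by 1
  have hbd : ∀ N : ℕ, ∑ n ∈ range N, ((n : ℝ) + 2) * c n ≤ 1 := by
    intro N
    set rk : ℕ → ℝ := fun k => 1 - 1 / ((k : ℝ) + 1) with hrk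
    have hrk1 : ∀ k, rk k < 1 := by
      intro k
      have : (0:ℝ) < 1 / ((k : ℝ) + 1) := by positivity
      simp only [hrk]
      linarith
    have hrkpos : ∀ k : ℕ, 1 ≤ k → 0 < rk k := by
      intro k hk
      have hk1 : (1:ℝ) ≤ (k : ℝ) := by exact_mod_cast hk
      have : 1 / ((k : ℝ) + 1) ≤ 1 / 2 := by
        apply one_div_le_one_div_of_le <;> linarith
      simp only [hrk]
      linarith
    have htendr : Tendsto rk atTop (nhds 1) := by
      have := tendsto_one_div_add_atTop_nhds_zero_nat (𝕜 := ℝ)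
      have h2 : Tendsto (fun k : ℕ => 1 - 1 / ((k : ℝ) + 1)) atTop (nhds (1 - 0)) :=
        tendsto_const_nhds.sub this
      simpa [hrk] using h2
    have htend : Tendsto (fun k => ∑ n ∈ range N, ((n : ℝ) + 2) * c n * (rk k) ^ (n + 1))
        atTop (nhds (∑ n ∈ range N, ((n : ℝ) + 2) * c n)) := by
      have : Tendsto (fun k => ∑ n ∈ range N, ((n : ℝ) + 2) * c n * (rk k) ^ (n + 1))
          atTop (nhds (∑ n ∈ range N, ((n : ℝ) + 2) * c n * (1:ℝ) ^ (n + 1))) := by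
        refine tendsto_finset_sum _ fun n _ => ?_
        exact ((htendr.pow (n + 1)).const_mul _)
      simpa using this
    refine le_of_tendsto htend ?_
    filter_upwards [eventually_ge_atTop 1] with k hk
    have h0 := hrkpos k hk
    have h1 := hrk1 k
    have hpart : ∑ n ∈ range N, ((n : ℝ) + 2) * c n * (rk k) ^ (n + 1) ≤
        ∑' n : ℕ, ((n : ℝ) + 2) * c n * (rk k) ^ (n + 1) :=
      Summable.sum_le_tsum (range N)
        (fun m _ => mul_nonneg (mul_nonneg (by positivity) (hc0 m)) (pow_nonneg h0.le _))
        (sumB (rk k) h0.le h1)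
    exact hpart.trans (key (rk k) h0 h1).le
  have hfun : (fun n : ℕ => ((n + 2 : ℕ) : ℝ) * ‖a (n + 2)‖) =
      fun n : ℕ => ((n : ℝ) + 2) * c n := by
    funext n
    rw [hc]
    push_cast
    ring
  have hnn : ∀ n : ℕ, 0 ≤ ((n : ℝ) + 2) * c n := fun n =>
    mul_nonneg (by positivity) (hc0 n)
  rw [hfun]
  exact ⟨summable_of_sum_range_le hnn hbd, Real.tsum_le_of_sum_range_le hnn hbd⟩
end

section
/- Let f(z) = z - \sum_{n=2}^{\infty} |a_n| z^n, where the a_n are complex numbers such that the series converges on the unit disk D and f(z)/z \ne 0 on D. Then the following are equivalent: (i) f belongs to the class U, i.e. |f'(z)(z/f(z))^2 - 1| < 1 for all z \in D with z \ne 0; (ii) \sum_{n=2}^{\infty} n|a_n| \le 1; (iii) |f'(z) - 1| < 1 for all z \in D (f belongs to R_1). -/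
open Metric Finset Filter

/-- Workhorse summability: if `∑ C n r^(n+2)` converges for every `r ∈ [0,1)`,
then `∑ (n+2) C n r^n` converges for `r ∈ [0,1)`. -/
lemma aux_sumNC (C : ℕ → ℝ) (hC0 : ∀ n, 0 ≤ C n)
    (hs : ∀ r : ℝ, 0 ≤ r → r < 1 → Summable (fun n : ℕ => C n * r ^ (n + 2)))
    {r : ℝ} (hr0 : 0 ≤ r) (hr1 : r < 1) :
    Summable (fun n : ℕ => ((n : ℝ) + 2) * C n * r ^ n) := by
  rcases eq_or_lt_of_le hr0 with h0 | h0
  · apply summable_of_ne_finset_zero (s := {0})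
    intro n hn
    simp only [Finset.mem_singleton] at hn
    rw [← h0, zero_pow hn, mul_zero]
  · set ρ : ℝ := (r + 1) / 2 with hρdef
    have hrρ : r < ρ := by simp only [hρdef]; linarith
    have hρ1 : ρ < 1 := by simp only [hρdef]; linarith
    have hρ0 : 0 < ρ := by simp only [hρdef]; linarith
    have hsum := hs ρ hρ0.le hρ1
    set M : ℝ := ∑' n, C n * ρ ^ (n + 2) with hMdef
    have hbound : ∀ n, C n * ρ ^ n ≤ M / ρ ^ 2 := by
      intro n
      have h1 : C n * ρ ^ (n + 2) ≤ M :=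
        Summable.le_tsum hsum n (fun m _ => mul_nonneg (hC0 m) (pow_nonneg hρ0.le _))
      rw [le_div_iff₀ (by positivity)]
      calc C n * ρ ^ n * ρ ^ 2 = C n * ρ ^ (n + 2) := by ring
        _ ≤ M := h1
    have hx0 : 0 ≤ r / ρ := by positivity
    have hx1 : r / ρ < 1 := (div_lt_one hρ0).mpr hrρ
    have base : Summable (fun n : ℕ => ((n : ℝ) + 2) * (r / ρ) ^ n) := by
      have h1 : Summable (fun n : ℕ => (n : ℝ) * (r / ρ) ^ n) := by
        simpa using summable_pow_mul_geometric_of_norm_lt_one 1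
          (r := (r / ρ)) (by rw [Real.norm_eq_abs, abs_of_nonneg hx0]; exact hx1)
      have h2 : Summable (fun n : ℕ => (2 : ℝ) * (r / ρ) ^ n) :=
        (summable_geometric_of_lt_one hx0 hx1).mul_left 2
      simpa [add_mul] using h1.add h2
    apply Summable.of_nonneg_of_le
      (fun n : ℕ => mul_nonneg (mul_nonneg (by positivity) (hC0 n)) (pow_nonneg hr0 _))
      (fun n : ℕ => ?_) (base.mul_left (M / ρ ^ 2))
    have hρn : 0 < ρ ^ n := pow_pos hρ0 n
    have : ((n : ℝ) + 2) * C n * r ^ n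
        = (((n : ℝ) + 2) * (r / ρ) ^ n) * (C n * ρ ^ n) := by
      field_simp
      rw [mul_assoc, ← mul_pow, div_mul_cancel₀ r hρ0.ne']
    rw [this]
    calc (((n : ℝ) + 2) * (r / ρ) ^ n) * (C n * ρ ^ n)
        ≤ (((n : ℝ) + 2) * (r / ρ) ^ n) * (M / ρ ^ 2) := by
          apply mul_le_mul_of_nonneg_left (hbound n) (by positivity)
      _ = M / ρ ^ 2 * (((n : ℝ) + 2) * (r / ρ) ^ n) := by ring

lemma aux_sumNCk (C : ℕ → ℝ) (hC0 : ∀ n, 0 ≤ C n)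
    (hs : ∀ r : ℝ, 0 ≤ r → r < 1 → Summable (fun n : ℕ => C n * r ^ (n + 2)))
    {r : ℝ} (hr0 : 0 ≤ r) (hr1 : r < 1) (k : ℕ) :
    Summable (fun n : ℕ => ((n : ℝ) + 2) * C n * r ^ (n + k)) := by
  apply Summable.of_nonneg_of_le
    (fun n : ℕ => mul_nonneg (mul_nonneg (by positivity) (hC0 n)) (pow_nonneg hr0 _))
    (fun n : ℕ => ?_) (aux_sumNC C hC0 hs hr0 hr1)
  have : r ^ (n + k) = r ^ n * r ^ k := pow_add r n k
  rw [this]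
  calc ((n : ℝ) + 2) * C n * (r ^ n * r ^ k)
      ≤ ((n : ℝ) + 2) * C n * (r ^ n * 1) := by
        apply mul_le_mul_of_nonneg_left _ (mul_nonneg (by positivity) (hC0 n))
        exact mul_le_mul_of_nonneg_left (pow_le_one₀ hr0 hr1.le) (by positivity)
    _ = ((n : ℝ) + 2) * C n * r ^ n := by ring

lemma aux_sumCk (C : ℕ → ℝ) (hC0 : ∀ n, 0 ≤ C n)
    (hs : ∀ r : ℝ, 0 ≤ r → r < 1 → Summable (fun n : ℕ => C n * r ^ (n + 2)))
    {r : ℝ} (hr0 : 0 ≤ r) (hr1 : r < 1) (k : ℕ) :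
    Summable (fun n : ℕ => C n * r ^ (n + k)) := by
  apply Summable.of_nonneg_of_le
    (fun n : ℕ => mul_nonneg (hC0 n) (pow_nonneg hr0 _))
    (fun n : ℕ => ?_) (aux_sumNCk C hC0 hs hr0 hr1 k)
  have h2 : (1 : ℝ) ≤ (n : ℝ) + 2 := by
    have := Nat.cast_nonneg (α := ℝ) n
    linarith
  nlinarith [mul_nonneg (hC0 n) (pow_nonneg hr0 (n + k)), pow_nonneg hr0 (n+k), hC0 n]


/-- Termwise differentiation of the series on the unit disk. -/
lemma aux_deriv (C : ℕ → ℝ) (hC0 : ∀ n, 0 ≤ C n) (f : ℂ → ℂ)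
    (hs : ∀ r : ℝ, 0 ≤ r → r < 1 → Summable (fun n : ℕ => C n * r ^ (n + 2)))
    (hf : ∀ z ∈ Metric.ball (0 : ℂ) 1,
      f z = z - ∑' n : ℕ, (C n : ℂ) * z ^ (n + 2))
    {z : ℂ} (hz : ‖z‖ < 1) :
    HasDerivAt f (1 - ∑' n : ℕ, ((n : ℂ) + 2) * (C n : ℂ) * z ^ (n + 1)) z := by
  set ρ : ℝ := (‖z‖ + 1) / 2 with hρdef
  have hz0 : 0 ≤ ‖z‖ := norm_nonneg z
  have hzρ : ‖z‖ < ρ := by simp only [hρdef]; linarith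
  have hρ1 : ρ < 1 := by simp only [hρdef]; linarith
  have hρ0 : 0 < ρ := by simp only [hρdef]; linarith
  -- the summable bound on derivatives
  have hu : Summable (fun n : ℕ => ((n : ℝ) + 2) * C n * ρ ^ (n + 1)) :=
    aux_sumNCk C hC0 hs hρ0.le hρ1 1
  have key : HasDerivAt (fun w : ℂ => ∑' n : ℕ, (C n : ℂ) * w ^ (n + 2))
      (∑' n : ℕ, (C n : ℂ) * (((n : ℂ) + 2) * z ^ (n + 1))) z := by
    apply hasDerivAt_tsum_of_isPreconnected hu isOpen_ball
      (convex_ball (0 : ℂ) ρ).isPreconnected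
      (g := fun n w => (C n : ℂ) * w ^ (n + 2))
      (g' := fun n w => (C n : ℂ) * (((n : ℂ) + 2) * w ^ (n + 1)))
      (y₀ := 0)
    · intro n y _
      have := (hasDerivAt_pow (n + 2) y).const_mul (C n : ℂ)
      simpa [mul_comm, mul_assoc, mul_left_comm] using this
    · intro n y hy
      rw [mem_ball, dist_zero_right] at hy
      have h1 : ‖(C n : ℂ) * (((n : ℂ) + 2) * y ^ (n + 1))‖
          = C n * (((n : ℝ) + 2) * ‖y‖ ^ (n + 1)) := by
        have h2 : (C n : ℂ) * (((n : ℂ) + 2) * y ^ (n + 1))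
            = (((C n * ((n : ℝ) + 2) : ℝ)) : ℂ) * y ^ (n + 1) := by
          push_cast; ring
        rw [h2, norm_mul, norm_pow, Complex.norm_real, Real.norm_eq_abs,
          abs_of_nonneg (mul_nonneg (hC0 n) (by positivity))]
        ring
      rw [h1]
      calc C n * (((n : ℝ) + 2) * ‖y‖ ^ (n + 1))
          ≤ C n * (((n : ℝ) + 2) * ρ ^ (n + 1)) := by
            apply mul_le_mul_of_nonneg_left _ (hC0 n)
            exact mul_le_mul_of_nonneg_left
              (pow_le_pow_left₀ (norm_nonneg y) hy.le _) (by positivity)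
        _ = ((n : ℝ) + 2) * C n * ρ ^ (n + 1) := by ring
    · rw [mem_ball, dist_zero_right]; simpa using hρ0
    · apply summable_of_ne_finset_zero (s := ∅)
      intro n _
      simp
    · rw [mem_ball, dist_zero_right]; exact hzρ
  have heq : f =ᶠ[nhds z] fun w => w - ∑' n : ℕ, (C n : ℂ) * w ^ (n + 2) := by
    filter_upwards [Metric.ball_mem_nhds z (by linarith : (0:ℝ) < 1 - ‖z‖)] with w hw
    apply hf
    rw [mem_ball, dist_zero_right]
    rw [mem_ball] at hw
    calc ‖w‖ = dist w 0 := by rw [dist_zero_right]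
      _ ≤ dist w z + dist z 0 := dist_triangle w z 0
      _ < (1 - ‖z‖) + ‖z‖ := by
          rw [dist_zero_right]; linarith
      _ = 1 := by ring
  have hmain : HasDerivAt (fun w : ℂ => w - ∑' n : ℕ, (C n : ℂ) * w ^ (n + 2))
      (1 - ∑' n : ℕ, ((n : ℂ) + 2) * (C n : ℂ) * z ^ (n + 1)) z := by
    have := (hasDerivAt_id z).sub key
    refine this.congr_deriv ?_
    exact congrArg (fun s => (1:ℂ) - s) (tsum_congr fun n => by ring)
  exact hmain.congr_of_eventuallyEq heq


lemma aux_norm_cast_mul_pow (c : ℝ) (hc : 0 ≤ c) (z : ℂ) (k : ℕ) :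
    ‖(c : ℂ) * z ^ k‖ = c * ‖z‖ ^ k := by
  rw [norm_mul, norm_pow, Complex.norm_real, Real.norm_eq_abs, abs_of_nonneg hc]

/-- For `f(z) = z - ∑_{n≥2} |a_n| zⁿ` with the series convergent on the unit disk and
`f(z)/z ≠ 0` there, the following are equivalent:
(i) `f ∈ U`, i.e. `|f'(z)(z/f(z))² - 1| < 1` for `z ∈ D, z ≠ 0`;
(ii) `∑_{n≥2} n |a_n| ≤ 1`;
(iii) `f ∈ R₁`, i.e. `|f'(z) - 1| < 1` on `D`. -/
theorem stmt3 (a : ℕ → ℂ)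
    (f : ℂ → ℂ)
    (hconv : ∀ z ∈ Metric.ball (0 : ℂ) 1,
      Summable (fun n : ℕ => (‖a (n + 2)‖ : ℂ) * z ^ (n + 2)))
    (hf : ∀ z ∈ Metric.ball (0 : ℂ) 1,
      f z = z - ∑' n : ℕ, (‖a (n + 2)‖ : ℂ) * z ^ (n + 2))
    (hne : ∀ z ∈ Metric.ball (0 : ℂ) 1, z ≠ 0 → f z ≠ 0) :
    ((∀ z ∈ Metric.ball (0 : ℂ) 1, z ≠ 0 →
        ‖deriv f z * (z / f z) ^ 2 - 1‖ < 1) ↔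
      (Summable (fun n : ℕ => ((n + 2 : ℕ) : ℝ) * ‖a (n + 2)‖) ∧
        ∑' n : ℕ, ((n + 2 : ℕ) : ℝ) * ‖a (n + 2)‖ ≤ 1)) ∧
    ((Summable (fun n : ℕ => ((n + 2 : ℕ) : ℝ) * ‖a (n + 2)‖) ∧
        ∑' n : ℕ, ((n + 2 : ℕ) : ℝ) * ‖a (n + 2)‖ ≤ 1) ↔
      (∀ z ∈ Metric.ball (0 : ℂ) 1, ‖deriv f z - 1‖ < 1)) := by
  have hC0 : ∀ n : ℕ, 0 ≤ ‖a (n + 2)‖ := fun n => norm_nonneg _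
  set C : ℕ → ℝ := fun n => ‖a (n + 2)‖ with hCdef
  -- real summability hypothesis
  have hs : ∀ r : ℝ, 0 ≤ r → r < 1 → Summable (fun n : ℕ => C n * r ^ (n + 2)) := by
    intro r hr0 hr1
    have hmem : (r : ℂ) ∈ Metric.ball (0 : ℂ) 1 := by
      rw [mem_ball, dist_zero_right, Complex.norm_real, Real.norm_eq_abs,
        abs_of_nonneg hr0]
      exact hr1
    have h1 := hconv (r : ℂ) hmem
    rw [← Complex.summable_ofReal (f := fun n : ℕ => C n * r ^ (n + 2))]
    have he : (fun n : ℕ => ((C n * r ^ (n + 2) : ℝ) : ℂ))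
        = fun n : ℕ => (C n : ℂ) * (r : ℂ) ^ (n + 2) := by
      funext n; push_cast; ring
    rw [he]
    exact h1
  -- conversion between cast forms
  have hBconv : (fun n : ℕ => ((n + 2 : ℕ) : ℝ) * ‖a (n + 2)‖)
      = fun n : ℕ => ((n : ℝ) + 2) * C n := by
    funext n; push_cast [hCdef]; ring
  -- derivative formula
  have hderiv : ∀ z ∈ Metric.ball (0 : ℂ) 1,
      deriv f z = 1 - ∑' n : ℕ, ((n : ℂ) + 2) * (C n : ℂ) * z ^ (n + 1) := by
    intro z hz
    rw [mem_ball, dist_zero_right] at hz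
    exact (aux_deriv C hC0 f hs hf hz).deriv
  -- norm of terms of the derivative series
  have hnormterm : ∀ (n : ℕ) (z : ℂ),
      ‖((n : ℂ) + 2) * (C n : ℂ) * z ^ (n + 1)‖ = ((n : ℝ) + 2) * C n * ‖z‖ ^ (n + 1) := by
    intro n z
    have h2 : ((n : ℂ) + 2) * (C n : ℂ) * z ^ (n + 1)
        = ((((n : ℝ) + 2) * C n : ℝ) : ℂ) * z ^ (n + 1) := by push_cast; ring
    rw [h2, aux_norm_cast_mul_pow _ (mul_nonneg (by positivity) (hC0 n))]
  -- (ii) implies (iii)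
  have fwdR : (Summable (fun n : ℕ => ((n + 2 : ℕ) : ℝ) * ‖a (n + 2)‖) ∧
        ∑' n : ℕ, ((n + 2 : ℕ) : ℝ) * ‖a (n + 2)‖ ≤ 1) →
      ∀ z ∈ Metric.ball (0 : ℂ) 1, ‖deriv f z - 1‖ < 1 := by
    rintro ⟨hB, hB1⟩ z hz
    have hB' : Summable (fun n : ℕ => ((n : ℝ) + 2) * C n) := by rwa [hBconv] at hB
    have hB1' : ∑' n : ℕ, ((n : ℝ) + 2) * C n ≤ 1 := by rwa [hBconv] at hB1
    have hz' : ‖z‖ < 1 := by rwa [mem_ball, dist_zero_right] at hz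
    rw [hderiv z hz]
    have he : (1 : ℂ) - (∑' n : ℕ, ((n : ℂ) + 2) * (C n : ℂ) * z ^ (n + 1)) - 1
        = -(∑' n : ℕ, ((n : ℂ) + 2) * (C n : ℂ) * z ^ (n + 1)) := by ring
    rw [he, norm_neg]
    have hsum1 : Summable (fun n : ℕ => ((n : ℝ) + 2) * C n * ‖z‖ ^ (n + 1)) :=
      aux_sumNCk C hC0 hs (norm_nonneg z) hz' 1
    calc ‖∑' n : ℕ, ((n : ℂ) + 2) * (C n : ℂ) * z ^ (n + 1)‖
        ≤ ∑' n : ℕ, ‖((n : ℂ) + 2) * (C n : ℂ) * z ^ (n + 1)‖ := by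
          apply norm_tsum_le_tsum_norm
          apply Summable.congr hsum1
          intro n; rw [hnormterm]
      _ = ∑' n : ℕ, ((n : ℝ) + 2) * C n * ‖z‖ ^ (n + 1) :=
          tsum_congr fun n => hnormterm n z
      _ ≤ ∑' n : ℕ, ((n : ℝ) + 2) * C n * ‖z‖ := by
          apply Summable.tsum_le_tsum _ hsum1 (hB'.mul_right ‖z‖)
          intro n
          apply mul_le_mul_of_nonneg_left _ (mul_nonneg (by positivity) (hC0 n))
          have h3 : ‖z‖ ^ (n + 1) ≤ ‖z‖ ^ 1 :=
            pow_le_pow_of_le_one (norm_nonneg z) hz'.le (by omega)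
          simpa using h3
      _ = (∑' n : ℕ, ((n : ℝ) + 2) * C n) * ‖z‖ := tsum_mul_right
      _ ≤ 1 * ‖z‖ := mul_le_mul_of_nonneg_right hB1' (norm_nonneg z)
      _ = ‖z‖ := one_mul _
      _ < 1 := hz'
  -- (ii) implies (i)
  have fwdU : (Summable (fun n : ℕ => ((n + 2 : ℕ) : ℝ) * ‖a (n + 2)‖) ∧
        ∑' n : ℕ, ((n + 2 : ℕ) : ℝ) * ‖a (n + 2)‖ ≤ 1) →
      ∀ z ∈ Metric.ball (0 : ℂ) 1, z ≠ 0 →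
        ‖deriv f z * (z / f z) ^ 2 - 1‖ < 1 := by
    rintro ⟨hB, hB1⟩ z hz hz0
    have hB' : Summable (fun n : ℕ => ((n : ℝ) + 2) * C n) := by rwa [hBconv] at hB
    have hB1' : ∑' n : ℕ, ((n : ℝ) + 2) * C n ≤ 1 := by rwa [hBconv] at hB1
    have hz' : ‖z‖ < 1 := by rwa [mem_ball, dist_zero_right] at hz
    set r : ℝ := ‖z‖ with hrdef
    have hr0 : 0 < r := norm_pos_iff.mpr hz0
    set s : ℂ := ∑' n : ℕ, (C n : ℂ) * z ^ (n + 2) with hsdef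
    set Bz : ℂ := ∑' n : ℕ, ((n : ℂ) + 2) * (C n : ℂ) * z ^ (n + 1) with hBzdef
    set t : ℝ := ∑' n : ℕ, C n * r ^ (n + 2) with htdef
    -- summability facts
    have hsum_t : Summable (fun n : ℕ => C n * r ^ (n + 2)) := hs r hr0.le hz'
    have hsum3 : Summable (fun n : ℕ => ((n : ℝ) + 2) * C n * r ^ (n + 3)) :=
      aux_sumNCk C hC0 hs hr0.le hz' 3
    have hsum_t3 : Summable (fun n : ℕ => C n * r ^ (n + 3)) :=
      aux_sumCk C hC0 hs hr0.le hz' 3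
    have hsumn3 : Summable (fun n : ℕ => (n : ℝ) * C n * r ^ (n + 3)) := by
      apply Summable.of_nonneg_of_le
        (fun n => mul_nonneg (mul_nonneg (by positivity) (hC0 n)) (by positivity))
        (fun n => ?_) hsum3
      apply mul_le_mul_of_nonneg_right _ (by positivity)
      apply mul_le_mul_of_nonneg_right _ (hC0 n)
      linarith [Nat.cast_nonneg (α := ℝ) n]
    -- complex summabilities
    have hcsum_s : Summable (fun n : ℕ => (C n : ℂ) * z ^ (n + 2)) := hconv z hz
    have hcsum_s3 : Summable (fun n : ℕ => (C n : ℂ) * z ^ (n + 3)) := by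
      apply Summable.of_norm
      apply Summable.congr hsum_t3
      intro n; rw [aux_norm_cast_mul_pow _ (hC0 n)]
    have hcsum_n3 : Summable (fun n : ℕ => ((n : ℂ) + 2) * (C n : ℂ) * z ^ (n + 3)) := by
      apply Summable.of_norm
      apply Summable.congr hsum3
      intro n
      have h2 : ((n : ℂ) + 2) * (C n : ℂ) * z ^ (n + 3)
          = ((((n : ℝ) + 2) * C n : ℝ) : ℂ) * z ^ (n + 3) := by push_cast; ring
      rw [h2, aux_norm_cast_mul_pow _ (mul_nonneg (by positivity) (hC0 n))]
    have hcsum_nn3 : Summable (fun n : ℕ => (n : ℂ) * (C n : ℂ) * z ^ (n + 3)) := by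
      apply Summable.of_norm
      apply Summable.congr hsumn3
      intro n
      have h2 : (n : ℂ) * (C n : ℂ) * z ^ (n + 3)
          = (((n : ℝ) * C n : ℝ) : ℂ) * z ^ (n + 3) := by push_cast; ring
      rw [h2, aux_norm_cast_mul_pow _ (mul_nonneg (by positivity) (hC0 n))]
    -- the key algebraic identity
    have e1 : z ^ 2 * Bz = ∑' n : ℕ, ((n : ℂ) + 2) * (C n : ℂ) * z ^ (n + 3) := by
      rw [hBzdef, ← tsum_mul_left]
      exact tsum_congr fun n => by ring
    have e2 : z * s = ∑' n : ℕ, (C n : ℂ) * z ^ (n + 3) := by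
      rw [hsdef, ← tsum_mul_left]
      exact tsum_congr fun n => by ring
    have e3 : 2 * (z * s) - z ^ 2 * Bz
        = -(∑' n : ℕ, (n : ℂ) * (C n : ℂ) * z ^ (n + 3)) := by
      rw [e1, e2, ← tsum_neg, ← tsum_mul_left, ← Summable.tsum_sub (hcsum_s3.mul_left 2) hcsum_n3]
      exact tsum_congr fun n => by ring
    have hfz : f z = z - s := hf z hz
    have hKI : z ^ 2 * deriv f z - (f z) ^ 2
        = -(∑' n : ℕ, (n : ℂ) * (C n : ℂ) * z ^ (n + 3)) - s ^ 2 := by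
      rw [hderiv z hz, hfz]
      rw [hBzdef] at e3
      linear_combination e3
    -- real estimates
    have hnorm_s : ‖s‖ ≤ t := by
      rw [hsdef, htdef]
      calc ‖∑' n : ℕ, (C n : ℂ) * z ^ (n + 2)‖
          ≤ ∑' n : ℕ, ‖(C n : ℂ) * z ^ (n + 2)‖ := by
            apply norm_tsum_le_tsum_norm
            apply Summable.congr hsum_t
            intro n; rw [aux_norm_cast_mul_pow _ (hC0 n)]
        _ = ∑' n : ℕ, C n * r ^ (n + 2) :=
            tsum_congr fun n => aux_norm_cast_mul_pow _ (hC0 n) z _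
    have hnorm_W : ‖∑' n : ℕ, (n : ℂ) * (C n : ℂ) * z ^ (n + 3)‖
        ≤ ∑' n : ℕ, (n : ℝ) * C n * r ^ (n + 3) := by
      calc ‖∑' n : ℕ, (n : ℂ) * (C n : ℂ) * z ^ (n + 3)‖
          ≤ ∑' n : ℕ, ‖(n : ℂ) * (C n : ℂ) * z ^ (n + 3)‖ := by
            apply norm_tsum_le_tsum_norm
            apply Summable.congr hsumn3
            intro n
            have h2 : (n : ℂ) * (C n : ℂ) * z ^ (n + 3)
                = (((n : ℝ) * C n : ℝ) : ℂ) * z ^ (n + 3) := by push_cast; ring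
            rw [h2, aux_norm_cast_mul_pow _ (mul_nonneg (by positivity) (hC0 n))]
        _ = ∑' n : ℕ, (n : ℝ) * C n * r ^ (n + 3) := by
            apply tsum_congr
            intro n
            have h2 : (n : ℂ) * (C n : ℂ) * z ^ (n + 3)
                = (((n : ℝ) * C n : ℝ) : ℂ) * z ^ (n + 3) := by push_cast; ring
            rw [h2, aux_norm_cast_mul_pow _ (mul_nonneg (by positivity) (hC0 n))]
    -- sum identity: q + 2rt = Q3
    have hQ : (∑' n : ℕ, (n : ℝ) * C n * r ^ (n + 3)) + 2 * r * t
        = ∑' n : ℕ, ((n : ℝ) + 2) * C n * r ^ (n + 3) := by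
      have h2rt : 2 * r * t = ∑' n : ℕ, 2 * C n * r ^ (n + 3) := by
        rw [htdef, ← tsum_mul_left]
        exact tsum_congr fun n => by ring
      rw [h2rt, ← Summable.tsum_add hsumn3 ((hsum_t3.mul_left 2).congr (fun n => by ring))]
      exact tsum_congr fun n => by ring
    have hQ3 : (∑' n : ℕ, ((n : ℝ) + 2) * C n * r ^ (n + 3)) ≤ r ^ 3 := by
      calc (∑' n : ℕ, ((n : ℝ) + 2) * C n * r ^ (n + 3))
          ≤ ∑' n : ℕ, ((n : ℝ) + 2) * C n * r ^ 3 := by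
            apply Summable.tsum_le_tsum _ hsum3 (hB'.mul_right (r ^ 3))
            intro n
            apply mul_le_mul_of_nonneg_left _ (mul_nonneg (by positivity) (hC0 n))
            exact pow_le_pow_of_le_one hr0.le hz'.le (by omega)
        _ = (∑' n : ℕ, ((n : ℝ) + 2) * C n) * r ^ 3 := tsum_mul_right
        _ ≤ 1 * r ^ 3 := mul_le_mul_of_nonneg_right hB1' (by positivity)
        _ = r ^ 3 := one_mul _
    -- t ≤ r^2
    have hCs : Summable C := by
      apply Summable.of_nonneg_of_le hC0 (fun n => ?_) hB'
      nlinarith [hC0 n, Nat.cast_nonneg (α := ℝ) n]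
    have ht : t ≤ r ^ 2 := by
      rw [htdef]
      calc (∑' n : ℕ, C n * r ^ (n + 2))
          ≤ ∑' n : ℕ, C n * r ^ 2 := by
            apply Summable.tsum_le_tsum _ hsum_t (hCs.mul_right (r ^ 2))
            intro n
            exact mul_le_mul_of_nonneg_left
              (pow_le_pow_of_le_one hr0.le hz'.le (by omega)) (hC0 n)
        _ = (∑' n : ℕ, C n) * r ^ 2 := tsum_mul_right
        _ ≤ 1 * r ^ 2 := by
            apply mul_le_mul_of_nonneg_right _ (by positivity)
            calc (∑' n : ℕ, C n) ≤ ∑' n : ℕ, ((n : ℝ) + 2) * C n := by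
                  apply Summable.tsum_le_tsum _ hCs hB'
                  intro n
                  nlinarith [hC0 n, Nat.cast_nonneg (α := ℝ) n]
              _ ≤ 1 := hB1'
        _ = r ^ 2 := one_mul _
    have ht0 : 0 ≤ t := tsum_nonneg fun n => mul_nonneg (hC0 n) (by positivity)
    have hq0 : 0 ≤ ∑' n : ℕ, (n : ℝ) * C n * r ^ (n + 3) :=
      tsum_nonneg fun n => mul_nonneg (mul_nonneg (by positivity) (hC0 n)) (by positivity)
    -- f z lower bound
    have hfz_ge : r - t ≤ ‖f z‖ := by
      rw [hfz]
      calc r - t = ‖z‖ - t := by rw [hrdef]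
        _ ≤ ‖z‖ - ‖s‖ := by linarith
        _ ≤ ‖z - s‖ := norm_sub_norm_le z s
    have hrt0 : 0 ≤ r - t := by nlinarith
    -- key inequality
    have key : ‖z ^ 2 * deriv f z - (f z) ^ 2‖ < ‖f z‖ ^ 2 := by
      have hub : ‖z ^ 2 * deriv f z - (f z) ^ 2‖
          ≤ (∑' n : ℕ, (n : ℝ) * C n * r ^ (n + 3)) + t ^ 2 := by
        rw [hKI]
        calc ‖-(∑' n : ℕ, (n : ℂ) * (C n : ℂ) * z ^ (n + 3)) - s ^ 2‖
            ≤ ‖-(∑' n : ℕ, (n : ℂ) * (C n : ℂ) * z ^ (n + 3))‖ + ‖s ^ 2‖ :=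
              norm_sub_le _ _
          _ = ‖∑' n : ℕ, (n : ℂ) * (C n : ℂ) * z ^ (n + 3)‖ + ‖s‖ ^ 2 := by
              rw [norm_neg, norm_pow]
          _ ≤ (∑' n : ℕ, (n : ℝ) * C n * r ^ (n + 3)) + t ^ 2 := by
              have := pow_le_pow_left₀ (norm_nonneg s) hnorm_s 2
              linarith [hnorm_W]
      have hlow : (r - t) ^ 2 ≤ ‖f z‖ ^ 2 := pow_le_pow_left₀ hrt0 hfz_ge 2
      have hstrict : (∑' n : ℕ, (n : ℝ) * C n * r ^ (n + 3)) + t ^ 2 < (r - t) ^ 2 := by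
        have hr32 : r ^ 3 < r ^ 2 := by
          nlinarith [mul_pos (mul_pos hr0 hr0) (sub_pos.mpr hz')]
        have hexp : (r - t) ^ 2 = r ^ 2 - 2 * r * t + t ^ 2 := by ring
        linarith [hQ, hQ3]
      linarith
    -- conclude
    have hfz0 : f z ≠ 0 := hne z hz hz0
    have hrw : deriv f z * (z / f z) ^ 2 - 1
        = (z ^ 2 * deriv f z - (f z) ^ 2) / (f z) ^ 2 := by
      field_simp
    rw [hrw, norm_div, norm_pow]
    rw [div_lt_one (pow_pos (norm_pos_iff.mpr hfz0) 2)]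
    exact key
  -- endgame from S r < 1
  have endgame : (∀ r : ℝ, 0 < r → r < 1 →
        (∑' n : ℕ, ((n : ℝ) + 2) * C n * r ^ (n + 1)) < 1) →
      Summable (fun n : ℕ => ((n + 2 : ℕ) : ℝ) * ‖a (n + 2)‖) ∧
        ∑' n : ℕ, ((n + 2 : ℕ) : ℝ) * ‖a (n + 2)‖ ≤ 1 := by
    intro hyp
    have hpartial : ∀ N : ℕ,
        (∑ n ∈ Finset.range N, ((n + 2 : ℕ) : ℝ) * ‖a (n + 2)‖) ≤ 1 := by
      intro N
      have hconv1 : (∑ n ∈ Finset.range N, ((n + 2 : ℕ) : ℝ) * ‖a (n + 2)‖)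
          = ∑ n ∈ Finset.range N, ((n : ℝ) + 2) * C n * (1 : ℝ) ^ (n + 1) := by
        apply Finset.sum_congr rfl
        intro n _
        push_cast [hCdef]
        ring
      rw [hconv1]
      have hcont : Filter.Tendsto
          (fun r : ℝ => ∑ n ∈ Finset.range N, ((n : ℝ) + 2) * C n * r ^ (n + 1))
          (nhdsWithin 1 (Set.Iio 1))
          (nhds (∑ n ∈ Finset.range N, ((n : ℝ) + 2) * C n * (1 : ℝ) ^ (n + 1))) := by
        apply Filter.Tendsto.mono_left _ nhdsWithin_le_nhds
        apply Continuous.tendsto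
        exact continuous_finset_sum _ fun i _ => by fun_prop
      apply le_of_tendsto hcont
      filter_upwards [Ioo_mem_nhdsLT_of_mem
        (by norm_num : (1 : ℝ) ∈ Set.Ioc (0 : ℝ) 1)] with r hr
      calc (∑ n ∈ Finset.range N, ((n : ℝ) + 2) * C n * r ^ (n + 1))
          ≤ ∑' n : ℕ, ((n : ℝ) + 2) * C n * r ^ (n + 1) := by
            apply Summable.sum_le_tsum _
              (fun n _ => mul_nonneg (mul_nonneg (by positivity) (hC0 n))
                (pow_nonneg hr.1.le _))
            exact aux_sumNCk C hC0 hs hr.1.le hr.2 1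
        _ ≤ 1 := (hyp r hr.1 hr.2).le
    have hnn : ∀ n : ℕ, 0 ≤ ((n + 2 : ℕ) : ℝ) * ‖a (n + 2)‖ :=
      fun n => mul_nonneg (by positivity) (norm_nonneg _)
    exact ⟨summable_of_sum_range_le hnn hpartial,
      Real.tsum_le_of_sum_range_le hnn hpartial⟩
  -- realization at real points
  have hreal : ∀ r : ℝ, 0 < r → r < 1 →
      deriv f (r : ℂ) = (((1 : ℝ) - ∑' n : ℕ, ((n : ℝ) + 2) * C n * r ^ (n + 1) : ℝ) : ℂ)
      ∧ f (r : ℂ) = ((r - ∑' n : ℕ, C n * r ^ (n + 2) : ℝ) : ℂ) := by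
    intro r hr0 hr1
    have hmem : (r : ℂ) ∈ Metric.ball (0 : ℂ) 1 := by
      rw [mem_ball, dist_zero_right, Complex.norm_real, Real.norm_eq_abs,
        abs_of_nonneg hr0.le]
      exact hr1
    constructor
    · rw [hderiv (r : ℂ) hmem]
      push_cast [Complex.ofReal_tsum]
      rfl
    · rw [hf (r : ℂ) hmem]
      push_cast [Complex.ofReal_tsum]
      rfl
  -- (iii) implies S r < 1
  have bwdR : (∀ z ∈ Metric.ball (0 : ℂ) 1, ‖deriv f z - 1‖ < 1) →
      ∀ r : ℝ, 0 < r → r < 1 →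
        (∑' n : ℕ, ((n : ℝ) + 2) * C n * r ^ (n + 1)) < 1 := by
    intro hiii r hr0 hr1
    have hmem : (r : ℂ) ∈ Metric.ball (0 : ℂ) 1 := by
      rw [mem_ball, dist_zero_right, Complex.norm_real, Real.norm_eq_abs,
        abs_of_nonneg hr0.le]
      exact hr1
    have h1 := hiii (r : ℂ) hmem
    rw [(hreal r hr0 hr1).1] at h1
    set Sr : ℝ := ∑' n : ℕ, ((n : ℝ) + 2) * C n * r ^ (n + 1) with hSrdef
    have h2 : ((1 - Sr : ℝ) : ℂ) - 1 = ((-Sr : ℝ) : ℂ) := by push_cast; ring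
    rw [h2, Complex.norm_real, Real.norm_eq_abs] at h1
    have hSr0 : 0 ≤ Sr := tsum_nonneg fun n =>
      mul_nonneg (mul_nonneg (by positivity) (hC0 n)) (by positivity)
    rw [abs_of_nonpos (by linarith)] at h1
    linarith
  -- (i) implies S r < 1
  have bwdU : (∀ z ∈ Metric.ball (0 : ℂ) 1, z ≠ 0 →
        ‖deriv f z * (z / f z) ^ 2 - 1‖ < 1) →
      ∀ r : ℝ, 0 < r → r < 1 →
        (∑' n : ℕ, ((n : ℝ) + 2) * C n * r ^ (n + 1)) < 1 := by
    intro hi r hr0 hr1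
    have hmem : (r : ℂ) ∈ Metric.ball (0 : ℂ) 1 := by
      rw [mem_ball, dist_zero_right, Complex.norm_real, Real.norm_eq_abs,
        abs_of_nonneg hr0.le]
      exact hr1
    have hz0 : (r : ℂ) ≠ 0 := by
      simpa using hr0.ne'
    have h1 := hi (r : ℂ) hmem hz0
    obtain ⟨hd, hfr⟩ := hreal r hr0 hr1
    set Sr : ℝ := ∑' n : ℕ, ((n : ℝ) + 2) * C n * r ^ (n + 1) with hSrdef
    set t : ℝ := ∑' n : ℕ, C n * r ^ (n + 2) with htdef
    have hfz0 : f (r : ℂ) ≠ 0 := hne (r : ℂ) hmem hz0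
    have hrt : r - t ≠ 0 := by
      intro h
      apply hfz0
      rw [hfr, h]
      simp
    have hw : deriv f (r : ℂ) * ((r : ℂ) / f (r : ℂ)) ^ 2 - 1
        = (((1 - Sr) * (r / (r - t)) ^ 2 - 1 : ℝ) : ℂ) := by
      rw [hd, hfr]
      push_cast
      ring
    rw [hw, Complex.norm_real, Real.norm_eq_abs] at h1
    rw [abs_lt] at h1
    have hq : 0 < (r / (r - t)) ^ 2 :=
      pow_two_pos_of_ne_zero (div_ne_zero hr0.ne' hrt)
    nlinarith [h1.1, hq]
  constructor
  · constructor
    · intro hi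
      exact endgame (bwdU hi)
    · exact fun h => fwdU h
  · constructor
    · exact fun h => fwdR h
    · intro hiii
      exact endgame (bwdR hiii)
end

section
/- Let 0 \le \alpha \le 1 and let f(z) = z + \sum_{n=2}^{\infty} a_n z^n be analytic on the unit disk D with |a_n| \le n for all n \ge 2. Define f_\alpha(z) = (1-\alpha) f(z) + \alpha \int_0^z (f(t)/t)\, dt. If 0 < r < 1 satisfies 2(1-r)^3 + (2\alpha - 1) r - 1 > 0, then Re f_\alpha'(z) > 0 for all |z| < r; consequently f_\alpha is univalent (injective) on the disk |z| < r. -/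
open FormalMultilinearSeries

noncomputable def stmt4B (α : ℝ) (a : ℕ → ℂ) : ℕ → ℂ
  | 0 => 0
  | 1 => 1
  | (n + 2) => ((1 - (α : ℂ)) + (α : ℂ) / ((n : ℂ) + 2)) * a (n + 2)

lemma stmt4B_norm (α : ℝ) (hα0 : 0 ≤ α) (hα1 : α ≤ 1) (a : ℕ → ℂ)
    (ha : ∀ n : ℕ, 2 ≤ n → ‖a n‖ ≤ n) (n : ℕ) :
    ‖stmt4B α a (n + 2)‖ ≤ (1 - α) * ((n : ℝ) + 2) + α := by
  have hne : ((n : ℝ) + 2) ≠ 0 := by positivity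
  have hcast : (1 - (α : ℂ)) + (α : ℂ) / ((n : ℂ) + 2)
      = (((1 - α) + α / ((n : ℝ) + 2) : ℝ) : ℂ) := by push_cast; ring
  have hnn : 0 ≤ (1 - α) + α / ((n : ℝ) + 2) := by
    have : 0 ≤ α / ((n : ℝ) + 2) := by positivity
    linarith
  have h1 : ‖stmt4B α a (n + 2)‖
      = ((1 - α) + α / ((n : ℝ) + 2)) * ‖a (n + 2)‖ := by
    show ‖((1 - (α : ℂ)) + (α : ℂ) / ((n : ℂ) + 2)) * a (n + 2)‖ = _
    rw [norm_mul, hcast, Complex.norm_real, Real.norm_eq_abs, abs_of_nonneg hnn]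
  rw [h1]
  have h2 : ‖a (n + 2)‖ ≤ ((n : ℝ) + 2) := by
    have := ha (n + 2) (by omega); push_cast at this ⊢; linarith
  have h3 : ((1 - α) + α / ((n : ℝ) + 2)) * ‖a (n + 2)‖
      ≤ ((1 - α) + α / ((n : ℝ) + 2)) * ((n : ℝ) + 2) := by
    exact mul_le_mul_of_nonneg_left h2 hnn
  have h4 : ((1 - α) + α / ((n : ℝ) + 2)) * ((n : ℝ) + 2)
      = (1 - α) * ((n : ℝ) + 2) + α := by field_simp
  linarith

lemma stmt4B_norm_le (α : ℝ) (hα0 : 0 ≤ α) (hα1 : α ≤ 1) (a : ℕ → ℂ)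
    (ha : ∀ n : ℕ, 2 ≤ n → ‖a n‖ ≤ n) (n : ℕ) :
    ‖stmt4B α a n‖ ≤ (n : ℝ) := by
  match n with
  | 0 => simp [stmt4B]
  | 1 => simp [stmt4B]
  | (n + 2) =>
    have := stmt4B_norm α hα0 hα1 a ha n
    have h5 : (1 - α) * ((n : ℝ) + 2) + α ≤ ((n : ℝ) + 2) := by nlinarith [Nat.cast_nonneg (α := ℝ) n]
    push_cast
    linarith

lemma stmt4_sum (α r : ℝ) (hα1 : α ≤ 1) (hr0 : 0 < r) (hr1 : r < 1)
    (hroot : 0 < 2 * (1 - r) ^ 3 + (2 * α - 1) * r - 1) :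
    ∃ W : ℝ, W < 1 ∧
      HasSum (fun n : ℕ => ((1 - α) * ((n : ℝ) + 1) * ((n : ℝ) + 2) + ((n : ℝ) + 2)) * r ^ (n + 1)) W := by
  have hr : ‖r‖ < 1 := by rw [Real.norm_eq_abs, abs_lt]; constructor <;> linarith
  have h2 : HasSum (fun n : ℕ => (((n + 2).choose 2 : ℝ)) * r ^ n) (1 / (1 - r) ^ 3) := by
    simpa using hasSum_choose_mul_geometric_of_norm_lt_one 2 hr
  have h1 : HasSum (fun n : ℕ => (((n + 1).choose 1 : ℝ)) * r ^ n) (1 / (1 - r) ^ 2) := by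
    simpa using hasSum_choose_mul_geometric_of_norm_lt_one 1 hr
  have h0 : HasSum (fun n : ℕ => r ^ n) (1 / (1 - r)) := by
    simpa [one_div] using hasSum_geometric_of_norm_lt_one hr
  have hden : (0:ℝ) < 1 - r := by linarith
  refine ⟨r * ((2 * (1 - α)) * (1 / (1 - r) ^ 3) + (1 / (1 - r) ^ 2 + 1 / (1 - r))), ?_, ?_⟩
  · have hW : r * ((2 * (1 - α)) * (1 / (1 - r) ^ 3) + (1 / (1 - r) ^ 2 + 1 / (1 - r)))
        = r * (2 * (1 - α) + ((1 - r) + (1 - r) ^ 2)) / (1 - r) ^ 3 := by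
      field_simp
    rw [hW, div_lt_one (by positivity)]
    nlinarith [hroot]
  · have := ((h2.mul_left (2 * (1 - α))).add (h1.add h0)).mul_left r
    convert this using 2 with n
    · rfl
    have hc2 : (((n + 2).choose 2 : ℕ) : ℝ) = ((n : ℝ) + 2) * ((n : ℝ) + 1) / 2 := by
      rw [Nat.cast_choose_two]; push_cast; ring
    have hc1 : (((n + 1).choose 1 : ℕ) : ℝ) = (n : ℝ) + 1 := by
      rw [Nat.choose_one_right]; push_cast; ring
    rw [hc2, hc1]; ring

lemma stmt4_summable (α : ℝ) (hα0 : 0 ≤ α) (hα1 : α ≤ 1) (a : ℕ → ℂ)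
    (ha : ∀ n : ℕ, 2 ≤ n → ‖a n‖ ≤ n) {y : ℂ} (hy : ‖y‖ < 1) :
    Summable (fun n : ℕ => stmt4B α a (n + 2) * y ^ (n + 2)) := by
  have hbase : Summable (fun n : ℕ => (n : ℝ) * ‖y‖ ^ n) := by
    simpa using summable_pow_mul_geometric_of_norm_lt_one 1
      (r := ‖y‖) (by rwa [Real.norm_eq_abs, abs_of_nonneg (norm_nonneg y)])
  have hmaj : Summable (fun n : ℕ => ((n : ℝ) + 2) * ‖y‖ ^ (n + 2)) := by
    have := (summable_nat_add_iff 2).2 hbase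
    convert this using 2 with n
    · rfl
    push_cast; ring
  refine Summable.of_norm_bounded hmaj fun n => ?_
  rw [norm_mul, norm_pow]
  have h1 := stmt4B_norm_le α hα0 hα1 a ha (n + 2)
  have h2 : (0:ℝ) ≤ ‖y‖ ^ (n + 2) := by positivity
  push_cast at h1
  exact mul_le_mul_of_nonneg_right h1 h2

lemma stmt4_hps (α : ℝ) (hα0 : 0 ≤ α) (hα1 : α ≤ 1) (a : ℕ → ℂ)
    (ha : ∀ n : ℕ, 2 ≤ n → ‖a n‖ ≤ n)
    (fα : ℂ → ℂ)
    (hfα : ∀ z ∈ Metric.ball (0 : ℂ) 1,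
      fα z = z + ∑' n : ℕ,
        ((1 - (α : ℂ)) + (α : ℂ) / ((n : ℂ) + 2)) * a (n + 2) * z ^ (n + 2)) :
    HasFPowerSeriesOnBall fα (ofScalars ℂ (stmt4B α a)) 0 1 := by
  constructor
  · -- radius
    refine ENNReal.le_of_forall_nnreal_lt fun q hq => ?_
    apply FormalMultilinearSeries.le_radius_of_isBigO
    have hq1 : (q : ℝ) < 1 := by exact_mod_cast hq
    have hsum : Summable (fun n : ℕ => (n : ℝ) * (q : ℝ) ^ n) := by
      simpa using summable_pow_mul_geometric_of_norm_lt_one 1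
        (r := (q : ℝ)) (by rwa [Real.norm_eq_abs, abs_of_nonneg q.coe_nonneg])
    refine (Asymptotics.isBigO_of_le _ fun n => ?_).trans (hsum.tendsto_atTop_zero.isBigO_one ℝ)
    rw [Real.norm_eq_abs, Real.norm_eq_abs]
    have h1 : ‖ofScalars ℂ (stmt4B α a) n‖ = ‖stmt4B α a n‖ := ofScalars_norm ℂ (stmt4B α a) n
    rw [h1]
    have h2 := stmt4B_norm_le α hα0 hα1 a ha n
    have h3 : (0:ℝ) ≤ (q:ℝ) ^ n := by positivity
    rw [abs_of_nonneg (by positivity), abs_of_nonneg (by positivity)]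
    exact mul_le_mul_of_nonneg_right h2 h3
  · norm_num
  · intro y hy
    have hy' : ‖y‖ < 1 := by
      rw [mem_emetric_ball_zero_iff, enorm_eq_nnnorm] at hy; exact_mod_cast hy
    have hmem : y ∈ Metric.ball (0 : ℂ) 1 := by
      simpa [Metric.mem_ball, dist_zero_right] using hy'
    simp only [FormalMultilinearSeries.ofScalars_apply_eq, smul_eq_mul, zero_add]
    rw [hfα y hmem]
    set T := ∑' n : ℕ, ((1 - (α : ℂ)) + (α : ℂ) / ((n : ℂ) + 2)) * a (n + 2) * y ^ (n + 2) with hT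
    refine (hasSum_nat_add_iff' (f := fun n => stmt4B α a n * y ^ n) 2).1 ?_
    have hsum2 : ∑ i ∈ Finset.range 2, stmt4B α a i * y ^ i = y := by
      simp [Finset.sum_range_succ, stmt4B]
    rw [hsum2, show y + T - y = T by ring]
    have hSm := (stmt4_summable α hα0 hα1 a ha hy').hasSum
    exact hSm

lemma stmt4_deriv_hasSum (α : ℝ) (a : ℕ → ℂ) (fα : ℂ → ℂ)
    (h : HasFPowerSeriesOnBall fα (ofScalars ℂ (stmt4B α a)) 0 1)
    {z : ℂ} (hz1 : ‖z‖ < 1) :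
    HasSum (fun n : ℕ => (((n : ℂ) + 1) * stmt4B α a (n + 1)) * z ^ (n + 1))
      (z * deriv fα z) := by
  have hmem : z ∈ Metric.eball (0 : ℂ) 1 := by
    rw [mem_emetric_ball_zero_iff, enorm_eq_nnnorm]; exact_mod_cast hz1
  have h1 := h.fderiv.hasSum hmem
  have h2 := (ContinuousLinearMap.apply ℂ ℂ z).hasSum h1
  simp only [ContinuousLinearMap.apply_apply] at h2
  have h3 : ∀ n : ℕ, (ofScalars ℂ (stmt4B α a)).derivSeries n (fun _ => z) z
      = (((n : ℂ) + 1) * stmt4B α a (n + 1)) * z ^ (n + 1) := by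
    intro n
    rw [FormalMultilinearSeries.derivSeries_apply_diag]
    rw [FormalMultilinearSeries.ofScalars_apply_eq]
    simp only [smul_eq_mul, nsmul_eq_mul]
    push_cast
    ring
  have h4 : fderiv ℂ fα (0 + z) z = z * deriv fα z := by
    rw [zero_add]
    calc fderiv ℂ fα z z = fderiv ℂ fα z (z • (1 : ℂ)) := by rw [smul_eq_mul, mul_one]
      _ = z • (fderiv ℂ fα z : ℂ → ℂ) 1 := (fderiv ℂ fα z).map_smul z 1
      _ = z * deriv fα z := by rw [fderiv_apply_one_eq_deriv, smul_eq_mul]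
  rw [h4] at h2
  simpa only [h3] using h2

lemma stmt4_repos (α : ℝ) (hα0 : 0 ≤ α) (hα1 : α ≤ 1) (a : ℕ → ℂ)
    (ha : ∀ n : ℕ, 2 ≤ n → ‖a n‖ ≤ n) (fα : ℂ → ℂ)
    (h : HasFPowerSeriesOnBall fα (ofScalars ℂ (stmt4B α a)) 0 1)
    (r : ℝ) (hr0 : 0 < r) (hr1 : r < 1)
    (hroot : 0 < 2 * (1 - r) ^ 3 + (2 * α - 1) * r - 1)
    {z : ℂ} (hz : z ∈ Metric.ball (0 : ℂ) r) : 0 < (deriv fα z).re := by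
  have hzr : ‖z‖ < r := by simpa [Metric.mem_ball, dist_zero_right] using hz
  have hz1 : ‖z‖ < 1 := lt_trans hzr hr1
  by_cases hz0 : z = 0
  · subst hz0
    have hd := h.hasFPowerSeriesAt.deriv
    rw [hd, FormalMultilinearSeries.ofScalars_apply_eq]
    simp [stmt4B]
  · obtain ⟨W, hW1, hWsum⟩ := stmt4_sum α r hα1 hr0 hr1 hroot
    set s := ‖z‖ with hs
    have hs0 : 0 < s := norm_pos_iff.2 hz0
    have hA := stmt4_deriv_hasSum α a fα h hz1
    have hfirst : ∑ i ∈ Finset.range 1, (((i : ℂ) + 1) * stmt4B α a (i + 1)) * z ^ (i + 1) = z := by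
      simp [stmt4B]
    have hs2 : HasSum
        (fun n : ℕ => ((((n : ℕ) + 1 : ℕ) : ℂ) + 1) * stmt4B α a ((n + 1) + 1) * z ^ ((n + 1) + 1)
          )
        (z * deriv fα z - z) := by
      have := (hasSum_nat_add_iff'
        (f := fun n => (((n : ℂ) + 1) * stmt4B α a (n + 1)) * z ^ (n + 1)) 1).2 hA
      rw [hfirst] at this
      exact this
    -- rewrite index
    have hs3 : HasSum (fun n : ℕ => (((n : ℂ) + 2) * stmt4B α a (n + 2)) * z ^ (n + 2))
        (z * deriv fα z - z) := by
      convert hs2 using 2 with n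
      push_cast
      ring_nf
    set K : ℕ → ℝ := fun n => (1 - α) * ((n : ℝ) + 1) * ((n : ℝ) + 2) + ((n : ℝ) + 2) with hK
    have hKnonneg : ∀ n : ℕ, 0 ≤ K n := by
      intro n
      have h1 : 0 ≤ (1 - α) * ((n : ℝ) + 1) := mul_nonneg (by linarith) (by positivity)
      have := mul_nonneg h1 (by positivity : (0:ℝ) ≤ (n : ℝ) + 2)
      simp only [hK]
      nlinarith [this]
    have hbound : ∀ n : ℕ,
        ‖(((n : ℂ) + 2) * stmt4B α a (n + 2)) * z ^ (n + 2)‖ ≤ K n * r ^ (n + 1) * s := by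
      intro n
      have hnormn : ‖((n : ℂ) + 2)‖ = (n : ℝ) + 2 := by
        rw [show ((n : ℂ) + 2) = (((n + 2 : ℕ) : ℝ) : ℂ) by push_cast; ring]
        rw [Complex.norm_real, Real.norm_eq_abs, abs_of_nonneg (by positivity)]
        push_cast; ring
      rw [norm_mul, norm_mul, norm_pow, hnormn, ← hs]
      have hB := stmt4B_norm α hα0 hα1 a ha n
      have hsr : s ^ (n + 1) ≤ r ^ (n + 1) := pow_le_pow_left₀ (norm_nonneg z) hzr.le _
      calc ((n : ℝ) + 2) * ‖stmt4B α a (n + 2)‖ * s ^ (n + 2)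
          ≤ ((n : ℝ) + 2) * ((1 - α) * ((n : ℝ) + 2) + α) * s ^ (n + 2) := by
            apply mul_le_mul_of_nonneg_right
              (mul_le_mul_of_nonneg_left hB (by positivity)) (by positivity)
        _ = K n * (s ^ (n + 1) * s) := by rw [pow_succ]; simp only [hK]; ring
        _ ≤ K n * (r ^ (n + 1) * s) := by
            apply mul_le_mul_of_nonneg_left
              (mul_le_mul_of_nonneg_right hsr hs0.le) (hKnonneg n)
        _ = K n * r ^ (n + 1) * s := by ring
    have hmajsum : Summable (fun n : ℕ => K n * r ^ (n + 1) * s) := by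
      exact (hWsum.summable).mul_right s
    have hnormsum : Summable (fun n : ℕ => ‖(((n : ℂ) + 2) * stmt4B α a (n + 2)) * z ^ (n + 2)‖) :=
      Summable.of_nonneg_of_le (fun n => norm_nonneg _) hbound hmajsum
    have htsum : ‖z * deriv fα z - z‖ ≤ W * s := by
      rw [← hs3.tsum_eq]
      calc ‖∑' n : ℕ, (((n : ℂ) + 2) * stmt4B α a (n + 2)) * z ^ (n + 2)‖
          ≤ ∑' n : ℕ, ‖(((n : ℂ) + 2) * stmt4B α a (n + 2)) * z ^ (n + 2)‖ :=
            norm_tsum_le_tsum_norm hnormsum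
        _ ≤ ∑' n : ℕ, K n * r ^ (n + 1) * s := Summable.tsum_le_tsum hbound hnormsum hmajsum
        _ = W * s := (hWsum.mul_right s).tsum_eq
    have hrw : ‖deriv fα z - 1‖ * s ≤ W * s := by
      have heq : ‖deriv fα z - 1‖ * s = ‖z * deriv fα z - z‖ := by
        rw [hs, ← norm_mul]
        congr 1
        ring
      rw [heq]; exact htsum
    have hlt : ‖deriv fα z - 1‖ < 1 := by
      have h5 : ‖deriv fα z - 1‖ ≤ W := le_of_mul_le_mul_right (by linarith) hs0
      linarith
    have hre : |(deriv fα z - 1).re| ≤ ‖deriv fα z - 1‖ := Complex.abs_re_le_norm _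
    have : (deriv fα z).re = (deriv fα z - 1).re + 1 := by simp [Complex.sub_re]
    rw [this]
    have := abs_le.1 hre
    linarith

lemma stmt4_inj (fα : ℂ → ℂ) (p : FormalMultilinearSeries ℂ ℂ ℂ)
    (h : HasFPowerSeriesOnBall fα p 0 1)
    (r : ℝ) (hr1 : r < 1)
    (hpos : ∀ z ∈ Metric.ball (0 : ℂ) r, 0 < (deriv fα z).re) :
    Set.InjOn fα (Metric.ball (0 : ℂ) r) := by
  have hdiff : ∀ u ∈ Metric.ball (0 : ℂ) r, DifferentiableAt ℂ fα u := by
    intro u hu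
    have hur : ‖u‖ < r := by simpa [Metric.mem_ball, dist_zero_right] using hu
    have : u ∈ Metric.eball (0 : ℂ) 1 := by
      rw [mem_emetric_ball_zero_iff, enorm_eq_nnnorm]; exact_mod_cast lt_trans hur hr1
    exact (h.analyticOnNhd u this).differentiableAt
  intro x hx y hy hxy
  by_contra hne
  set d := y - x with hd
  have hd0 : d ≠ 0 := sub_ne_zero.2 (Ne.symm hne)
  have hmem : ∀ t ∈ Set.Icc (0:ℝ) 1, x + d * (t : ℂ) ∈ Metric.ball (0 : ℂ) r := by
    intro t ht
    have hcvx := (convex_ball (0:ℂ) r) hx hy (by linarith [ht.2] : (0:ℝ) ≤ 1 - t) ht.1 (by ring)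
    have he : x + d * (t : ℂ) = (1 - t) • x + t • y := by
      simp only [Complex.real_smul]
      push_cast
      rw [hd]
      ring
    rw [he]; exact hcvx
  set φ : ℝ → ℝ := fun t => (d⁻¹ * fα (x + d * (t : ℂ))).re with hφ
  have hder : ∀ t ∈ Set.Icc (0:ℝ) 1, HasDerivAt φ ((deriv fα (x + d * (t : ℂ))).re) t := by
    intro t ht
    have h1 : HasDerivAt (fun t : ℝ => (t : ℂ)) 1 t := by
      simpa using (hasDerivAt_id t).ofReal_comp
    have h2 : HasDerivAt (fun t : ℝ => x + d * (t : ℂ)) d t := by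
      simpa using (h1.const_mul d).const_add x
    have h3 : HasDerivAt fα (deriv fα (x + d * (t : ℂ))) (x + d * (t : ℂ)) :=
      (hdiff _ (hmem t ht)).hasDerivAt
    have h4 := HasDerivAt.scomp t h3 h2
    have h5 := h4.const_mul d⁻¹
    have h6 : d⁻¹ * (d • deriv fα (x + d * (t : ℂ))) = deriv fα (x + d * (t : ℂ)) := by
      rw [smul_eq_mul, ← mul_assoc, inv_mul_cancel₀ hd0, one_mul]
    rw [h6] at h5
    have h7 := Complex.reCLM.hasFDerivAt.comp_hasDerivAt t h5
    exact h7
  have hcont : ContinuousOn φ (Set.Icc 0 1) :=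
    fun t ht => (hder t ht).continuousAt.continuousWithinAt
  have hmono : StrictMonoOn φ (Set.Icc (0:ℝ) 1) := by
    apply strictMonoOn_of_deriv_pos (convex_Icc 0 1) hcont
    intro t ht
    rw [interior_Icc] at ht
    rw [(hder t (Set.mem_Icc_of_Ioo ht)).deriv]
    exact hpos _ (hmem t (Set.mem_Icc_of_Ioo ht))
  have h01 : φ 0 < φ 1 :=
    hmono (Set.left_mem_Icc.2 zero_le_one) (Set.right_mem_Icc.2 zero_le_one) zero_lt_one
  have e0 : x + d * (((0:ℝ)) : ℂ) = x := by norm_num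
  have e1 : x + d * (((1:ℝ)) : ℂ) = y := by push_cast; rw [hd]; ring
  have heq : φ 0 = φ 1 := by
    simp only [hφ, e0, e1, hxy]
  linarith

/-- Let `0 ≤ α ≤ 1` and `f(z) = z + ∑_{n≥2} a_n zⁿ` with `|a_n| ≤ n`.
For `f_α(z) = (1-α) f(z) + α ∫₀ᶻ (f(t)/t) dt = z + ∑_{n≥2} ((1-α) + α/n) a_n zⁿ`,
if `0 < r < 1` satisfies `2(1-r)³ + (2α-1)r - 1 > 0`, then `Re f_α'(z) > 0` for
`|z| < r`, and consequently `f_α` is injective on `|z| < r`. -/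
theorem stmt4 (α : ℝ) (hα0 : 0 ≤ α) (hα1 : α ≤ 1)
    (a : ℕ → ℂ) (ha : ∀ n : ℕ, 2 ≤ n → ‖a n‖ ≤ n)
    (fα : ℂ → ℂ)
    (hfα : ∀ z ∈ Metric.ball (0 : ℂ) 1,
      fα z = z + ∑' n : ℕ,
        ((1 - (α : ℂ)) + (α : ℂ) / ((n : ℂ) + 2)) * a (n + 2) * z ^ (n + 2))
    (r : ℝ) (hr0 : 0 < r) (hr1 : r < 1)
    (hroot : 0 < 2 * (1 - r) ^ 3 + (2 * α - 1) * r - 1) :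
    (∀ z ∈ Metric.ball (0 : ℂ) r, 0 < (deriv fα z).re) ∧
      Set.InjOn fα (Metric.ball (0 : ℂ) r) := by
  have h := stmt4_hps α hα0 hα1 a ha fα hfα
  refine ⟨fun z hz => stmt4_repos α hα0 hα1 a ha fα h r hr0 hr1 hroot hz, ?_⟩
  exact stmt4_inj fα _ h r hr1
    (fun z hz => stmt4_repos α hα0 hα1 a ha fα h r hr0 hr1 hroot hz)
end

section
/- Let 0 \le \alpha \le 1 and let g(z) = 2z - \alpha z/(1-z) - (1-\alpha) z/(1-z)^2 for z in the unit disk D. Then g'(z) = (2(1-z)^3 - 1 + (2\alpha - 1)z)/(1-z)^3; in particular, if r_0 \in (0,1) is a root of the equation 2(1-r)^3 + (2\alpha - 1) r - 1 = 0, then g'(r_0) = 0, so g is not univalent on any disk |z| < r with r > r_0. Moreover g(z) = z - \sum_{n=2}^{\infty} ((1-\alpha)n + \alpha) z^n has Taylor coefficients of modulus (1-\alpha)n + \alpha \le n. -/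
private lemma stmt5_deriv (α : ℝ) (z : ℂ) (hz : ‖z‖ < 1) :
    HasDerivAt (fun w : ℂ => 2 * w - (α : ℂ) * w / (1 - w) - (1 - (α : ℂ)) * w / (1 - w) ^ 2)
      ((2 * (1 - z) ^ 3 - 1 + (2 * (α : ℂ) - 1) * z) / (1 - z) ^ 3) z := by
  have h1 : (1 : ℂ) - z ≠ 0 := by
    intro h
    rw [sub_eq_zero] at h
    rw [← h] at hz
    simp at hz
  have h2 : (1 - z) ^ 2 ≠ 0 := pow_ne_zero _ h1
  have hid : HasDerivAt (fun w : ℂ => w) 1 z := hasDerivAt_id z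
  have hden : HasDerivAt (fun w : ℂ => 1 - w) (-1) z := by exact hid.const_sub 1
  have hden2 : HasDerivAt (fun w : ℂ => (1 - w) ^ 2) (2 * (1 - z) ^ 1 * (-1)) z := hden.pow 2
  have hnum1 : HasDerivAt (fun w : ℂ => (α : ℂ) * w) (α : ℂ) z := by
    simpa using hid.const_mul (α : ℂ)
  have hnum2 : HasDerivAt (fun w : ℂ => (1 - (α : ℂ)) * w) (1 - (α : ℂ)) z := by
    simpa using hid.const_mul (1 - (α : ℂ))
  have hd1 : HasDerivAt (fun w : ℂ => (α : ℂ) * w / (1 - w))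
      (((α : ℂ) * (1 - z) - (α : ℂ) * z * (-1)) / (1 - z) ^ 2) z := hnum1.div hden h1
  have hd2 : HasDerivAt (fun w : ℂ => (1 - (α : ℂ)) * w / (1 - w) ^ 2)
      (((1 - (α : ℂ)) * (1 - z) ^ 2 - (1 - (α : ℂ)) * z * (2 * (1 - z) ^ 1 * (-1))) / ((1 - z) ^ 2) ^ 2) z :=
    hnum2.div hden2 h2
  have hd0 : HasDerivAt (fun w : ℂ => 2 * w) 2 z := by simpa using hid.const_mul (2 : ℂ)
  have : HasDerivAt (fun w : ℂ => 2 * w - (α : ℂ) * w / (1 - w) - (1 - (α : ℂ)) * w / (1 - w) ^ 2)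
      (2 - (((α : ℂ) * (1 - z) - (α : ℂ) * z * (-1)) / (1 - z) ^ 2)
        - (((1 - (α : ℂ)) * (1 - z) ^ 2 - (1 - (α : ℂ)) * z * (2 * (1 - z) ^ 1 * (-1))) / ((1 - z) ^ 2) ^ 2)) z :=
    (hd0.sub hd1).sub hd2
  convert this using 1
  field_simp
  ring

private lemma stmt5_series (α : ℝ) (z : ℂ) (hz : ‖z‖ < 1) (h1 : (1:ℂ) - z ≠ 0) :
    2 * z - (α : ℂ) * z / (1 - z) - (1 - (α : ℂ)) * z / (1 - z) ^ 2
      = z - ∑' n : ℕ, ((((1 - α) * (n + 2) + α : ℝ)) : ℂ) * z ^ (n + 2) := by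
  set f : ℕ → ℂ := fun k => ((1 - (α:ℂ)) * k + (α:ℂ)) * z ^ k with hf
  have hs1 : Summable (fun k : ℕ => (k : ℂ) * z ^ k) := by
    have := summable_pow_mul_geometric_of_norm_lt_one 1 hz (R := ℂ)
    simpa using this
  have hs2 : Summable (fun k : ℕ => z ^ k) := summable_geometric_of_norm_lt_one hz
  have hsf : Summable f := by
    have : f = fun k : ℕ => (1 - (α:ℂ)) * ((k:ℂ) * z ^ k) + (α:ℂ) * z ^ k := by
      funext k; simp [hf]; ring
    rw [this]
    exact ((hs1.mul_left _).add (hs2.mul_left _))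
  have hT : ∑' k, f k = (1 - (α:ℂ)) * (z / (1 - z) ^ 2) + (α:ℂ) * (1 - z)⁻¹ := by
    have : ∑' k, f k = ∑' k : ℕ, ((1 - (α:ℂ)) * ((k:ℂ) * z ^ k) + (α:ℂ) * z ^ k) := by
      apply tsum_congr; intro k; simp [hf]; ring
    rw [this, Summable.tsum_add (hs1.mul_left _) (hs2.mul_left _), tsum_mul_left, tsum_mul_left,
      tsum_geometric_of_norm_lt_one hz, tsum_coe_mul_geometric_of_norm_lt_one hz]
  have hshift := Summable.sum_add_tsum_nat_add 2 hsf
  have htail : ∑' n : ℕ, ((((1 - α) * (n + 2) + α : ℝ)) : ℂ) * z ^ (n + 2)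
      = ∑' n : ℕ, f (n + 2) := by
    apply tsum_congr; intro n; simp only [hf]; push_cast; ring
  rw [htail]
  have h2 : ∑' n : ℕ, f (n + 2) = ∑' k, f k - (Finset.range 2).sum f := by
    rw [← hshift]; ring
  rw [h2, hT]
  have h3 : (Finset.range 2).sum f = (α:ℂ) + z := by
    simp [Finset.sum_range_succ, hf]
  rw [h3]
  field_simp
  ring

set_option maxHeartbeats 1600000 in
private lemma stmt5_noninj (α : ℝ) (hα0 : 0 ≤ α) (hα1 : α ≤ 1) (g : ℂ → ℂ)
    (hg : ∀ z ∈ Metric.ball (0 : ℂ) 1,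
      g z = 2 * z - (α : ℂ) * z / (1 - z) - (1 - (α : ℂ)) * z / (1 - z) ^ 2)
    (r₀ : ℝ) (hr0 : 0 < r₀) (hr1 : r₀ < 1)
    (hroot : 2 * (1 - r₀) ^ 3 + (2 * α - 1) * r₀ - 1 = 0)
    (r : ℝ) (hr : r₀ < r) (hinj : Set.InjOn g (Metric.ball (0 : ℂ) r)) : False := by
  have hr₀s : r₀ < min r 1 := lt_min hr hr1
  have hs1 : min r 1 ≤ 1 := min_le_right r 1
  have hinj' : Set.InjOn g (Metric.ball (0:ℂ) (min r 1)) :=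
    hinj.mono (Metric.ball_subset_ball (min_le_left r 1))
  have h1r : (0:ℝ) < 1 - r₀ := by linarith
  -- quadratic coefficient functions
  set Bf : ℝ → ℝ := fun x => -4*(1-x)^2 + α*(1-x) + (1-α)*x with hBdef
  set Df : ℝ → ℝ := fun x => (Bf x)^2 - 4*(2*(1-x)^2)*(2*(1-x)^2 - α*(1-x) - (1-α)) with hDdef
  set wf : ℝ → ℝ := fun x => (-Bf x - Real.sqrt (Df x))/(2*(2*(1-x)^2)) with hwdef
  have hMpos : (0:ℝ) < (2*(1-r₀)^3 + (1-α))^2 := by nlinarith [pow_pos h1r 3]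
  have hD0 : Df r₀ = (2*(1-r₀)^3 + (1-α))^2 := by
    simp only [hDdef, hBdef]
    linear_combination ((2 * (1 - r₀) ^ 3 + (2 * α - 1) * r₀ - 1) - 2*(-(2*(1-r₀)^3 + (1-α))) - 8*(1-r₀)^3) * hroot
  have hsq0 : Real.sqrt (Df r₀) = 2*(1-r₀)^3 + (1-α) := by
    rw [hD0]
    exact Real.sqrt_sq (by nlinarith [pow_pos h1r 3])
  have hwr₀ : wf r₀ = r₀ := by
    simp only [hwdef, hsq0, hBdef]
    rw [div_eq_iff (by positivity)]
    linarith [hroot]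
  -- continuity
  have hDcont : ContinuousAt Df r₀ := by
    simp only [hDdef, hBdef]; fun_prop
  have hwcont : ContinuousAt wf r₀ := by
    simp only [hwdef, hBdef, hDdef]
    apply ContinuousAt.div
    · fun_prop
    · fun_prop
    · have : (0:ℝ) < 2*(2*(1-r₀)^2) := by nlinarith [pow_pos h1r 2]
      exact ne_of_gt this
  have hwtend : ∀ ε > 0, ∃ δ > 0, ∀ x, |x - r₀| < δ → |wf x - r₀| < ε := by
    intro ε hε
    obtain ⟨δ, hδ, h⟩ := Metric.continuousAt_iff.mp hwcont ε hε
    exact ⟨δ, hδ, fun x hx => by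
      have := h (show dist x r₀ < δ by simpa [Real.dist_eq] using hx)
      simpa [Real.dist_eq, hwr₀] using this⟩
  obtain ⟨δ₁, hδ₁, hW⟩ := hwtend ((min r 1 - r₀)/2) (by linarith)
  have hDtend : ∃ δ > 0, ∀ x, |x - r₀| < δ → 0 < Df x := by
    obtain ⟨δ, hδ, h⟩ := Metric.continuousAt_iff.mp hDcont _ hMpos
    exact ⟨δ, hδ, fun x hx => by
      have := h (show dist x r₀ < δ by simpa [Real.dist_eq] using hx)
      rw [Real.dist_eq, hD0] at this
      have := abs_lt.mp this
      linarith [this.1]⟩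
  obtain ⟨δ₂, hδ₂, hDp⟩ := hDtend
  -- choice of t
  set c : ℝ := 6*(1-r₀)^2 - (2*α - 1) with hcdef
  set tc : ℝ := if c = 0 then 1 else |c|/(6*(1-r₀)+2) with htcdef
  have htc : 0 < tc := by
    rw [htcdef]
    split
    · norm_num
    · next h => positivity
  set t : ℝ := min (min δ₁ δ₂) (min (min ((min r 1 - r₀)/2) 1) tc) / 2 with htdef
  have ht0 : 0 < t := by
    rw [htdef]
    have := lt_min (lt_min hδ₁ hδ₂)
      (lt_min (lt_min (show (0:ℝ) < (min r 1 - r₀)/2 by linarith) one_pos) htc)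
    linarith
  have htδ₁ : t < δ₁ := by
    have h1 := min_le_left δ₁ δ₂
    have h2 := min_le_left (min δ₁ δ₂) (min (min ((min r 1 - r₀)/2) 1) tc)
    rw [htdef]; linarith
  have htδ₂ : t < δ₂ := by
    have h1 := min_le_right δ₁ δ₂
    have h2 := min_le_left (min δ₁ δ₂) (min (min ((min r 1 - r₀)/2) 1) tc)
    rw [htdef]; linarith
  have hts : t < (min r 1 - r₀)/2 := by
    have h1 := min_le_left ((min r 1 - r₀)/2) 1
    have h2 := min_le_left (min ((min r 1 - r₀)/2) 1) tc
    have h3 := min_le_right (min δ₁ δ₂) (min (min ((min r 1 - r₀)/2) 1) tc)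
    rw [htdef]; linarith
  have ht1 : t ≤ 1/2 := by
    have h1 := min_le_right ((min r 1 - r₀)/2) 1
    have h2 := min_le_left (min ((min r 1 - r₀)/2) 1) tc
    have h3 := min_le_right (min δ₁ δ₂) (min (min ((min r 1 - r₀)/2) 1) tc)
    rw [htdef]; linarith
  have httc : t ≤ tc/2 := by
    have h2 := min_le_right (min ((min r 1 - r₀)/2) 1) tc
    have h3 := min_le_right (min δ₁ δ₂) (min (min ((min r 1 - r₀)/2) 1) tc)
    rw [htdef]; linarith
  have httc' : c ≠ 0 → t ≤ |c|/(6*(1-r₀)+2)/2 := by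
    intro h
    rw [htcdef, if_neg h] at httc
    linarith
  clear_value tc
  clear_value t
  set x : ℝ := r₀ + t with hxdef
  have hxr : x < min r 1 := by rw [hxdef]; linarith
  have hx1 : x < 1 := lt_of_lt_of_le hxr hs1
  have h1x : (0:ℝ) < 1 - x := by linarith
  have hDx : 0 < Df x := hDp x (by rw [hxdef, add_sub_cancel_left, abs_of_pos ht0]; exact htδ₂)
  have hwx : |wf x - r₀| < (min r 1 - r₀)/2 :=
    hW x (by rw [hxdef, add_sub_cancel_left, abs_of_pos ht0]; exact htδ₁)
  clear_value x
  -- the quadratic equation for wf x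
  have hq2 : Real.sqrt (Df x) ^ 2
      = (Bf x)^2 - 4*(2*(1-x)^2)*(2*(1-x)^2 - α*(1-x) - (1-α)) := by
    rw [Real.sq_sqrt hDx.le]
  have hA2 : (4*(2*(1-x)^2)) ≠ 0 := ne_of_gt (by nlinarith [pow_pos h1x 2])
  have hWe : wf x * (2*(2*(1-x)^2)) = -Bf x - Real.sqrt (Df x) := by
    simp only [hwdef]
    field_simp
  have hquad' : 4*(2*(1-x)^2) * (2*(1-x)^2 * (wf x)^2 + Bf x * wf x
      + (2*(1-x)^2 - α*(1-x) - (1-α))) = 0 := by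
    linear_combination (wf x*(2*(2*(1-x)^2)) + (-Bf x - Real.sqrt (Df x)) + 2*Bf x) * hWe + hq2
  have hquad : 2*(1-x)^2 * (wf x)^2 + Bf x * wf x + (2*(1-x)^2 - α*(1-x) - (1-α)) = 0 :=
    (mul_eq_zero.mp hquad').resolve_left hA2
  simp only [hBdef] at hquad
  set y : ℝ := wf x with hydef
  have hyx : |y - r₀| < (min r 1 - r₀)/2 := hwx
  clear_value y
  clear hydef hwx hq2 hWe hquad' hA2 hW hDp hwcont hDcont hwtend hDx
  -- y ≠ x
  have hne : y ≠ x := by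
    intro heq
    rw [heq] at hquad
    have hQ : t * (1 - x) * (-2*t^2 + 6*(1-r₀)*t - c) = 0 := by
      rw [hxdef] at hquad ⊢
      rw [hcdef]
      linear_combination hquad - (1 - r₀ - t) * hroot
    have hQ0 : -2*t^2 + 6*(1-r₀)*t - c = 0 := by
      rcases mul_eq_zero.mp hQ with h | h
      · rcases mul_eq_zero.mp h with h' | h'
        · exact absurd h' (ne_of_gt ht0)
        · exact absurd h' (by intro hh; linarith)
      · exact h
    rcases eq_or_ne c 0 with hc | hc
    · rw [hc] at hQ0
      nlinarith [ht0, hts, hr₀s, hs1]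
    · have hb := httc' hc
      rcases hc.lt_or_gt with h | h
      · rw [abs_of_neg h] at hb
        nlinarith
      · rw [abs_of_pos h] at hb
        nlinarith
  -- transfer to ℂ
  have hFR : 2*(1-x)^2*(1 - y)^2 - α*(1-x)*(1 - y) - (1-α)*(1 - x*y) = 0 := by
    linear_combination hquad
  have hFC : 2*(1-(x:ℂ))^2*(1 - (y:ℂ))^2 - (α:ℂ)*(1-(x:ℂ))*(1 - (y:ℂ))
      - (1-(α:ℂ))*(1 - (x:ℂ)*(y:ℂ)) = 0 := by
    exact_mod_cast congrArg (fun u : ℝ => (u : ℂ)) hFR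
  have hyr : |y| < min r 1 := by
    have : |y| ≤ |y - r₀| + |r₀| := by
      calc |y| = |(y - r₀) + r₀| := by ring_nf
      _ ≤ |y - r₀| + |r₀| := abs_add_le _ _
    rw [abs_of_pos hr0] at this
    calc |y| ≤ |y - r₀| + r₀ := by linarith
    _ < (min r 1 - r₀)/2 + r₀ := by linarith [hyx]
    _ ≤ min r 1 := by linarith
  have hxball : (x:ℂ) ∈ Metric.ball (0:ℂ) (min r 1) := by
    rw [Metric.mem_ball, dist_zero_right, Complex.norm_real, Real.norm_eq_abs,
      abs_of_pos (by linarith : (0:ℝ) < x)]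
    exact hxr
  have hyball : (y:ℂ) ∈ Metric.ball (0:ℂ) (min r 1) := by
    rw [Metric.mem_ball, dist_zero_right, Complex.norm_real, Real.norm_eq_abs]
    exact hyr
  have hsub : Metric.ball (0:ℂ) (min r 1) ⊆ Metric.ball (0:ℂ) 1 := Metric.ball_subset_ball hs1
  have hx1' : (1:ℂ) - (x:ℂ) ≠ 0 := by
    intro h
    rw [sub_eq_zero] at h
    have : (1:ℝ) = x := by exact_mod_cast h
    linarith
  have hy1' : (1:ℂ) - (y:ℂ) ≠ 0 := by
    intro h
    rw [sub_eq_zero] at h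
    have : (1:ℝ) = y := by exact_mod_cast h
    have : |y| < 1 := lt_of_lt_of_le hyr hs1
    rw [abs_lt] at this
    linarith
  have hgeq : g (x:ℂ) = g (y:ℂ) := by
    rw [hg _ (hsub hxball), hg _ (hsub hyball)]
    field_simp
    linear_combination ((x:ℂ) - (y:ℂ)) * hFC
  have : (x:ℂ) = (y:ℂ) := hinj' hxball hyball hgeq
  have : x = y := by exact_mod_cast this
  exact hne this.symm



/-- For `0 ≤ α ≤ 1` and `g(z) = 2z - αz/(1-z) - (1-α)z/(1-z)²` on the unit disk:
`g'(z) = (2(1-z)³ - 1 + (2α-1)z)/(1-z)³`; if `r₀ ∈ (0,1)` is a root of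
`2(1-r)³ + (2α-1)r - 1 = 0`, then `g'(r₀) = 0`, hence `g` is not injective on any
disk `|z| < r` with `r > r₀`. Moreover `g(z) = z - ∑_{n≥2} ((1-α)n + α) zⁿ` with
coefficient moduli `(1-α)n + α ≤ n`. -/
theorem stmt5 (α : ℝ) (hα0 : 0 ≤ α) (hα1 : α ≤ 1)
    (g : ℂ → ℂ)
    (hg : ∀ z ∈ Metric.ball (0 : ℂ) 1,
      g z = 2 * z - (α : ℂ) * z / (1 - z) - (1 - (α : ℂ)) * z / (1 - z) ^ 2)
    (r₀ : ℝ) (hr0 : 0 < r₀) (hr1 : r₀ < 1)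
    (hroot : 2 * (1 - r₀) ^ 3 + (2 * α - 1) * r₀ - 1 = 0) :
    (∀ z ∈ Metric.ball (0 : ℂ) 1,
      deriv g z = (2 * (1 - z) ^ 3 - 1 + (2 * (α : ℂ) - 1) * z) / (1 - z) ^ 3) ∧
    deriv g (r₀ : ℂ) = 0 ∧
    (∀ r : ℝ, r₀ < r → ¬ Set.InjOn g (Metric.ball (0 : ℂ) r)) ∧
    (∀ z ∈ Metric.ball (0 : ℂ) 1,
      g z = z - ∑' n : ℕ, ((((1 - α) * (n + 2) + α : ℝ)) : ℂ) * z ^ (n + 2)) ∧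
    (∀ n : ℕ, 2 ≤ n → (1 - α) * n + α ≤ n) := by
  have hone : ∀ z : ℂ, ‖z‖ < 1 → (1:ℂ) - z ≠ 0 := by
    intro z hz h
    rw [sub_eq_zero] at h
    rw [← h] at hz
    simp at hz
  have hD : ∀ z ∈ Metric.ball (0 : ℂ) 1,
      deriv g z = (2 * (1 - z) ^ 3 - 1 + (2 * (α : ℂ) - 1) * z) / (1 - z) ^ 3 := by
    intro z hz
    have hz' : ‖z‖ < 1 := mem_ball_zero_iff.mp hz
    have hev : g =ᶠ[nhds z]
        (fun w : ℂ => 2 * w - (α : ℂ) * w / (1 - w) - (1 - (α : ℂ)) * w / (1 - w) ^ 2) :=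
      Filter.eventuallyEq_of_mem (Metric.isOpen_ball.mem_nhds hz) (fun w hw => hg w hw)
    exact ((stmt5_deriv α z hz').congr_of_eventuallyEq hev).deriv
  have hr₀mem : (r₀ : ℂ) ∈ Metric.ball (0 : ℂ) 1 := by
    rw [Metric.mem_ball, dist_zero_right, Complex.norm_real, Real.norm_eq_abs, abs_of_pos hr0]
    exact hr1
  refine ⟨hD, ?_, ?_, ?_, ?_⟩
  · rw [hD _ hr₀mem]
    have h0 : 2 * (1 - (r₀:ℂ)) ^ 3 - 1 + (2 * (α:ℂ) - 1) * (r₀:ℂ) = 0 := by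
      have : ((2 * (1 - r₀) ^ 3 + (2 * α - 1) * r₀ - 1 : ℝ) : ℂ) = 0 := by
        rw [hroot]; norm_num
      push_cast at this
      linear_combination this
    rw [h0, zero_div]
  · intro r hrr hinj
    exact stmt5_noninj α hα0 hα1 g hg r₀ hr0 hr1 hroot r hrr hinj
  · intro z hz
    have hz' : ‖z‖ < 1 := mem_ball_zero_iff.mp hz
    rw [hg z hz]
    exact stmt5_series α z hz' (hone z hz')
  · intro n hn
    have h2 : (2:ℝ) ≤ (n:ℝ) := by exact_mod_cast hn
    nlinarith [mul_nonneg hα0 (by linarith : (0:ℝ) ≤ (n:ℝ) - 1)]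
end

section
/- Let f(z) = z + \sum_{n=2}^{\infty} a_n z^n be analytic on the unit disk D with |a_n| \le 1 for all n \ge 2. Then f is univalent (injective) on the disk |z| < 1 - \sqrt{2}/2; indeed Re f'(z) > 0 for |z| < 1 - \sqrt{2}/2, where r = 1 - \sqrt{2}/2 is the root in (0,1) of the equation 2(1-r)^3 + r - 1 = 0. -/
open Metric Complex

private lemma aux_summable {ρ : ℝ} (h0 : 0 ≤ ρ) (h1 : ρ < 1) :
    Summable (fun n : ℕ => ((n : ℝ) + 2) * ρ ^ (n + 1)) := by
  have h1' : ‖ρ‖ < 1 := by rwa [Real.norm_eq_abs, _root_.abs_of_nonneg h0]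
  have S1 : Summable (fun n : ℕ => (n : ℝ) * ρ ^ n) := by
    simpa using summable_pow_mul_geometric_of_norm_lt_one 1 h1'
  have S0 : Summable (fun n : ℕ => ρ ^ n) := summable_geometric_of_lt_one h0 h1
  refine ((S1.mul_left ρ).add (S0.mul_left (2 * ρ))).congr fun n => ?_
  ring

private lemma aux_tsum_lt {ρ : ℝ} (h0 : 0 ≤ ρ) (hρ : ρ < 1 - Real.sqrt 2 / 2) :
    ∑' n : ℕ, ((n : ℝ) + 2) * ρ ^ (n + 1) < 1 := by
  have hs : Real.sqrt 2 ^ 2 = 2 := Real.sq_sqrt (by norm_num)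
  have hs0 : 0 ≤ Real.sqrt 2 := Real.sqrt_nonneg 2
  have h1 : ρ < 1 := by nlinarith
  have h1' : ‖ρ‖ < 1 := by rwa [Real.norm_eq_abs, _root_.abs_of_nonneg h0]
  have h1ρ : (0 : ℝ) < 1 - ρ := by linarith
  have S1 : Summable (fun n : ℕ => ρ * ((n : ℝ) * ρ ^ n)) := by
    have : Summable (fun n : ℕ => (n : ℝ) * ρ ^ n) := by
      simpa using summable_pow_mul_geometric_of_norm_lt_one 1 h1'
    exact this.mul_left ρ
  have S0 : Summable (fun n : ℕ => (2 * ρ) * ρ ^ n) :=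
    (summable_geometric_of_lt_one h0 h1).mul_left _
  have hEq : ∑' n : ℕ, ((n : ℝ) + 2) * ρ ^ (n + 1)
      = ρ * (ρ / (1 - ρ) ^ 2) + (2 * ρ) * (1 - ρ)⁻¹ := by
    rw [tsum_congr (fun n : ℕ =>
      (by ring : ((n : ℝ) + 2) * ρ ^ (n + 1) = ρ * ((n : ℝ) * ρ ^ n) + (2 * ρ) * ρ ^ n)),
      Summable.tsum_add S1 S0, tsum_mul_left, tsum_mul_left,
      tsum_coe_mul_geometric_of_norm_lt_one h1', tsum_geometric_of_lt_one h0 h1]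
  rw [hEq]
  have key : ρ * (ρ / (1 - ρ) ^ 2) + (2 * ρ) * (1 - ρ)⁻¹ = (2 * ρ - ρ ^ 2) / (1 - ρ) ^ 2 := by
    field_simp; ring
  rw [key, div_lt_one (by positivity)]
  have h2 : Real.sqrt 2 / 2 < 1 - ρ := by linarith
  nlinarith [mul_self_lt_mul_self (by positivity : (0:ℝ) ≤ Real.sqrt 2 / 2) h2]

/-- If `f(z) = z + ∑_{n≥2} a_n zⁿ` is analytic on the unit disk with `|a_n| ≤ 1` for
all `n ≥ 2`, then `Re f'(z) > 0` for `|z| < 1 - √2/2`, and `f` is injective on that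
disk; here `r = 1 - √2/2 ∈ (0,1)` is a root of `2(1-r)³ + r - 1 = 0`. -/
theorem stmt6 (a : ℕ → ℂ) (ha : ∀ n : ℕ, 2 ≤ n → ‖a n‖ ≤ 1)
    (f : ℂ → ℂ)
    (hf : ∀ z ∈ Metric.ball (0 : ℂ) 1,
      f z = z + ∑' n : ℕ, a (n + 2) * z ^ (n + 2)) :
    (∀ z ∈ Metric.ball (0 : ℂ) (1 - Real.sqrt 2 / 2), 0 < (deriv f z).re) ∧
    Set.InjOn f (Metric.ball (0 : ℂ) (1 - Real.sqrt 2 / 2)) ∧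
    (0 < 1 - Real.sqrt 2 / 2 ∧ 1 - Real.sqrt 2 / 2 < 1 ∧
      2 * (1 - (1 - Real.sqrt 2 / 2)) ^ 3 + (1 - Real.sqrt 2 / 2) - 1 = 0) := by
  have hs : Real.sqrt 2 ^ 2 = 2 := Real.sq_sqrt (by norm_num)
  have hs0 : 0 ≤ Real.sqrt 2 := Real.sqrt_nonneg 2
  set R : ℝ := 1 - Real.sqrt 2 / 2 with hRdef
  have hR0 : 0 < R := by rw [hRdef]; nlinarith
  have hR1 : R < 1 := by rw [hRdef]; nlinarith
  -- derivative of the tsum part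
  have G : ∀ z ∈ Metric.ball (0 : ℂ) R,
      HasDerivAt (fun w : ℂ => ∑' n : ℕ, a (n + 2) * w ^ (n + 2))
        (∑' n : ℕ, a (n + 2) * (((n : ℂ) + 2) * z ^ (n + 1))) z := by
    intro z hz
    refine hasDerivAt_tsum_of_isPreconnected (𝕜 := ℂ) (F := ℂ)
      (g := fun (n : ℕ) (w : ℂ) => a (n + 2) * w ^ (n + 2))
      (g' := fun (n : ℕ) (w : ℂ) => a (n + 2) * (((n : ℂ) + 2) * w ^ (n + 1)))
      (u := fun n : ℕ => ((n : ℝ) + 2) * R ^ (n + 1))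
      (aux_summable hR0.le hR1) Metric.isOpen_ball
      (convex_ball (0 : ℂ) R).isPreconnected (fun n w _ => ?_) (fun n w hw => ?_)
      (Metric.mem_ball_self hR0) ?_ hz
    · have := (hasDerivAt_pow (n + 2) w).const_mul (a (n + 2))
      simpa [Nat.add_sub_cancel, mul_comm] using this
    · have hw' : ‖w‖ < R := mem_ball_zero_iff.mp hw
      have h1 : ‖a (n + 2)‖ ≤ 1 := ha (n + 2) (by omega)
      have h2 : ‖(((n : ℂ) + 2) * w ^ (n + 1))‖ ≤ ((n : ℝ) + 2) * R ^ (n + 1) := by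
        rw [norm_mul, norm_pow]
        have hcast : ((n : ℂ) + 2) = ((n + 2 : ℕ) : ℂ) := by push_cast; ring
        have hn : ‖((n : ℂ) + 2)‖ = (n : ℝ) + 2 := by
          rw [hcast, Complex.norm_natCast]; push_cast; ring
        rw [hn]
        have : ‖w‖ ^ (n + 1) ≤ R ^ (n + 1) :=
          pow_le_pow_left₀ (norm_nonneg w) hw'.le _
        nlinarith [pow_nonneg (norm_nonneg w) (n + 1)]
      calc ‖a (n + 2) * (((n : ℂ) + 2) * w ^ (n + 1))‖
          = ‖a (n + 2)‖ * ‖(((n : ℂ) + 2) * w ^ (n + 1))‖ := norm_mul _ _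
        _ ≤ 1 * (((n : ℝ) + 2) * R ^ (n + 1)) := by
            apply mul_le_mul h1 h2 (norm_nonneg _) zero_le_one
        _ = ((n : ℝ) + 2) * R ^ (n + 1) := one_mul _
    · simpa using summable_zero
  -- derivative of f with positivity
  have D : ∀ z ∈ Metric.ball (0 : ℂ) R,
      HasDerivAt f (1 + ∑' n : ℕ, a (n + 2) * (((n : ℂ) + 2) * z ^ (n + 1))) z := by
    intro z hz
    have hz1 : z ∈ Metric.ball (0 : ℂ) 1 := by
      rw [Metric.mem_ball] at hz ⊢; linarith
    refine ((hasDerivAt_id z).add (G z hz)).congr_of_eventuallyEq ?_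
    filter_upwards [Metric.isOpen_ball.mem_nhds hz1] with w hw using hf w hw
  have Dpos : ∀ z ∈ Metric.ball (0 : ℂ) R,
      0 < (1 + ∑' n : ℕ, a (n + 2) * (((n : ℂ) + 2) * z ^ (n + 1))).re := by
    intro z hz
    have hzn : ‖z‖ < R := mem_ball_zero_iff.mp hz
    have hz0 : (0 : ℝ) ≤ ‖z‖ := norm_nonneg z
    have hz1 : ‖z‖ < 1 := lt_trans hzn hR1
    set S := ∑' n : ℕ, a (n + 2) * (((n : ℂ) + 2) * z ^ (n + 1)) with hS
    have bound : ∀ n : ℕ, ‖a (n + 2) * (((n : ℂ) + 2) * z ^ (n + 1))‖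
        ≤ ((n : ℝ) + 2) * ‖z‖ ^ (n + 1) := by
      intro n
      have h1 : ‖a (n + 2)‖ ≤ 1 := ha (n + 2) (by omega)
      rw [norm_mul, norm_mul, norm_pow]
      have hcast : ((n : ℂ) + 2) = ((n + 2 : ℕ) : ℂ) := by push_cast; ring
      have hn : ‖((n : ℂ) + 2)‖ = (n : ℝ) + 2 := by
        rw [hcast, Complex.norm_natCast]; push_cast; ring
      rw [hn]
      nlinarith [norm_nonneg (a (n + 2)), pow_nonneg hz0 (n + 1),
        mul_nonneg (by positivity : (0:ℝ) ≤ (n : ℝ) + 2) (pow_nonneg hz0 (n + 1))]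
    have hsum : Summable (fun n : ℕ => ‖a (n + 2) * (((n : ℂ) + 2) * z ^ (n + 1))‖) :=
      Summable.of_nonneg_of_le (fun n => norm_nonneg _) bound (aux_summable hz0 hz1)
    have hnorm : ‖S‖ < 1 := by
      calc ‖S‖ ≤ ∑' n : ℕ, ‖a (n + 2) * (((n : ℂ) + 2) * z ^ (n + 1))‖ :=
            norm_tsum_le_tsum_norm hsum
        _ ≤ ∑' n : ℕ, ((n : ℝ) + 2) * ‖z‖ ^ (n + 1) :=
            Summable.tsum_le_tsum bound hsum (aux_summable hz0 hz1)
        _ < 1 := aux_tsum_lt hz0 hzn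
    have hre : |S.re| ≤ ‖S‖ := by
      exact Complex.abs_re_le_norm S
    have : (1 + S).re = 1 + S.re := by simp
    rw [this]
    cases' abs_le.mp hre with h _
    linarith
  refine ⟨?_, ?_, ?_⟩
  · intro z hz
    rw [(D z hz).deriv]
    exact Dpos z hz
  · intro z₁ h₁ z₂ h₂ hfe
    by_contra hne
    set u : ℂ := z₂ - z₁ with hu
    have hu0 : u ≠ 0 := sub_ne_zero.mpr (Ne.symm hne)
    set γ : ℝ → ℂ := fun t => z₁ + (t : ℂ) * u with hγdef
    have hγ : ∀ t ∈ Set.Icc (0 : ℝ) 1, γ t ∈ Metric.ball (0 : ℂ) R := by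
      intro t ht
      have hc := (convex_ball (0 : ℂ) R) h₁ h₂
        (by linarith [ht.2] : (0 : ℝ) ≤ 1 - t) ht.1 (by ring)
      have : γ t = (1 - t) • z₁ + t • z₂ := by
        simp only [hγdef, Complex.real_smul, hu]
        push_cast
        ring
      rwa [this]
    set φ : ℝ → ℝ := fun t => ((starRingEnd ℂ) u * f (γ t)).re with hφdef
    have hφ : ∀ t ∈ Set.Icc (0 : ℝ) 1, HasDerivAt φ
        (Complex.normSq u *
          (1 + ∑' n : ℕ, a (n + 2) * (((n : ℂ) + 2) * (γ t) ^ (n + 1))).re) t := by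
      intro t ht
      set c : ℂ := 1 + ∑' n : ℕ, a (n + 2) * (((n : ℂ) + 2) * (γ t) ^ (n + 1)) with hc
      have Hf : HasDerivAt f c (γ t) := D (γ t) (hγ t ht)
      have H1 : HasDerivAt (fun s : ℂ => z₁ + s * u) u (↑t : ℂ) := by
        simpa using ((hasDerivAt_id (↑t : ℂ)).mul_const u).const_add z₁
      have H2 : HasDerivAt (fun s : ℂ => f (z₁ + s * u)) (c * u) (↑t : ℂ) := by
        have := HasDerivAt.comp (↑t : ℂ) (by simpa [hγdef] using Hf) H1
        exact this
      have H3 : HasDerivAt (fun s : ℂ => (starRingEnd ℂ) u * f (z₁ + s * u))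
          ((starRingEnd ℂ) u * (c * u)) (↑t : ℂ) := H2.const_mul _
      have H4 : HasDerivAt (fun t' : ℝ => (starRingEnd ℂ) u * f (z₁ + (↑t' : ℂ) * u))
          ((starRingEnd ℂ) u * (c * u)) t := H3.comp_ofReal
      have H5 : HasDerivAt φ (((starRingEnd ℂ) u * (c * u)).re) t :=
        (Complex.reCLM.hasFDerivAt.comp_hasDerivAt t H4)
      have : ((starRingEnd ℂ) u * (c * u)).re = Complex.normSq u * c.re := by
        have h6 : (starRingEnd ℂ) u * (c * u) = (Complex.normSq u : ℂ) * c := by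
          rw [← Complex.mul_conj u]; ring
        rw [h6, Complex.re_ofReal_mul]
      rwa [this] at H5
    have hmono : StrictMonoOn φ (Set.Icc (0 : ℝ) 1) := by
      apply strictMonoOn_of_deriv_pos (convex_Icc 0 1)
      · intro t ht
        exact (hφ t ht).continuousAt.continuousWithinAt
      · intro t ht
        rw [interior_Icc] at ht
        have ht' : t ∈ Set.Icc (0 : ℝ) 1 := ⟨ht.1.le, ht.2.le⟩
        rw [(hφ t ht').deriv]
        exact mul_pos (Complex.normSq_pos.mpr hu0) (Dpos _ (hγ t ht'))
    have h01 : φ 0 < φ 1 :=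
      hmono (Set.left_mem_Icc.mpr zero_le_one) (Set.right_mem_Icc.mpr zero_le_one) zero_lt_one
    have e0 : γ 0 = z₁ := by simp [hγdef]
    have e1 : γ 1 = z₂ := by simp [hγdef, hu]
    rw [hφdef] at h01
    simp only [e0, e1, hfe] at h01
    exact lt_irrefl _ h01
  · refine ⟨hR0, hR1, ?_⟩
    rw [hRdef]
    linear_combination (Real.sqrt 2 / 4) * hs
end

section
/- Let \phi(z) = 1 + \sum_{n=1}^{\infty} b_n z^n be analytic and non-vanishing on the unit disk D, and set f(z) = z/\phi(z). If \sum_{n=2}^{\infty} (n-1)|b_n| \le 1, then f belongs to the class U, i.e. |f'(z)(z/f(z))^2 - 1| < 1 for all z \in D with z \ne 0. -/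
open FormalMultilinearSeries
open scoped ENNReal NNReal


/-- If `φ(z) = 1 + ∑_{n≥1} b_n zⁿ` is analytic and non-vanishing on the unit disk and
`∑_{n≥2} (n-1)|b_n| ≤ 1`, then `f(z) = z/φ(z)` belongs to the class `U`. -/
theorem stmt9 (b : ℕ → ℂ) (φ : ℂ → ℂ) (hb0 : b 0 = 1)
    (hφ : ∀ z ∈ Metric.ball (0 : ℂ) 1, HasSum (fun n : ℕ => b n * z ^ n) (φ z))
    (hφ0 : ∀ z ∈ Metric.ball (0 : ℂ) 1, φ z ≠ 0)
    (hsum : Summable (fun n : ℕ => ((n + 1 : ℕ) : ℝ) * ‖b (n + 2)‖))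
    (hle : ∑' n : ℕ, ((n + 1 : ℕ) : ℝ) * ‖b (n + 2)‖ ≤ 1) :
    ClassU (fun z => z / φ z) := by
  set p : FormalMultilinearSeries ℂ ℂ ℂ := FormalMultilinearSeries.ofScalars ℂ b with hpdef
  have hball : Metric.eball (0:ℂ) 1 = Metric.ball (0:ℂ) 1 := by
    rw [← ENNReal.ofReal_one, Metric.emetric_ball]
  have hpn : ∀ n (z : ℂ), (p n fun _ => z) = b n * z ^ n := fun n z => by
    rw [hpdef, FormalMultilinearSeries.ofScalars_apply_eq, smul_eq_mul]
  have hpnorm : ∀ n, ‖p n‖ = ‖b n‖ := fun n => by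
    rw [hpdef, FormalMultilinearSeries.ofScalars_norm]
  have hrad : (1 : ℝ≥0∞) ≤ p.radius := by
    refine ENNReal.le_of_forall_nnreal_lt fun r hr => ?_
    have hr1 : (r : ℝ) < 1 := by exact_mod_cast hr
    have hz : ((r : ℝ) : ℂ) ∈ Metric.ball (0 : ℂ) 1 := by
      simp [Metric.mem_ball, abs_of_nonneg r.2, hr1]
    have hs := (hφ _ hz).summable
    apply p.le_radius_of_tendsto (l := 0)
    have h2 := hs.tendsto_atTop_zero.norm
    simp only [norm_zero] at h2
    convert h2 using 2 with n
    simp [hpnorm n, norm_mul, norm_pow, Complex.norm_real, Real.norm_of_nonneg r.2]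
  have hφs : HasFPowerSeriesOnBall φ p 0 1 :=
    { r_le := hrad
      r_pos := one_pos
      hasSum := fun {y} hy => by
        rw [zero_add]
        exact (hφ y (hball ▸ hy)).congr_fun fun n => hpn n y }
  -- differentiability of φ
  have hφdiff : DifferentiableOn ℂ φ (Metric.ball (0:ℂ) 1) := by
    have := hφs.differentiableOn
    rwa [hball] at this
  have hφdAt : ∀ z ∈ Metric.ball (0:ℂ) 1, DifferentiableAt ℂ φ z := fun z hz =>
    hφdiff.differentiableAt (Metric.isOpen_ball.mem_nhds hz)
  -- the key sum for z * φ'(z)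
  have hderivsum : ∀ z ∈ Metric.ball (0:ℂ) 1,
      HasSum (fun n : ℕ => ((n+1:ℕ):ℂ) * (b (n+1) * z^(n+1))) (z * deriv φ z) := by
    intro z hz
    have h1 := hφs.fderiv.hasSum (y := z) (by rw [hball]; exact hz)
    rw [zero_add] at h1
    have h2 := (ContinuousLinearMap.apply ℂ ℂ z).hasSum h1
    have hval : (fderiv ℂ φ z) z = z * deriv φ z := by
      have h3 : (fderiv ℂ φ z) (z • (1:ℂ)) = z • (fderiv ℂ φ z) 1 :=
        ContinuousLinearMap.map_smul _ _ _
      rw [smul_eq_mul, mul_one] at h3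
      rw [h3, smul_eq_mul, fderiv_apply_one_eq_deriv]
    rw [ContinuousLinearMap.apply_apply, hval] at h2
    refine h2.congr_fun fun n => ?_
    rw [ContinuousLinearMap.apply_apply, p.derivSeries_apply_diag, hpn, nsmul_eq_mul]
  -- φ 0 = 1
  have hφ01 : φ 0 = 1 := by
    have h := hφ 0 (by simp)
    have h' : HasSum (fun n : ℕ => b n * (0:ℂ) ^ n) (b 0 * 0 ^ 0) :=
      hasSum_single 0 (fun n hn => by simp [zero_pow hn])
    have := h.unique h'
    simpa [hb0] using this
  refine ⟨?_, by simp, ?_, ?_, ?_⟩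
  · exact (differentiableOn_id).div hφdiff hφ0
  · have h0 : (0:ℂ) ∈ Metric.ball (0:ℂ) 1 := by simp
    have hd : HasDerivAt (fun z => z / φ z)
        ((1 * φ 0 - 0 * deriv φ 0) / φ 0 ^ 2) 0 :=
      (hasDerivAt_id 0).div ((hφdAt 0 h0).hasDerivAt) (hφ0 0 h0)
    rw [hd.deriv, hφ01]
    simp
  · exact fun z _ hz0 => div_ne_zero hz0 (hφ0 z ‹_›)
  · intro z hz hz0
    have hφz := hφ0 z hz
    have hd : HasDerivAt (fun z => z / φ z)
        ((1 * φ z - z * deriv φ z) / φ z ^ 2) z :=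
      (hasDerivAt_id z).div ((hφdAt z hz).hasDerivAt) hφz
    have hfz : z / φ z ≠ 0 := div_ne_zero hz0 hφz
    have hratio : z / (z / φ z) = φ z := by field_simp
    have hexpr : deriv (fun z => z / φ z) z * (z / (z / φ z)) ^ 2 - 1
        = φ z - z * deriv φ z - 1 := by
      rw [hd.deriv, hratio]
      field_simp
    rw [hexpr]
    -- series for φ z - z * deriv φ z - 1
    have A := hφ z hz
    have A' : HasSum (fun n : ℕ => b (n+1) * z^(n+1)) (φ z - 1) := by
      have := (hasSum_nat_add_iff' (f := fun n : ℕ => b n * z ^ n) 1).2 A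
      simpa [hb0] using this
    have B := hderivsum z hz
    have C : HasSum (fun n : ℕ => -((n:ℂ) * (b (n+1) * z^(n+1))))
        (φ z - 1 - z * deriv φ z) := by
      have := A'.sub B
      refine this.congr_fun fun n => ?_
      push_cast
      ring
    have D : HasSum (fun n : ℕ => -(((n+1:ℕ):ℂ) * (b (n+2) * z^(n+2))))
        (φ z - 1 - z * deriv φ z) := by
      have := (hasSum_nat_add_iff'
        (f := fun n : ℕ => -((n:ℂ) * (b (n+1) * z^(n+1)))) 1).2 C
      simp only [Finset.range_one, Finset.sum_singleton, Nat.cast_zero, zero_mul, neg_zero,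
        sub_zero] at this
      refine this.congr_fun fun n => ?_
      push_cast
      ring
    have hznorm : ‖z‖ < 1 := by simpa using hz
    have hz0' : (0:ℝ) ≤ ‖z‖ := norm_nonneg z
    have hterm : ∀ n : ℕ, ‖-(((n+1:ℕ):ℂ) * (b (n+2) * z^(n+2)))‖
        = ((n+1:ℕ):ℝ) * ‖b (n+2)‖ * ‖z‖^(n+2) := fun n => by
      rw [norm_neg, norm_mul, norm_mul, norm_pow, Complex.norm_natCast, mul_assoc]
    have hpow : ∀ n : ℕ, ‖z‖^(n+2) ≤ ‖z‖^2 := fun n =>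
      pow_le_pow_of_le_one hz0' hznorm.le (by omega)
    have hbound : ∀ n : ℕ, ((n+1:ℕ):ℝ) * ‖b (n+2)‖ * ‖z‖^(n+2)
        ≤ ‖z‖^2 * (((n+1:ℕ):ℝ) * ‖b (n+2)‖) := by
      intro n
      rw [mul_comm (‖z‖^2)]
      exact mul_le_mul_of_nonneg_left (hpow n) (by positivity)
    have hsn : Summable (fun n : ℕ => ((n+1:ℕ):ℝ) * ‖b (n+2)‖ * ‖z‖^(n+2)) := by
      refine hsum.of_nonneg_of_le (fun n => by positivity) fun n => ?_
      have h1 : ‖z‖^(n+2) ≤ 1 := pow_le_one₀ hz0' hznorm.le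
      have := mul_le_mul_of_nonneg_left h1
        (show (0:ℝ) ≤ ((n+1:ℕ):ℝ) * ‖b (n+2)‖ by positivity)
      simpa [mul_assoc] using this
    have h1 : ‖φ z - 1 - z * deriv φ z‖ ≤ ∑' n : ℕ, ((n+1:ℕ):ℝ) * ‖b (n+2)‖ * ‖z‖^(n+2) := by
      rw [← D.tsum_eq]
      refine (norm_tsum_le_tsum_norm ?_).trans_eq (tsum_congr hterm)
      exact hsn.congr fun n => (hterm n).symm
    have h2 : ∑' n : ℕ, ((n+1:ℕ):ℝ) * ‖b (n+2)‖ * ‖z‖^(n+2)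
        ≤ ‖z‖^2 * ∑' n : ℕ, ((n+1:ℕ):ℝ) * ‖b (n+2)‖ := by
      rw [← tsum_mul_left]
      exact Summable.tsum_le_tsum hbound hsn (hsum.mul_left _)
    have h3 : ‖z‖^2 * ∑' n : ℕ, ((n+1:ℕ):ℝ) * ‖b (n+2)‖ ≤ ‖z‖^2 := by
      have h0 : (0:ℝ) ≤ ‖z‖^2 := by positivity
      have := mul_le_mul_of_nonneg_left hle h0
      simpa using this
    have h4 : ‖z‖^2 < 1 := by nlinarith
    have heq : φ z - z * deriv φ z - 1 = φ z - 1 - z * deriv φ z := by ring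
    rw [heq]
    exact lt_of_le_of_lt (h1.trans (h2.trans h3)) h4
end

section
/- Let \phi(z) = 1 + \sum_{n=1}^{\infty} b_n z^n be analytic and non-vanishing on the unit disk D, and set f(z) = z/\phi(z). If \sum_{n=2}^{\infty} (n-1)|b_n| \le 1 - |b_1|, then f is starlike: f is univalent on D and Re( z f'(z)/f(z) ) > 0 for all z \in D with z \ne 0. -/
lemma aux_pow_sub_pow (z1 z2 : ℂ) (h1 : ‖z1‖ ≤ 1) (h2 : ‖z2‖ ≤ 1) (m : ℕ) :
    ‖z2 ^ m - z1 ^ m‖ ≤ m * ‖z2 - z1‖ := by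
  rw [← geom_sum₂_mul]
  rw [norm_mul]
  have : ‖∑ i ∈ Finset.range m, z2 ^ i * z1 ^ (m - 1 - i)‖ ≤ (m : ℝ) := by
    calc ‖∑ i ∈ Finset.range m, z2 ^ i * z1 ^ (m - 1 - i)‖
        ≤ ∑ i ∈ Finset.range m, ‖z2 ^ i * z1 ^ (m - 1 - i)‖ := norm_sum_le _ _
      _ ≤ ∑ i ∈ Finset.range m, 1 := by
          apply Finset.sum_le_sum
          intro i _
          rw [norm_mul, norm_pow, norm_pow]
          exact mul_le_one₀ (pow_le_one₀ (norm_nonneg _) h2) (by positivity)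
            (pow_le_one₀ (norm_nonneg _) h1)
      _ = m := by simp
  exact mul_le_mul_of_nonneg_right this (norm_nonneg _)

lemma aux_re_pos (w : ℂ) (h : ‖w - 1‖ < ‖w + 1‖) : 0 < w.re := by
  have h2 : Complex.normSq (w - 1) < Complex.normSq (w + 1) := by
    rw [← Complex.sq_norm, ← Complex.sq_norm]
    exact pow_lt_pow_left₀ h (norm_nonneg _) two_ne_zero
  simp only [Complex.normSq_apply, Complex.sub_re, Complex.sub_im, Complex.add_re,
    Complex.add_im, Complex.one_re, Complex.one_im] at h2
  nlinarith

/-- If `φ(z) = 1 + ∑_{n≥1} b_n zⁿ` is analytic and non-vanishing on the unit disk and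
`∑_{n≥2} (n-1)|b_n| ≤ 1 - |b₁|`, then `f(z) = z/φ(z)` is starlike: it is injective on
the disk and `Re(z f'(z)/f(z)) > 0` for `z ≠ 0` in the disk. -/
theorem stmt10 (b : ℕ → ℂ) (φ : ℂ → ℂ) (hb0 : b 0 = 1)
    (hφ : ∀ z ∈ Metric.ball (0 : ℂ) 1, HasSum (fun n : ℕ => b n * z ^ n) (φ z))
    (hφ0 : ∀ z ∈ Metric.ball (0 : ℂ) 1, φ z ≠ 0)
    (hsum : Summable (fun n : ℕ => ((n + 1 : ℕ) : ℝ) * ‖b (n + 2)‖))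
    (hle : ∑' n : ℕ, ((n + 1 : ℕ) : ℝ) * ‖b (n + 2)‖ ≤ 1 - ‖b 1‖) :
    Set.InjOn (fun z => z / φ z) (Metric.ball (0 : ℂ) 1) ∧
    ∀ z ∈ Metric.ball (0 : ℂ) 1, z ≠ 0 →
      0 < (z * deriv (fun w => w / φ w) z / (z / φ z)).re := by
  have hU0 : 0 ≤ ∑' n : ℕ, ((n + 1 : ℕ) : ℝ) * ‖b (n + 2)‖ :=
    tsum_nonneg fun n => mul_nonneg (by positivity) (norm_nonneg _)
  have hb1 : ‖b 1‖ ≤ 1 := by linarith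
  -- summability facts
  have hsumP : Summable (fun n : ℕ => ((n + 2 : ℕ) : ℝ) * ‖b (n + 2)‖) := by
    apply Summable.of_nonneg_of_le (fun n => by positivity)
      (fun n => ?_) (hsum.mul_left 2)
    have : ((n + 2 : ℕ) : ℝ) ≤ 2 * ((n + 1 : ℕ) : ℝ) := by push_cast; linarith
    calc ((n + 2 : ℕ) : ℝ) * ‖b (n + 2)‖ ≤ (2 * ((n + 1 : ℕ) : ℝ)) * ‖b (n + 2)‖ :=
      mul_le_mul_of_nonneg_right this (norm_nonneg _)
    _ = 2 * (((n + 1 : ℕ) : ℝ) * ‖b (n + 2)‖) := by ring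
  have hsumQ : Summable (fun n : ℕ => (n : ℝ) * ‖b (n + 2)‖) := by
    apply Summable.of_nonneg_of_le (fun n => by positivity) (fun n => ?_) hsum
    exact mul_le_mul_of_nonneg_right (by push_cast; linarith) (norm_nonneg _)
  have hsum2 : Summable (fun n : ℕ => ‖b (n + 2)‖) := by
    apply Summable.of_nonneg_of_le (fun n => norm_nonneg _) (fun n => ?_) hsum
    exact le_mul_of_one_le_left (norm_nonneg _) (by push_cast; linarith)
  have Sb : Summable (fun n : ℕ => ‖b n‖) := (summable_nat_add_iff 2).1 hsum2
  have Sn : Summable (fun n : ℕ => (n : ℝ) * ‖b n‖) := by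
    apply (summable_nat_add_iff 2).1
    apply hsumP.congr
    intro n; push_cast; ring
  -- derivative of φ on the ball
  have hderiv : ∀ z ∈ Metric.ball (0 : ℂ) 1,
      HasDerivAt φ (∑' n : ℕ, b n * ((n : ℂ) * z ^ (n - 1))) z := by
    intro z hz
    have hbound : ∀ (n : ℕ), ∀ y ∈ Metric.ball (0 : ℂ) 1,
        ‖b n * ((n : ℂ) * y ^ (n - 1))‖ ≤ (n : ℝ) * ‖b n‖ := by
      intro n y hy
      have hy1 : ‖y‖ ≤ 1 := le_of_lt (mem_ball_zero_iff.1 hy)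
      calc ‖b n * ((n : ℂ) * y ^ (n - 1))‖
          = ‖b n‖ * ((n : ℝ) * ‖y‖ ^ (n - 1)) := by
            simp [norm_mul, norm_pow]
        _ ≤ ‖b n‖ * ((n : ℝ) * 1) := by
            gcongr
            exact pow_le_one₀ (norm_nonneg _) hy1
        _ = (n : ℝ) * ‖b n‖ := by ring
    have hs0 : Summable (fun n : ℕ => b n * (0 : ℂ) ^ n) := by
      apply Summable.of_norm_bounded Sb
      intro n
      rw [norm_mul]
      calc ‖b n‖ * ‖(0:ℂ) ^ n‖ ≤ ‖b n‖ * 1 := by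
            gcongr
            rw [norm_pow]
            exact pow_le_one₀ (norm_nonneg _) (by simp)
        _ = ‖b n‖ := mul_one _
    have key : HasDerivAt (fun y => ∑' n : ℕ, b n * y ^ n)
        (∑' n : ℕ, b n * ((n : ℂ) * z ^ (n - 1))) z :=
      hasDerivAt_tsum_of_isPreconnected Sn Metric.isOpen_ball
        (convex_ball (0:ℂ) 1).isPreconnected
        (fun n y _ => (hasDerivAt_pow n y).const_mul (b n))
        hbound (Metric.mem_ball_self one_pos) hs0 hz
    apply key.congr_of_eventuallyEq
    filter_upwards [Metric.isOpen_ball.mem_nhds hz] with y hy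
    exact ((hφ y hy).tsum_eq).symm
  constructor
  · -- injectivity
    intro z1 hz1 z2 hz2 hf
    simp only at hf
    have h1 : ‖z1‖ < 1 := mem_ball_zero_iff.1 hz1
    have h2 : ‖z2‖ < 1 := mem_ball_zero_iff.1 hz2
    have hcross : z1 * φ z2 = z2 * φ z1 :=
      (div_eq_div_iff (hφ0 z1 hz1) (hφ0 z2 hz2)).1 hf
    set t : ℕ → ℂ := fun n => b n * (z1 * z2 ^ n - z2 * z1 ^ n) with ht_def
    have ht : HasSum t 0 := by
      have h := ((hφ z2 hz2).mul_left z1).sub ((hφ z1 hz1).mul_left z2)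
      rw [sub_eq_zero.2 hcross] at h
      have heq : (fun n : ℕ => z1 * (b n * z2 ^ n) - z2 * (b n * z1 ^ n)) = t := by
        funext n; simp only [ht_def]; ring
      rwa [heq] at h
    have ht2 : HasSum (fun n => t (n + 2)) (z2 - z1) := by
      have hr : ∑ i ∈ Finset.range 2, t i = z1 - z2 := by
        simp only [Finset.sum_range_succ, Finset.sum_range_zero, ht_def, hb0, pow_zero, pow_one]
        ring
      have := (hasSum_nat_add_iff' (f := t) 2).2 ht
      rw [hr] at this
      simpa using this
    -- bound the tail
    have hbd : ∀ n : ℕ, ‖t (n + 2)‖ ≤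
        ((n + 1 : ℕ) : ℝ) * ‖b (n + 2)‖ * (‖z1‖ * ‖z2‖ * ‖z2 - z1‖) := by
      intro n
      have hfac : z1 * z2 ^ (n + 2) - z2 * z1 ^ (n + 2)
          = z1 * z2 * (z2 ^ (n + 1) - z1 ^ (n + 1)) := by ring
      rw [ht_def]
      simp only [hfac, norm_mul]
      have := aux_pow_sub_pow z1 z2 h1.le h2.le (n + 1)
      calc ‖b (n+2)‖ * (‖z1‖ * ‖z2‖ * ‖z2 ^ (n+1) - z1 ^ (n+1)‖)
          ≤ ‖b (n+2)‖ * (‖z1‖ * ‖z2‖ * (((n+1 : ℕ) : ℝ) * ‖z2 - z1‖)) := by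
            gcongr <;> exact_mod_cast this
        _ = ((n + 1 : ℕ) : ℝ) * ‖b (n + 2)‖ * (‖z1‖ * ‖z2‖ * ‖z2 - z1‖) := by
            push_cast; ring
    have hg : HasSum (fun n : ℕ => ((n + 1 : ℕ) : ℝ) * ‖b (n + 2)‖ * (‖z1‖ * ‖z2‖ * ‖z2 - z1‖))
        ((∑' n : ℕ, ((n + 1 : ℕ) : ℝ) * ‖b (n + 2)‖) * (‖z1‖ * ‖z2‖ * ‖z2 - z1‖)) :=
      hsum.hasSum.mul_right _
    have hkey : ‖z2 - z1‖ ≤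
        (∑' n : ℕ, ((n + 1 : ℕ) : ℝ) * ‖b (n + 2)‖) * (‖z1‖ * ‖z2‖ * ‖z2 - z1‖) := by
      have := tsum_of_norm_bounded hg hbd
      rwa [ht2.tsum_eq] at this
    by_contra hne
    have hd : 0 < ‖z2 - z1‖ := by
      rw [norm_pos_iff, sub_ne_zero]
      exact fun e => hne e.symm
    have hU1 : (∑' n : ℕ, ((n + 1 : ℕ) : ℝ) * ‖b (n + 2)‖) ≤ 1 := by linarith [norm_nonneg (b 1)]
    have hq : ‖z1‖ * ‖z2‖ < 1 := by nlinarith [norm_nonneg z1, norm_nonneg z2]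
    have hlt : ‖z1‖ * ‖z2‖ * ‖z2 - z1‖ < ‖z2 - z1‖ := by nlinarith
    have hle2 : (∑' n : ℕ, ((n + 1 : ℕ) : ℝ) * ‖b (n + 2)‖) * (‖z1‖ * ‖z2‖ * ‖z2 - z1‖)
        ≤ ‖z1‖ * ‖z2‖ * ‖z2 - z1‖ :=
      mul_le_of_le_one_left (by positivity) hU1
    linarith
  · -- starlikeness inequality
    intro z hz hz0
    have hr : ‖z‖ < 1 := mem_ball_zero_iff.1 hz
    have hF : φ z ≠ 0 := hφ0 z hz
    set D : ℂ := ∑' n : ℕ, b n * ((n : ℂ) * z ^ (n - 1)) with hD_def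
    have hD : HasDerivAt φ D z := hderiv z hz
    have hDsum : HasSum (fun n : ℕ => b n * ((n : ℂ) * z ^ (n - 1))) D := by
      rw [hD_def]
      apply Summable.hasSum
      apply Summable.of_norm_bounded Sn
      intro n
      calc ‖b n * ((n : ℂ) * z ^ (n - 1))‖
          = ‖b n‖ * ((n : ℝ) * ‖z‖ ^ (n - 1)) := by simp [norm_mul, norm_pow]
        _ ≤ ‖b n‖ * ((n : ℝ) * 1) := by
            gcongr
            exact pow_le_one₀ (norm_nonneg _) hr.le
        _ = (n : ℝ) * ‖b n‖ := by ring
    -- X = z * D as a sum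
    set X : ℂ := z * D with hX_def
    have hX : HasSum (fun n : ℕ => ((n : ℕ) : ℂ) * b n * z ^ n) X := by
      have h := hDsum.mul_left z
      have heq : (fun n : ℕ => z * (b n * ((n : ℂ) * z ^ (n - 1))))
          = fun n : ℕ => ((n : ℕ) : ℂ) * b n * z ^ n := by
        funext n
        cases n with
        | zero => simp
        | succ m => simp only [Nat.add_sub_cancel, pow_succ]; push_cast; ring
      rwa [heq] at h
    -- the series for 2φ(z) - X
    set s : ℕ → ℂ := fun n => ((2 : ℂ) - (n : ℕ)) * b n * z ^ n with hs_def
    have hS : HasSum s (2 * φ z - X) := by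
      have h := ((hφ z hz).mul_left 2).sub hX
      have heq : (fun n : ℕ => 2 * (b n * z ^ n) - ((n : ℕ) : ℂ) * b n * z ^ n) = s := by
        funext n; simp only [hs_def]; ring
      rwa [heq] at h
    -- tail sums
    have htX : HasSum (fun n : ℕ => (((n + 2 : ℕ)) : ℂ) * b (n + 2) * z ^ (n + 2))
        (X - b 1 * z) := by
      have hr2 : ∑ i ∈ Finset.range 2, ((i : ℂ) * b i * z ^ i) = b 1 * z := by
        simp [Finset.sum_range_succ]
      have h := (hasSum_nat_add_iff' (f := fun n : ℕ => ((n : ℕ) : ℂ) * b n * z ^ n) 2).2 hX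
      rw [hr2] at h
      exact h
    have htS : HasSum (fun n : ℕ => ((2 : ℂ) - ((n + 2 : ℕ) : ℂ)) * b (n + 2) * z ^ (n + 2))
        (2 * φ z - X - (2 + b 1 * z)) := by
      have hr2 : ∑ i ∈ Finset.range 2, s i = 2 + b 1 * z := by
        simp only [hs_def, Finset.sum_range_succ, Finset.sum_range_zero, hb0, pow_zero, pow_one]
        push_cast; ring
      have h := (hasSum_nat_add_iff' (f := s) 2).2 hS
      rw [hr2] at h
      exact h
    -- norm bounds on tails
    have hXtail : ‖X - b 1 * z‖ ≤ (∑' n : ℕ, ((n + 2 : ℕ) : ℝ) * ‖b (n + 2)‖) * ‖z‖ ^ 2 := by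
      have hg : HasSum (fun n : ℕ => ((n + 2 : ℕ) : ℝ) * ‖b (n + 2)‖ * ‖z‖ ^ 2)
          ((∑' n : ℕ, ((n + 2 : ℕ) : ℝ) * ‖b (n + 2)‖) * ‖z‖ ^ 2) := hsumP.hasSum.mul_right _
      have hbd : ∀ n : ℕ, ‖(((n + 2 : ℕ)) : ℂ) * b (n + 2) * z ^ (n + 2)‖
          ≤ ((n + 2 : ℕ) : ℝ) * ‖b (n + 2)‖ * ‖z‖ ^ 2 := by
        intro n
        rw [norm_mul, norm_mul, norm_pow]
        rw [Complex.norm_natCast, mul_assoc, mul_assoc]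
        apply mul_le_mul_of_nonneg_left ?_ (by positivity)
        apply mul_le_mul_of_nonneg_left ?_ (norm_nonneg _)
        exact pow_le_pow_of_le_one (norm_nonneg _) hr.le (Nat.le_add_left 2 n)
      have := tsum_of_norm_bounded hg hbd
      rwa [htX.tsum_eq] at this
    have hStail : ‖2 * φ z - X - (2 + b 1 * z)‖
        ≤ (∑' n : ℕ, (n : ℝ) * ‖b (n + 2)‖) * ‖z‖ ^ 2 := by
      have hg : HasSum (fun n : ℕ => (n : ℝ) * ‖b (n + 2)‖ * ‖z‖ ^ 2)
          ((∑' n : ℕ, (n : ℝ) * ‖b (n + 2)‖) * ‖z‖ ^ 2) := hsumQ.hasSum.mul_right _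
      have hbd : ∀ n : ℕ, ‖((2 : ℂ) - ((n + 2 : ℕ) : ℂ)) * b (n + 2) * z ^ (n + 2)‖
          ≤ (n : ℝ) * ‖b (n + 2)‖ * ‖z‖ ^ 2 := by
        intro n
        rw [norm_mul, norm_mul, norm_pow]
        have h1 : ‖(2 : ℂ) - ((n + 2 : ℕ) : ℂ)‖ = (n : ℝ) := by
          have : (2 : ℂ) - ((n + 2 : ℕ) : ℂ) = -(n : ℂ) := by push_cast; ring
          rw [this, norm_neg, Complex.norm_natCast]
        rw [h1, mul_assoc, mul_assoc]
        apply mul_le_mul_of_nonneg_left ?_ (by positivity)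
        apply mul_le_mul_of_nonneg_left ?_ (norm_nonneg _)
        exact pow_le_pow_of_le_one (norm_nonneg _) hr.le (Nat.le_add_left 2 n)
      have := tsum_of_norm_bounded hg hbd
      rwa [htS.tsum_eq] at this
    -- combine: ‖X‖ < ‖2φz - X‖
    have hPQ : (∑' n : ℕ, ((n + 2 : ℕ) : ℝ) * ‖b (n + 2)‖) + (∑' n : ℕ, (n : ℝ) * ‖b (n + 2)‖)
        = 2 * ∑' n : ℕ, ((n + 1 : ℕ) : ℝ) * ‖b (n + 2)‖ := by
      rw [← Summable.tsum_add hsumP hsumQ, ← tsum_mul_left]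
      apply tsum_congr
      intro n; push_cast; ring
    have hbz : ‖b 1 * z‖ = ‖b 1‖ * ‖z‖ := norm_mul _ _
    have hXn : ‖X‖ ≤ ‖b 1‖ * ‖z‖ + (∑' n : ℕ, ((n + 2 : ℕ) : ℝ) * ‖b (n + 2)‖) * ‖z‖ ^ 2 := by
      calc ‖X‖ = ‖(X - b 1 * z) + b 1 * z‖ := by ring_nf
        _ ≤ ‖X - b 1 * z‖ + ‖b 1 * z‖ := norm_add_le _ _
        _ ≤ (∑' n : ℕ, ((n + 2 : ℕ) : ℝ) * ‖b (n + 2)‖) * ‖z‖ ^ 2 + ‖b 1‖ * ‖z‖ := by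
            rw [hbz] at *; linarith
        _ = _ := by ring
    have hYn : ‖2 * φ z - X - 2‖
        ≤ ‖b 1‖ * ‖z‖ + (∑' n : ℕ, (n : ℝ) * ‖b (n + 2)‖) * ‖z‖ ^ 2 := by
      calc ‖2 * φ z - X - 2‖ = ‖(2 * φ z - X - (2 + b 1 * z)) + b 1 * z‖ := by ring_nf
        _ ≤ ‖2 * φ z - X - (2 + b 1 * z)‖ + ‖b 1 * z‖ := norm_add_le _ _
        _ ≤ (∑' n : ℕ, (n : ℝ) * ‖b (n + 2)‖) * ‖z‖ ^ 2 + ‖b 1‖ * ‖z‖ := by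
            rw [hbz] at *; linarith
        _ = _ := by ring
    have hlow : (2 : ℝ) - ‖2 * φ z - X - 2‖ ≤ ‖2 * φ z - X‖ := by
      have h := norm_sub_norm_le (2 : ℂ) (2 - (2 * φ z - X))
      have he : (2 : ℂ) - (2 - (2 * φ z - X)) = 2 * φ z - X := by ring
      rw [he, norm_sub_rev] at h
      have h2 : ‖(2 : ℂ)‖ = 2 := by norm_num
      have he2 : (2 : ℂ) - (2 * φ z - X) = -(2 * φ z - X - 2) := by ring
      rw [h2] at h
      have he3 : ‖(2 * φ z - X) - 2‖ = ‖2 * φ z - X - 2‖ := by ring_nf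
      linarith [he3 ▸ h]
    have hfinal : ‖X‖ < ‖2 * φ z - X‖ := by
      have hP0 : 0 ≤ (∑' n : ℕ, ((n + 2 : ℕ) : ℝ) * ‖b (n + 2)‖) :=
        tsum_nonneg fun n => by positivity
      have hQ0 : 0 ≤ (∑' n : ℕ, (n : ℝ) * ‖b (n + 2)‖) :=
        tsum_nonneg fun n => by positivity
      have hz2 : ‖z‖ ^ 2 ≤ ‖z‖ := by nlinarith [norm_nonneg z]
      have hlt2 : ‖b 1‖ * ‖z‖ + (∑' n : ℕ, ((n + 1 : ℕ) : ℝ) * ‖b (n + 2)‖) * ‖z‖ ^ 2 < 1 := by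
        nlinarith [norm_nonneg z, norm_nonneg (b 1), sq_nonneg (‖z‖)]
      nlinarith [norm_nonneg z]
    -- finish
    have hderivf : deriv (fun w => w / φ w) z = (φ z - z * D) / (φ z) ^ 2 := by
      have h := (hasDerivAt_id z).div hD hF
      have := h.deriv
      exact this.trans (by simp)
    have hw : z * deriv (fun w => w / φ w) z / (z / φ z) = (φ z - X) / φ z := by
      rw [hderivf, hX_def]
      field_simp
    rw [hw]
    apply aux_re_pos
    have he1 : (φ z - X) / φ z - 1 = -X / φ z := by field_simp; ring
    have he2 : (φ z - X) / φ z + 1 = (2 * φ z - X) / φ z := by field_simp; ring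
    rw [he1, he2, norm_div, norm_div, norm_neg]
    have hφpos : 0 < ‖φ z‖ := norm_pos_iff.2 hF
    exact div_lt_div_of_pos_right hfinal hφpos
end

section
/- Let f belong to the class U, and write z/f(z) = 1 + \sum_{n=1}^{\infty} b_n z^n for z \in D (this expansion exists since z/f(z) is analytic and non-vanishing on D with value 1 at 0). Then \sum_{n=2}^{\infty} (n-1)^2 |b_n|^2 \le 1. -/
open Complex MeasureTheory Real Metric


lemma integral_exp_int (k : ℤ) :
    (∫ θ in (0:ℝ)..(2*π), Complex.exp (k * θ * Complex.I)) = if k = 0 then (2*π : ℂ) else 0 := by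
  split_ifs with hk
  · simp [hk]
  · have hc : (k : ℂ) * Complex.I ≠ 0 :=
      mul_ne_zero (by exact_mod_cast hk) Complex.I_ne_zero
    have h := integral_exp_mul_complex (a := 0) (b := 2*π) hc
    have e : ∀ θ : ℝ, (k:ℂ) * θ * Complex.I = (k * Complex.I) * θ := fun θ => by ring
    simp only [e]
    rw [h, show ((k:ℂ) * Complex.I * (2*π:ℝ)) = k * (2*π*Complex.I) by push_cast; ring]
    simp [Complex.exp_int_mul_two_pi_mul_I]

lemma key_integral (c : ℕ → ℂ) (H : ℝ → ℂ) (r : ℝ) (hr : 0 < r)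
    (hcont : Continuous H)
    (hsum : ∀ θ : ℝ, HasSum (fun n => c n * (r * Complex.exp (θ * Complex.I))^n) (H θ))
    (hs : Summable (fun n => ‖c n‖ * r ^ n)) (n : ℤ) :
    (∫ x in (0:ℝ)..(2*π), Complex.exp ((-n) * x * Complex.I) * H x)
      = if 0 ≤ n then (2*π : ℂ) * (c n.toNat * (r:ℂ)^n.toNat) else 0 := by
  set g : ℕ → ℝ → ℂ :=
    fun m x => (c m * (r:ℂ)^m) * Complex.exp ((Int.cast ((m:ℤ) - n) : ℂ) * x * Complex.I) with hg
  have hptwise : ∀ x : ℝ, Complex.exp ((-n) * x * Complex.I) * H x = ∑' m, g m x := by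
    intro x
    have h1 : HasSum (fun m => g m x)
        (Complex.exp ((-n) * x * Complex.I) * H x) := by
      have h0 := (hsum x).mul_left (Complex.exp (-(n:ℂ) * x * Complex.I))
      convert h0 using 2 with m
      · rfl
      rw [hg]
      simp only
      rw [mul_pow, ← Complex.exp_nat_mul,
        show Complex.exp (-(n:ℂ) * x * Complex.I) * (c m * ((r:ℂ)^m * Complex.exp ((m:ℂ) * (x * Complex.I))))
          = (c m * (r:ℂ)^m) * Complex.exp (-(n:ℂ) * x * Complex.I + (m:ℂ) * (x * Complex.I)) from by
            rw [Complex.exp_add]; ring]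
      congr 2
      push_cast
      ring
    exact h1.tsum_eq.symm
  have hnormg : ∀ m x, ‖g m x‖ = ‖c m‖ * r ^ m := by
    intro m x
    rw [hg]
    simp only
    rw [norm_mul, show (Int.cast ((m:ℤ) - n) : ℂ) * x * Complex.I
        = (((((m:ℤ) - n : ℤ):ℝ) * x : ℝ) : ℂ) * Complex.I from by push_cast; ring]
    rw [Complex.norm_exp_ofReal_mul_I, mul_one]
    simp [map_mul, map_pow, abs_of_pos hr]
  have h2π : (0:ℝ) ≤ 2*π := by positivity
  rw [intervalIntegral.integral_of_le h2π]
  calc ∫ x in Set.Ioc (0:ℝ) (2*π), Complex.exp ((-n) * x * Complex.I) * H x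
      = ∫ x in Set.Ioc (0:ℝ) (2*π), ∑' m, g m x := by
        exact setIntegral_congr_fun measurableSet_Ioc fun x _ => hptwise x
    _ = ∑' m, ∫ x in Set.Ioc (0:ℝ) (2*π), g m x := by
        apply integral_tsum
        · intro m
          exact (Continuous.aestronglyMeasurable (by continuity)).restrict
        · rw [← lt_top_iff_ne_top]
          have hb : ∀ m, ∫⁻ x in Set.Ioc (0:ℝ) (2*π), ‖g m x‖₊ ∂volume
              ≤ ENNReal.ofReal ((‖c m‖ * r ^ m) * (2*π)) := by
            intro m
            have hcc : ∀ x, (‖g m x‖₊ : ENNReal) = ENNReal.ofReal (‖c m‖ * r ^ m) := by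
              intro x
              rw [← enorm_eq_nnnorm, ← ofReal_norm, hnormg]
            simp_rw [hcc]
            rw [MeasureTheory.setLIntegral_const, Real.volume_Ioc]
            apply le_of_eq
            rw [← ENNReal.ofReal_mul (by positivity : (0:ℝ) ≤ ‖c m‖ * r ^ m)]
            norm_num
          calc ∑' m, ∫⁻ x in Set.Ioc (0:ℝ) (2*π), ‖g m x‖₊ ∂volume
              ≤ ∑' m, ENNReal.ofReal ((‖c m‖ * r ^ m) * (2*π)) := ENNReal.tsum_le_tsum hb
            _ = ENNReal.ofReal (∑' m, (‖c m‖ * r ^ m) * (2*π)) := by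
                rw [ENNReal.ofReal_tsum_of_nonneg (fun m => by positivity) (hs.mul_right _)]
            _ < ⊤ := ENNReal.ofReal_lt_top
    _ = ∑' m, (c m * (r:ℂ)^m) * (if ((m:ℤ) - n) = 0 then (2*π:ℂ) else 0) := by
        congr 1; funext m
        rw [hg]
        simp only
        rw [MeasureTheory.integral_const_mul, ← intervalIntegral.integral_of_le h2π,
          integral_exp_int ((m:ℤ) - n)]
    _ = if 0 ≤ n then (2*π : ℂ) * (c n.toNat * (r:ℂ)^n.toNat) else 0 := by
        split_ifs with hn
        · rw [tsum_eq_single n.toNat]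
          · rw [if_pos (by omega), mul_comm]
          · intro m hm
            rw [if_neg (by omega), mul_zero]
        · convert tsum_zero with m
          rw [if_neg (by omega), mul_zero]

lemma circle_coeff_bound (c : ℕ → ℂ) (H : ℝ → ℂ) (r : ℝ) (hr : 0 < r)
    (hcont : Continuous H) (hbound : ∀ θ, ‖H θ‖ ≤ 1)
    (hsum : ∀ θ : ℝ, HasSum (fun n => c n * (r * Complex.exp (θ * Complex.I))^n) (H θ))
    (hs : Summable (fun n => ‖c n‖ * r ^ n)) (s : Finset ℕ) :
    ∑ n ∈ s, ‖c n‖^2 * r^(2*n) ≤ 1 := by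
  haveI : Fact (0 < 2*π) := ⟨by positivity⟩
  have hπ : (π:ℂ) ≠ 0 := by exact_mod_cast Real.pi_ne_zero
  set F : AddCircle (2*π) → ℂ := AddCircle.liftIoc (2*π) 0 H with hF
  have hmeasF : Measurable F := by
    have hFe : F = (Set.Ioc 0 (0+2*π)).restrict H ∘ (AddCircle.measurableEquivIoc (2*π) 0) := rfl
    rw [hFe]
    exact (hcont.measurable.comp measurable_subtype_coe).comp
      (AddCircle.measurableEquivIoc _ _).measurable
  have hFb : ∀ x, ‖F x‖ ≤ 1 := by
    intro x
    have : F x = H ((AddCircle.equivIoc (2*π) 0 x : ℝ)) := rfl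
    rw [this]; exact hbound _
  have hmem : MemLp F 2 AddCircle.haarAddCircle :=
    (memLp_top_of_bound hmeasF.aestronglyMeasurable 1
      (Filter.Eventually.of_forall hFb)).mono_exponent le_top
  set f := hmem.toLp F with hf
  have hnf : ‖f‖ ≤ 1 := by
    rw [hf, Lp.norm_toLp _ hmem]
    have h1 := eLpNorm_le_of_ae_bound (μ := AddCircle.haarAddCircle) (p := 2)
      (Filter.Eventually.of_forall hFb)
    have h2 : (AddCircle.haarAddCircle : Measure (AddCircle (2*π))) Set.univ ^ (2:ENNReal).toReal⁻¹
        * ENNReal.ofReal 1 = 1 := by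
      simp
    rw [h2] at h1
    calc (eLpNorm F 2 AddCircle.haarAddCircle).toReal ≤ (1 : ENNReal).toReal :=
          ENNReal.toReal_mono (by simp) h1
      _ = 1 := by simp
  have hfour : ∀ (i : ℤ) (x : ℝ), (fourier (-i) (x : AddCircle (2*π)) : ℂ)
      = Complex.exp ((-i) * x * Complex.I) := by
    intro i x
    rw [fourier_coe_apply]
    congr 1
    push_cast
    field_simp
  have hC : ∀ i : ℤ, fourierCoeff F i = if 0 ≤ i then c i.toNat * (r:ℂ)^i.toNat else 0 := by
    intro i
    rw [fourierCoeff_eq_intervalIntegral F i 0]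
    have h2π : (0:ℝ) ≤ 2*π := by positivity
    have hint : (∫ x in (0:ℝ)..(0+2*π), (fourier (-i) (x : AddCircle (2*π)) : ℂ) • F ↑x)
        = ∫ x in (0:ℝ)..(2*π), Complex.exp ((-i) * x * Complex.I) * H x := by
      rw [zero_add, intervalIntegral.integral_of_le h2π, intervalIntegral.integral_of_le h2π]
      apply setIntegral_congr_fun measurableSet_Ioc
      intro x hx
      show (fourier (-i) (x : AddCircle (2*π)) : ℂ) • F ↑x = Complex.exp ((-i) * x * Complex.I) * H x
      rw [smul_eq_mul, hfour, hF, AddCircle.liftIoc_coe_apply (by simpa using hx)]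
    rw [hint, key_integral c H r hr hcont hsum hs i]
    split_ifs with h
    · rw [Complex.real_smul]
      push_cast
      field_simp
    · simp
  have hae : ∀ i : ℤ, fourierCoeff (⇑f) i = fourierCoeff F i := by
    intro i
    simp only [fourierCoeff]
    apply integral_congr_ae
    filter_upwards [hmem.coeFn_toLp] with x hx
    rw [hx]
  have hbessel : ∀ t : Finset ℤ, ∑ i ∈ t, ‖fourierCoeff (⇑f) i‖^2 ≤ 1 := by
    intro t
    have horto := (@fourierBasis (2*π) _).orthonormal
    have h1 : ∀ i : ℤ, fourierCoeff (⇑f) i = (inner ℂ (fourierBasis i) f : ℂ) := by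
      intro i
      rw [← fourierBasis_repr, fourierBasis.repr_apply_apply]
    calc ∑ i ∈ t, ‖fourierCoeff (⇑f) i‖^2
        = ∑ i ∈ t, ‖(inner ℂ (fourierBasis i) f : ℂ)‖^2 := by simp only [h1]
      _ ≤ ‖f‖^2 := horto.sum_inner_products_le f
      _ ≤ 1 := by nlinarith [norm_nonneg f, hnf]
  -- transfer to the finset s of naturals
  have := hbessel (s.map ⟨(Nat.cast : ℕ → ℤ), Nat.cast_injective⟩)
  rw [Finset.sum_map] at this
  refine le_trans (le_of_eq ?_) this
  apply Finset.sum_congr rfl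
  intro n _
  rw [hae, hC]
  simp only [Function.Embedding.coeFn_mk, if_pos (Int.natCast_nonneg n), Int.toNat_natCast]
  rw [norm_mul, norm_pow, mul_pow, ← pow_mul]
  simp [abs_of_pos hr, mul_comm 2 n]

section PartA
variable (f : ℂ → ℂ) (b : ℕ → ℂ)

-- summability of coefficient tails
lemma partA_summable (hrep : ∀ z ∈ Metric.ball (0 : ℂ) 1, z ≠ 0 →
      HasSum (fun n : ℕ => b n * z ^ n) (z / f z)) {r : ℝ} (hr0 : 0 ≤ r) (hr1 : r < 1) :
    Summable (fun n : ℕ => ‖b n‖ * r^n) ∧ Summable (fun n : ℕ => (n:ℝ) * ‖b n‖ * r^n) := by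
  set t : ℝ := (1 + r)/2 with ht
  have ht0 : 0 < t := by positivity
  have ht1 : t < 1 := by rw [ht]; linarith
  have hrt : r < t := by rw [ht]; linarith
  have hz : ((t:ℂ)) ∈ Metric.ball (0:ℂ) 1 := by
    simp [mem_ball_zero_iff, abs_of_pos ht0, ht1]
  have hzne : ((t:ℂ)) ≠ 0 := by exact_mod_cast ht0.ne'
  have hsumz := (hrep _ hz hzne).summable
  have htend : Filter.Tendsto (fun n => ‖b n‖ * t^n) Filter.atTop (nhds 0) := by
    have := hsumz.tendsto_atTop_zero.norm
    simp only [norm_zero] at this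
    convert this using 2 with n
    rw [norm_mul, norm_pow]
    norm_num [abs_of_pos ht0]
  obtain ⟨C, hC⟩ := htend.bddAbove_range
  have hCn : ∀ n, ‖b n‖ * t^n ≤ C := fun n => hC ⟨n, rfl⟩
  have hC0 : 0 ≤ C := le_trans (by positivity) (hCn 0)
  have hq1 : r/t < 1 := (div_lt_one ht0).mpr hrt
  have hq0 : 0 ≤ r/t := by positivity
  have key : ∀ k : ℕ, Summable (fun n : ℕ => (n:ℝ)^k * ‖b n‖ * r^n) := by
    intro k
    apply Summable.of_nonneg_of_le (g := fun n : ℕ => (n:ℝ)^k * ‖b n‖ * r^n)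
      (f := fun n : ℕ => C * ((n:ℝ)^k * (r/t)^n)) (fun n => by positivity)
    · intro n
      have h1 : ‖b n‖ * r^n ≤ C * (r/t)^n := by
        have h2 : (t^n) * (r/t)^n = r^n := by
          rw [← mul_pow, mul_comm, div_mul_cancel₀ _ ht0.ne']
        have : ‖b n‖ * r ^ n = (‖b n‖ * t^n) * (r/t)^n := by rw [mul_assoc, h2]
        rw [this]
        exact mul_le_mul_of_nonneg_right (hCn n) (by positivity)
      calc (n:ℝ)^k * ‖b n‖ * r^n = (n:ℝ)^k * (‖b n‖ * r^n) := by ring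
        _ ≤ (n:ℝ)^k * (C * (r/t)^n) := by
            exact mul_le_mul_of_nonneg_left h1 (by positivity)
        _ = C * ((n:ℝ)^k * (r/t)^n) := by ring
    · apply Summable.mul_left
      have := summable_pow_mul_geometric_of_norm_lt_one (R := ℝ) k (r := r/t)
        (by rwa [Real.norm_eq_abs, _root_.abs_of_nonneg hq0])
      exact this
  constructor
  · have := key 0; simpa using this
  · have := key 1; simpa using this

end PartA

noncomputable def ccoef (b : ℕ → ℂ) : ℕ → ℂ := fun n => if n = 0 then 0 else (1 - (n:ℂ)) * b n

lemma partA_hasSum (hd : DifferentiableOn ℂ f (Metric.ball 0 1))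
    (hne : ∀ z ∈ Metric.ball (0 : ℂ) 1, z ≠ 0 → f z ≠ 0)
    (hb0 : b 0 = 1)
    (hrep : ∀ z ∈ Metric.ball (0 : ℂ) 1, z ≠ 0 →
      HasSum (fun n : ℕ => b n * z ^ n) (z / f z))
    {z : ℂ} (hz : z ∈ Metric.ball (0:ℂ) 1) (hz0 : z ≠ 0) :
    HasSum (fun n : ℕ => ccoef b n * z ^ n) (deriv f z * (z / f z) ^ 2 - 1) := by
  have hzn : ‖z‖ < 1 := mem_ball_zero_iff.mp hz
  set ρ : ℝ := (1 + ‖z‖)/2 with hρ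
  have hρ0 : 0 < ρ := by positivity
  have hρ1 : ρ < 1 := by rw [hρ]; linarith
  have hzρ : ‖z‖ < ρ := by rw [hρ]; linarith
  have hsumm := (partA_summable f b hrep hρ0.le hρ1).2
  set u : ℕ → ℝ := fun n => ((n:ℝ) * ‖b n‖ * ρ^n) / ρ with hu
  have hus : Summable u := hsumm.div_const ρ
  have hbound : ∀ (n : ℕ), ∀ w ∈ Metric.ball (0:ℂ) ρ, ‖b n * ((n:ℂ) * w^(n-1))‖ ≤ u n := by
    intro n w hw
    have hwρ : ‖w‖ ≤ ρ := (mem_ball_zero_iff.mp hw).le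
    rcases n with _ | m
    · simp [hu]
    · rw [hu]
      simp only
      rw [norm_mul, norm_mul, norm_pow]
      have h1 : ‖((m+1 : ℕ):ℂ)‖ = ((m+1 : ℕ):ℝ) := by
        rw [Complex.norm_natCast]
      have h2 : ‖w‖^(m+1-1) ≤ ρ^m := pow_le_pow_left₀ (norm_nonneg w) hwρ m
      have h3 : ρ^(m+1)/ρ = ρ^m := by
        rw [pow_succ, mul_div_cancel_right₀ _ hρ0.ne']
      rw [show ((m+1:ℕ):ℝ) * ‖b (m+1)‖ * ρ^(m+1) / ρ = ((m+1:ℕ):ℝ) * ‖b (m+1)‖ * (ρ^(m+1)/ρ) from by ring, h3]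
      calc ‖b (m+1)‖ * (‖((m+1:ℕ):ℂ)‖ * ‖w‖^(m+1-1))
          ≤ ‖b (m+1)‖ * (((m+1:ℕ):ℝ) * ρ^m) := by
            apply mul_le_mul_of_nonneg_left _ (norm_nonneg _)
            rw [h1]
            exact mul_le_mul_of_nonneg_left h2 (by positivity)
        _ = ((m+1:ℕ):ℝ) * ‖b (m+1)‖ * ρ^m := by ring
  have hzball : z ∈ Metric.ball (0:ℂ) ρ := mem_ball_zero_iff.mpr hzρ
  have hg : ∀ (n : ℕ), ∀ w ∈ Metric.ball (0:ℂ) ρ,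
      HasDerivAt (fun y => b n * y^n) (b n * ((n:ℂ) * w^(n-1))) w := by
    intro n w _
    exact (hasDerivAt_pow n w).const_mul (b n)
  have hsum0 : Summable (fun n => b n * z^n) := (hrep z hz hz0).summable
  have hG : HasDerivAt (fun y => ∑' n, b n * y^n) (∑' n, b n * ((n:ℂ) * z^(n-1))) z :=
    hasDerivAt_tsum_of_isPreconnected hus isOpen_ball (convex_ball _ _).isPreconnected
      hg hbound hzball hsum0 hzball
  set D : ℂ := ∑' n, b n * ((n:ℂ) * z^(n-1)) with hD
  have hDsum : Summable (fun n => b n * ((n:ℂ) * z^(n-1))) :=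
    Summable.of_norm_bounded hus (fun n => hbound n z hzball)
  -- identify the derivative of w/f w
  have hdf : HasDerivAt f (deriv f z) z :=
    (hd.differentiableAt (isOpen_ball.mem_nhds hz)).hasDerivAt
  have hfz : f z ≠ 0 := hne z hz hz0
  have hquot : HasDerivAt (fun w => w / f w) ((1 * f z - z * deriv f z) / f z ^ 2) z :=
    (hasDerivAt_id z).div hdf hfz
  have hEq : (fun w => w / f w) =ᶠ[nhds z] (fun y => ∑' n, b n * y^n) := by
    have hopen : IsOpen (Metric.ball (0:ℂ) 1 \ {0}) :=
      isOpen_ball.sdiff isClosed_singleton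
    filter_upwards [hopen.mem_nhds ⟨hz, hz0⟩] with w hw
    exact ((hrep w hw.1 hw.2).tsum_eq).symm
  have hq2 : HasDerivAt (fun w => w / f w) D z := hG.congr_of_eventuallyEq hEq
  have hDval : D = (1 * f z - z * deriv f z) / f z ^ 2 := hq2.unique hquot
  -- z * D as a sum
  have hzD : HasSum (fun n : ℕ => (n:ℂ) * b n * z^n) (z * D) := by
    have h := (hDsum.hasSum).mul_left z
    have he : (fun n : ℕ => z * (b n * ((n:ℂ) * z^(n-1)))) = fun n : ℕ => (n:ℂ) * b n * z^n := by
      funext n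
      rcases n with _ | m
      · simp
      · rw [show (m+1) - 1 = m from rfl, pow_succ]
        push_cast
        ring
    rwa [he] at h
  have h1 := hrep z hz hz0
  have h3 : HasSum (fun n : ℕ => if n = 0 then (1:ℂ) else 0) 1 := by
    convert hasSum_ite_eq 0 (1:ℂ) using 2 with n
  have hcomb := (h1.sub hzD).sub h3
  have hterm : (fun n : ℕ => b n * z^n - (n:ℂ) * b n * z^n - if n = 0 then (1:ℂ) else 0)
      = fun n : ℕ => ccoef b n * z^n := by
    funext n
    rcases n with _ | m
    · simp [ccoef, hb0]
    · simp only [ccoef, if_neg (Nat.succ_ne_zero m)]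
      push_cast
      ring
  rw [hterm] at hcomb
  have hval : z / f z - z * D - 1 = deriv f z * (z / f z) ^ 2 - 1 := by
    rw [hDval]
    field_simp
    ring
  rwa [hval] at hcomb

set_option maxHeartbeats 1000000 in
/-- If `f ∈ U` and `z/f(z) = 1 + ∑_{n≥1} b_n zⁿ` on the unit disk, then
`∑_{n≥2} (n-1)² |b_n|² ≤ 1`. -/
theorem stmt11 (f : ℂ → ℂ) (hf : ClassU f) (b : ℕ → ℂ) (hb0 : b 0 = 1)
    (hrep : ∀ z ∈ Metric.ball (0 : ℂ) 1, z ≠ 0 →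
      HasSum (fun n : ℕ => b n * z ^ n) (z / f z)) :
    Summable (fun n : ℕ => ((n + 1 : ℕ) : ℝ) ^ 2 * ‖b (n + 2)‖ ^ 2) ∧
      ∑' n : ℕ, ((n + 1 : ℕ) : ℝ) ^ 2 * ‖b (n + 2)‖ ^ 2 ≤ 1 := by
  obtain ⟨hd, hf0, hf1, hne, hlt⟩ := hf
  set c : ℕ → ℂ := ccoef b with hc
  -- Step 1: coefficient bound on circles of radius r < 1
  have hsq : ∀ (s : Finset ℕ), ∀ r ∈ Set.Ioo (0:ℝ) 1, ∑ n ∈ s, ‖c n‖^2 * r^(2*n) ≤ 1 := by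
    intro s r hr
    obtain ⟨hr0, hr1⟩ := hr
    set Φ : ℂ → ℂ := fun z => deriv f z * (z / f z) ^ 2 - 1 with hΦ
    set w : ℝ → ℂ := fun θ => (r:ℂ) * Complex.exp (θ * Complex.I) with hw
    have hwmem : ∀ θ, w θ ∈ Metric.ball (0:ℂ) 1 \ {0} := by
      intro θ
      have hn : ‖w θ‖ = r := by
        rw [hw]
        simp only [norm_mul, Complex.norm_real, Real.norm_eq_abs,
          Complex.norm_exp_ofReal_mul_I, mul_one, abs_of_pos hr0]
      constructor
      · rw [mem_ball_zero_iff, hn]; exact hr1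
      · simp only [Set.mem_singleton_iff]
        intro h
        rw [h, norm_zero] at hn
        exact hr0.ne' hn.symm
    have hwcont : Continuous w := by
      rw [hw]; continuity
    have hanal : AnalyticOnNhd ℂ f (Metric.ball 0 1) := hd.analyticOnNhd isOpen_ball
    have hdc : ContinuousOn (deriv f) (Metric.ball (0:ℂ) 1) := hanal.deriv.continuousOn
    have hΦcont : ContinuousOn Φ (Metric.ball (0:ℂ) 1 \ {0}) := by
      apply ContinuousOn.sub _ continuousOn_const
      apply ContinuousOn.mul (hdc.mono Set.diff_subset)
      apply ContinuousOn.pow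
      exact ContinuousOn.div continuousOn_id (hd.continuousOn.mono Set.diff_subset)
        (fun z hz => hne z hz.1 hz.2)
    set H : ℝ → ℂ := fun θ => Φ (w θ) with hH
    have hHcont : Continuous H := hΦcont.comp_continuous hwcont hwmem
    have hHbound : ∀ θ, ‖H θ‖ ≤ 1 := fun θ =>
      (hlt (w θ) (hwmem θ).1 (hwmem θ).2).le
    have hHsum : ∀ θ : ℝ, HasSum (fun n : ℕ => c n * ((r:ℂ) * Complex.exp (θ * Complex.I))^n) (H θ) :=
      fun θ => partA_hasSum (f := f) (b := b) hd hne hb0 hrep (hwmem θ).1 (hwmem θ).2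
    have hcle : ∀ n : ℕ, ‖c n‖ ≤ (n:ℝ) * ‖b n‖ := by
      intro n
      rcases n with _ | m
      · simp [hc, ccoef]
      · rw [hc]
        simp only [ccoef, if_neg (Nat.succ_ne_zero m), norm_mul]
        apply mul_le_mul_of_nonneg_right _ (norm_nonneg _)
        rw [show (1 - ((m+1:ℕ):ℂ)) = -(m:ℂ) from by push_cast; ring]
        rw [norm_neg, Complex.norm_natCast]
        exact_mod_cast Nat.le_succ m
    have hcs : Summable (fun n : ℕ => ‖c n‖ * r ^ n) := by
      apply Summable.of_nonneg_of_le (fun n => by positivity)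
        (g := fun n : ℕ => ‖c n‖ * r ^ n) (f := fun n : ℕ => (n:ℝ) * ‖b n‖ * r ^ n)
      · intro n
        exact mul_le_mul_of_nonneg_right (hcle n) (by positivity)
      · exact (partA_summable f b hrep hr0.le hr1).2
    exact circle_coeff_bound c H r hr0 hHcont hHbound hHsum hcs s
  -- Step 2: let r → 1
  have hfin : ∀ s : Finset ℕ, ∑ n ∈ s, ‖c n‖^2 ≤ 1 := by
    intro s
    have hcont : Filter.Tendsto (fun r : ℝ => ∑ n ∈ s, ‖c n‖^2 * r^(2*n))
        (nhdsWithin 1 (Set.Iio 1)) (nhds (∑ n ∈ s, ‖c n‖^2)) := by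
      have h1 : Continuous (fun r : ℝ => ∑ n ∈ s, ‖c n‖^2 * r^(2*n)) := by
        apply continuous_finset_sum
        intro n _
        exact continuous_const.mul (continuous_pow (2*n))
      have h2 := (h1.tendsto 1).mono_left (nhdsWithin_le_nhds (s := Set.Iio 1))
      simpa using h2
    apply le_of_tendsto hcont
    filter_upwards [Ioo_mem_nhdsLT_of_mem (show (1:ℝ) ∈ Set.Ioc 0 1 from ⟨zero_lt_one, le_refl 1⟩)]
      with r hr
    exact hsq s r hr
  have hsummc : Summable (fun n : ℕ => ‖c n‖^2) :=
    summable_of_sum_le (fun n => sq_nonneg _) hfin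
  have htsumc : ∑' n : ℕ, ‖c n‖^2 ≤ 1 := Summable.tsum_le_of_sum_le hsummc hfin
  have heq : ∀ n : ℕ, ((n + 1 : ℕ) : ℝ) ^ 2 * ‖b (n + 2)‖ ^ 2 = ‖c (n+2)‖^2 := by
    intro n
    rw [hc]
    simp only [ccoef, if_neg (Nat.succ_ne_zero (n+1)), norm_mul, mul_pow]
    rw [show (1 - ((n+2:ℕ):ℂ)) = -((n+1:ℕ):ℂ) from by push_cast; ring]
    rw [norm_neg, Complex.norm_natCast]
  have hsum2 : Summable (fun n : ℕ => ‖c (n+2)‖^2) := (summable_nat_add_iff 2).mpr hsummc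
  constructor
  · apply hsum2.congr
    intro n
    exact (heq n).symm
  · calc ∑' n : ℕ, ((n + 1 : ℕ) : ℝ) ^ 2 * ‖b (n + 2)‖ ^ 2
        = ∑' n : ℕ, ‖c (n+2)‖^2 := tsum_congr heq
      _ ≤ ∑' n : ℕ, ‖c n‖^2 := by
          have h0 := Summable.sum_add_tsum_nat_add (f := fun n : ℕ => ‖c n‖^2) 2 hsummc
          rw [← h0]
          have : ∑ i ∈ Finset.range 2, ‖c i‖^2 = 0 := by
            rw [hc]
            simp [Finset.sum_range_succ, ccoef]
          rw [this, zero_add]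
      _ ≤ 1 := htsumc
end

section
/- Let f belong to the class U, and write z/f(z) = 1 + \sum_{n=1}^{\infty} b_n z^n on the unit disk D. Then |z/f(z) - 1 - b_1 z| \le |z|^2 for all z \in D; that is, |(z/f(z)) - 1 + (f''(0)/2) z| \le |z|^2 on D (since b_1 = -f''(0)/2). -/
open Metric Complex Set Filter
open scoped ENNReal NNReal

private lemma analyticAt_dslope_zero {F : ℂ → ℂ} {w : ℂ} (h : AnalyticAt ℂ F w)
    (h0 : AnalyticAt ℂ F 0) : AnalyticAt ℂ (dslope F 0) w := by
  rcases eq_or_ne w 0 with rfl | hw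
  · obtain ⟨p, hp⟩ := h0
    exact ⟨p.fslope, hp.has_fpower_series_dslope_fslope⟩
  · have h1 : AnalyticAt ℂ (fun z : ℂ => (z - 0)⁻¹ • (F z - F 0)) w := by
      apply AnalyticAt.fun_smul
      · exact (analyticAt_id.sub analyticAt_const).inv (by simpa using hw)
      · exact h.sub analyticAt_const
    refine h1.congr ?_
    filter_upwards [isOpen_compl_singleton.mem_nhds hw] with z hz
    rw [dslope_of_ne _ hz, slope_def_module]

/-- If `f ∈ U` and `z/f(z) = 1 + ∑_{n≥1} b_n zⁿ` on the unit disk, then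
`|z/f(z) - 1 - b₁ z| ≤ |z|²` there; moreover `b₁ = -f''(0)/2`. -/
theorem stmt16 (f : ℂ → ℂ) (hf : ClassU f) (b : ℕ → ℂ) (hb0 : b 0 = 1)
    (hrep : ∀ z ∈ Metric.ball (0 : ℂ) 1, z ≠ 0 →
      HasSum (fun n : ℕ => b n * z ^ n) (z / f z)) :
    (∀ z ∈ Metric.ball (0 : ℂ) 1, z ≠ 0 →
      ‖z / f z - 1 - b 1 * z‖ ≤ ‖z‖ ^ 2) ∧
    b 1 = -(iteratedDeriv 2 f 0) / 2 := by
  obtain ⟨hd, hf0, hf1, hne, hwlt⟩ := hf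
  set B : Set ℂ := Metric.ball (0:ℂ) 1 with hB
  have hBo : IsOpen B := isOpen_ball
  have h0B : (0:ℂ) ∈ B := by simp [hB]
  have hfa : AnalyticOnNhd ℂ f B := hd.analyticOnNhd hBo
  -- the function u(z) = f(z)/z, u(0) = 1
  set u : ℂ → ℂ := dslope f 0 with hu
  have hu0 : u 0 = 1 := by rw [hu, dslope_same, hf1]
  have huz : ∀ z : ℂ, z ≠ 0 → u z = f z / z := by
    intro z hz
    rw [hu, dslope_of_ne _ hz, slope_def_field, hf0, sub_zero, sub_zero]
  have hua : AnalyticOnNhd ℂ u B := fun w hw => analyticAt_dslope_zero (hfa w hw) (hfa 0 h0B)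
  have hune : ∀ z ∈ B, u z ≠ 0 := by
    intro z hzB
    rcases eq_or_ne z 0 with rfl | hz
    · rw [hu0]; exact one_ne_zero
    · rw [huz z hz]; exact div_ne_zero (hne z hzB hz) hz
  -- the function g(z) = z / f(z) extended by g(0) = 1
  set g : ℂ → ℂ := fun z => (u z)⁻¹ with hg
  have hga : AnalyticOnNhd ℂ g B := fun w hw => (hua w hw).inv (hune w hw)
  have hg0 : g 0 = 1 := by rw [hg]; simp [hu0]
  have hgz : ∀ z ∈ B, z ≠ 0 → g z = z / f z := by
    intro z hzB hz
    rw [hg]; simp only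
    rw [huz z hz, inv_div]
  have hud : ∀ z ∈ B, z ≠ 0 → deriv u z = (deriv f z * z - f z) / z ^ 2 := by
    intro z hzB hz
    have hev : u =ᶠ[nhds z] fun w => f w / w := by
      filter_upwards [isOpen_compl_singleton.mem_nhds hz] with w hw
      exact huz w hw
    rw [hev.deriv_eq, deriv_fun_div ((hfa z hzB).differentiableAt) differentiableAt_fun_id hz]
    simp
  have hgd : ∀ z ∈ B, deriv g z = -deriv u z / u z ^ 2 := by
    intro z hzB
    rw [hg]
    exact deriv_inv'' ((hua z hzB).differentiableAt) (hune z hzB)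
  -- the function W(z) = g(z) - z g'(z) - 1 = f'(z)(z/f(z))² - 1
  set W : ℂ → ℂ := fun z => g z - z * deriv g z - 1 with hW
  have hdga : AnalyticOnNhd ℂ (deriv g) B := hga.deriv
  have hWa : AnalyticOnNhd ℂ W B := fun z hz =>
    ((hga z hz).sub (analyticAt_id.mul (hdga z hz))).sub analyticAt_const
  have hW0 : W 0 = 0 := by rw [hW]; simp [hg0]
  have hWf : ∀ z ∈ B, z ≠ 0 → W z = deriv f z * (z / f z) ^ 2 - 1 := by
    intro z hzB hz
    have hfz := hne z hzB hz
    rw [hW]; simp only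
    rw [hgd z hzB, hud z hzB hz, hgz z hzB hz, huz z hz]
    field_simp
    ring
  have hWlt : ∀ z ∈ B, ‖W z‖ < 1 := by
    intro z hzB
    rcases eq_or_ne z 0 with rfl | hz
    · rw [hW0]; norm_num
    · rw [hWf z hzB hz]; exact hwlt z hzB hz
  have hdW0 : deriv W 0 = 0 := by
    have h1 : HasDerivAt g (deriv g 0) 0 := (hga 0 h0B).differentiableAt.hasDerivAt
    have h2 : HasDerivAt (deriv g) (deriv (deriv g) 0) 0 := (hdga 0 h0B).differentiableAt.hasDerivAt
    have h3 : HasDerivAt W (deriv g 0 - (1 * deriv g 0 + 0 * deriv (deriv g) 0) - 0) 0 :=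
      (h1.sub ((hasDerivAt_id 0).mul h2)).sub (hasDerivAt_const 0 1)
    have := h3.deriv
    rw [this]; ring
  -- W(z) = z² V₂(z) with V₂ analytic
  set W1 : ℂ → ℂ := dslope W 0 with hW1def
  set V2 : ℂ → ℂ := dslope W1 0 with hV2def
  have hW1a : AnalyticOnNhd ℂ W1 B := fun w hw => analyticAt_dslope_zero (hWa w hw) (hWa 0 h0B)
  have hV2a : AnalyticOnNhd ℂ V2 B := fun w hw => analyticAt_dslope_zero (hW1a w hw) (hW1a 0 h0B)
  have hW10 : W1 0 = 0 := by rw [hW1def, dslope_same, hdW0]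
  have hWV2 : ∀ z : ℂ, z ≠ 0 → W z = z ^ 2 * V2 z := by
    intro z hz
    have e1 : W1 z = (W z - W 0) / (z - 0) := by rw [hW1def, dslope_of_ne _ hz, slope_def_field]
    have e2 : V2 z = (W1 z - W1 0) / (z - 0) := by rw [hV2def, dslope_of_ne _ hz, slope_def_field]
    rw [e2, e1, hW0, hW10]
    field_simp
    ring
  -- Schwarz-type bound ‖V₂‖ ≤ 1, via the maximum principle
  have hV2le : ∀ z ∈ B, ‖V2 z‖ ≤ 1 := by
    intro z hzB
    have hz1 : ‖z‖ < 1 := mem_ball_zero_iff.mp hzB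
    have key : ∀ r : ℝ, r ∈ Ioo ‖z‖ 1 → ‖V2 z‖ ≤ 1 / r ^ 2 := by
      intro r hr
      have hr0 : 0 < r := lt_of_le_of_lt (norm_nonneg z) hr.1
      have hsub : closedBall (0:ℂ) r ⊆ B := closedBall_subset_ball hr.2
      refine Complex.norm_le_of_forall_mem_frontier_norm_le (U := ball (0:ℂ) r) isBounded_ball ?_ ?_ ?_
      · refine ⟨(hV2a.mono (ball_subset_closedBall.trans hsub)).differentiableOn, ?_⟩
        rw [closure_ball _ hr0.ne']
        exact (hV2a.mono hsub).continuousOn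
      · intro ζ hζ
        rw [frontier_ball _ hr0.ne'] at hζ
        have hζr : ‖ζ‖ = r := by simpa [mem_sphere_iff_norm] using hζ
        have hζB : ζ ∈ B := by rw [mem_ball_zero_iff, hζr]; exact hr.2
        have hζ0 : ζ ≠ 0 := by
          intro h
          rw [h, norm_zero] at hζr
          exact hr0.ne hζr
        have hVW : V2 ζ = W ζ / ζ ^ 2 := by
          rw [hWV2 ζ hζ0]; field_simp
        rw [hVW, norm_div, norm_pow, hζr]
        exact div_le_div_of_nonneg_right (hWlt ζ hζB).le (by positivity)
      · exact subset_closure (by rw [mem_ball_zero_iff]; exact hr.1)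
    have hlim : Tendsto (fun r : ℝ => 1 / r ^ 2) (nhdsWithin 1 (Iio 1)) (nhds 1) := by
      have h1 : ContinuousAt (fun r : ℝ => 1 / r ^ 2) 1 :=
        ContinuousAt.div continuousAt_const ((continuous_pow 2).continuousAt) (by norm_num)
      have h2 : Tendsto (fun r : ℝ => 1 / r ^ 2) (nhdsWithin 1 (Iio 1)) (nhds (1 / 1 ^ 2)) :=
        h1.tendsto.mono_left (nhdsWithin_le_nhds (s := Iio 1))
      simpa using h2
    refine ge_of_tendsto hlim ?_
    filter_upwards [Ioo_mem_nhdsLT_of_mem (⟨hz1, le_refl (1:ℝ)⟩ : (1:ℝ) ∈ Ioc ‖z‖ 1)] with r hr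
    exact key r hr
  -- g has power series with coefficients b
  set p : FormalMultilinearSeries ℂ ℂ ℂ := FormalMultilinearSeries.ofScalars ℂ b with hpdef
  have hhalfB : (1/2 : ℂ) ∈ B := by rw [mem_ball_zero_iff]; norm_num
  have hsum2 : Summable fun n => b n * (1/2 : ℂ) ^ n :=
    (hrep _ hhalfB (by norm_num)).summable
  have hrad : (1/2 : ℝ≥0∞) ≤ p.radius := by
    have hs : Summable fun n => ‖p n‖ * ((1/2 : ℝ≥0) : ℝ) ^ n := by
      have h1 : Summable fun n => ‖b n * (1/2:ℂ) ^ n‖ := summable_norm_iff.mpr hsum2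
      simp only [norm_mul, norm_pow] at h1
      convert h1 using 2 with n
      rw [hpdef, FormalMultilinearSeries.ofScalars_norm,
        show ((1:ℂ)/2) = (((1:ℝ)/2 : ℝ) : ℂ) by norm_num, Complex.norm_real,
        Real.norm_eq_abs]
      push_cast
      rw [_root_.abs_of_nonneg (by norm_num : (0:ℝ) ≤ 1/2)]
    have h2 := p.le_radius_of_summable hs
    have h3 : ((1/2 : ℝ≥0) : ℝ≥0∞) = (1/2 : ℝ≥0∞) := by
      simp [ENNReal.coe_div]
    rw [h3] at h2
    exact h2
  have hgp : HasFPowerSeriesOnBall g p 0 (1/2) := by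
    refine ⟨hrad, by norm_num, ?_⟩
    intro y hy
    have hy2 : ‖y‖ < 1/2 := by
      have h := mem_emetric_ball_zero_iff.mp hy
      have h3 : ((1/2 : ℝ≥0) : ℝ≥0∞) = (1/2 : ℝ≥0∞) := by
        simp [ENNReal.coe_div]
      rw [← h3, enorm_eq_nnnorm, ENNReal.coe_lt_coe] at h
      have := NNReal.coe_lt_coe.mpr h
      simpa using this
    have hyB : y ∈ B := by rw [mem_ball_zero_iff]; linarith
    have happ : (fun n => p n fun _ => y) = fun n => b n * y ^ n := by
      funext n
      rw [hpdef, FormalMultilinearSeries.ofScalars_apply_eq, smul_eq_mul]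
    rw [happ, zero_add]
    rcases eq_or_ne y 0 with rfl | hy0
    · rw [hg0]
      have : HasSum (fun n : ℕ => b n * (0:ℂ) ^ n) (b 0 * (0:ℂ) ^ 0) := by
        apply hasSum_single
        intro n hn
        simp [zero_pow hn]
      simpa [hb0] using this
    · rw [hgz y hyB hy0]
      exact hrep y hyB hy0
  have hcoeff : ∀ n, p.coeff n = b n := by
    intro n
    have h1 : p.coeff n = p n (fun _ => 1) := rfl
    rw [h1, hpdef, FormalMultilinearSeries.ofScalars_apply_eq]
    simp
  have hb1 : b 1 = deriv g 0 := by
    have h := HasFPowerSeriesAt.deriv ⟨1/2, hgp⟩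
    rw [h]
    exact (hcoeff 1).symm
  -- value of b₁ in terms of f''(0)
  obtain ⟨pf, hpfat⟩ := hfa 0 h0B
  have hdu0 : deriv u 0 = pf.coeff 2 := by
    have h := hpfat.has_fpower_series_dslope_fslope
    rw [hu, h.deriv]
    exact FormalMultilinearSeries.coeff_fslope
  have hg'0 : deriv g 0 = -pf.coeff 2 := by
    rw [hgd 0 h0B, hdu0, hu0]; simp
  have hiter : iteratedDeriv 2 f 0 = 2 * pf.coeff 2 := by
    obtain ⟨rf, hpf⟩ := hpfat
    have h2 := hpf.factorial_smul (1:ℂ) 2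
    rw [iteratedDeriv_eq_iteratedFDeriv, ← h2]
    show Nat.factorial 2 • pf.coeff 2 = 2 * pf.coeff 2
    rw [show Nat.factorial 2 = 2 from rfl, nsmul_eq_mul]
    norm_num
  have hb1val : b 1 = -(iteratedDeriv 2 f 0) / 2 := by
    rw [hb1, hg'0, hiter]; ring
  -- H(z) = g(z) - 1 - b₁ z = z² K(z)
  set H : ℂ → ℂ := fun z => g z - 1 - b 1 * z with hH
  have hHa : AnalyticOnNhd ℂ H B := fun w hw =>
    ((hga w hw).sub analyticAt_const).sub (analyticAt_const.mul analyticAt_id)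
  have hH0 : H 0 = 0 := by rw [hH]; simp [hg0]
  have hHd : ∀ z ∈ B, deriv H z = deriv g z - b 1 := by
    intro z hzB
    have h1 : HasDerivAt g (deriv g z) z := (hga z hzB).differentiableAt.hasDerivAt
    have h3 : HasDerivAt H (deriv g z - 0 - b 1 * 1) z :=
      (h1.sub (hasDerivAt_const z 1)).sub ((hasDerivAt_id z).const_mul (b 1))
    rw [h3.deriv]; ring
  have hdH0 : deriv H 0 = 0 := by rw [hHd 0 h0B, ← hb1]; ring
  set H1 : ℂ → ℂ := dslope H 0 with hH1def
  set K : ℂ → ℂ := dslope H1 0 with hKdef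
  have hH1a : AnalyticOnNhd ℂ H1 B := fun w hw => analyticAt_dslope_zero (hHa w hw) (hHa 0 h0B)
  have hKa : AnalyticOnNhd ℂ K B := fun w hw => analyticAt_dslope_zero (hH1a w hw) (hH1a 0 h0B)
  have hH10 : H1 0 = 0 := by rw [hH1def, dslope_same, hdH0]
  have hHK : ∀ z : ℂ, z ≠ 0 → H z = z ^ 2 * K z := by
    intro z hz
    have e1 : H1 z = (H z - H 0) / (z - 0) := by rw [hH1def, dslope_of_ne _ hz, slope_def_field]
    have e2 : K z = (H1 z - H1 0) / (z - 0) := by rw [hKdef, dslope_of_ne _ hz, slope_def_field]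
    rw [e2, e1, hH0, hH10]
    field_simp
    ring
  have hWH : ∀ z ∈ B, W z = H z - z * deriv H z := by
    intro z hzB
    rw [hW, hH]; simp only
    rw [hHd z hzB]; ring
  -- the key differential identity K + z K' = -V₂ on B
  have hKd : ∀ z ∈ B, z ≠ 0 → K z + z * deriv K z = -V2 z := by
    intro z hzB hz
    have hKev : K =ᶠ[nhds z] fun w => H w / w ^ 2 := by
      filter_upwards [isOpen_compl_singleton.mem_nhds hz] with w hw
      have hw' : (w : ℂ) ≠ 0 := hw
      rw [hHK w hw', mul_comm, mul_div_assoc, div_self (pow_ne_zero 2 hw'), mul_one]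
    have hdK : deriv K z = (deriv H z * z ^ 2 - H z * (2 * z)) / (z ^ 2) ^ 2 := by
      rw [hKev.deriv_eq, deriv_fun_div ((hHa z hzB).differentiableAt) (differentiableAt_pow 2)
        (pow_ne_zero 2 hz)]
      simp
    have hKz : K z = H z / z ^ 2 := by rw [hHK z hz]; field_simp
    have hV2z : V2 z = W z / z ^ 2 := by rw [hWV2 z hz]; field_simp
    rw [hdK, hKz, hV2z, hWH z hzB]
    field_simp
    ring
  have hKid : ∀ z ∈ B, K z + z * deriv K z = -V2 z := by
    have hK0 : K 0 + 0 * deriv K 0 = -V2 0 := by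
      set Θ : ℂ → ℂ := fun w => K w + w * deriv K w + V2 w with hΘ
      have hΘc : ContinuousAt Θ 0 :=
        (((hKa 0 h0B).add (analyticAt_id.mul (hKa.deriv 0 h0B))).add (hV2a 0 h0B)).continuousAt
      have h1 : Tendsto Θ (nhdsWithin 0 {(0:ℂ)}ᶜ) (nhds (Θ 0)) := hΘc.continuousWithinAt
      have h2 : Tendsto Θ (nhdsWithin 0 {(0:ℂ)}ᶜ) (nhds 0) := by
        have hev : Θ =ᶠ[nhdsWithin 0 {(0:ℂ)}ᶜ] fun _ => 0 := by
          have hBmem : B ∈ nhdsWithin (0:ℂ) {(0:ℂ)}ᶜ :=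
            nhdsWithin_le_nhds (hBo.mem_nhds h0B)
          filter_upwards [hBmem, self_mem_nhdsWithin] with w hwB hw0
          have hiden := hKd w hwB hw0
          rw [hΘ]; simp only
          rw [hiden]; ring
        exact (tendsto_congr' hev).mpr tendsto_const_nhds
      have h3 : Θ 0 = 0 := tendsto_nhds_unique h1 h2
      rw [hΘ] at h3; simp only at h3
      linear_combination h3
    intro z hzB
    rcases eq_or_ne z 0 with rfl | hz
    · exact hK0
    · exact hKd z hzB hz
  -- final estimate via integration along a segment
  have main : ∀ z ∈ B, z ≠ 0 → ‖z / f z - 1 - b 1 * z‖ ≤ ‖z‖ ^ 2 := by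
    intro z hzB hz
    have hz1 : ‖z‖ < 1 := mem_ball_zero_iff.mp hzB
    have htzB : ∀ t : ℝ, t ∈ Icc (0:ℝ) 1 → ((t:ℂ) * z) ∈ B := by
      intro t ht
      rw [mem_ball_zero_iff, norm_mul]
      have h1 : ‖(t:ℂ)‖ ≤ 1 := by
        rw [Complex.norm_real, Real.norm_eq_abs, _root_.abs_of_nonneg ht.1]
        exact ht.2
      calc ‖(t:ℂ)‖ * ‖z‖ ≤ 1 * ‖z‖ :=
            mul_le_mul_of_nonneg_right h1 (norm_nonneg z)
        _ = ‖z‖ := one_mul _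
        _ < 1 := hz1
    have hderiv : ∀ t ∈ uIcc (0:ℝ) 1,
        HasDerivAt (fun s : ℝ => (s:ℂ) * z * K ((s:ℂ) * z)) (-V2 ((t:ℂ) * z) * z) t := by
      intro t ht
      rw [uIcc_of_le (by norm_num : (0:ℝ) ≤ 1)] at ht
      have hmemB := htzB t ht
      have hK' : HasDerivAt K (deriv K ((t:ℂ) * z)) ((t:ℂ) * z) :=
        (hKa _ hmemB).differentiableAt.hasDerivAt
      have hΦ : HasDerivAt (fun w : ℂ => w * K w)
          (1 * K ((t:ℂ) * z) + (t:ℂ) * z * deriv K ((t:ℂ) * z)) ((t:ℂ) * z) :=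
        (hasDerivAt_id _).mul hK'
      have hlin : HasDerivAt (fun w : ℂ => w * z) z (t:ℂ) := by
        simpa using (hasDerivAt_id ((t:ℂ))).mul_const z
      have he := (hΦ.comp (t:ℂ) hlin).comp_ofReal
      have hgoal : (1 * K ((t:ℂ) * z) + (t:ℂ) * z * deriv K ((t:ℂ) * z)) * z
          = -V2 ((t:ℂ) * z) * z := by
        have hid := hKid ((t:ℂ) * z) hmemB
        linear_combination z * hid
      rw [hgoal] at he
      exact he
    have hcont : ContinuousOn (fun t : ℝ => -V2 ((t:ℂ) * z) * z) (uIcc (0:ℝ) 1) := by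
      rw [uIcc_of_le (by norm_num : (0:ℝ) ≤ 1)]
      refine ContinuousOn.mul ?_ continuousOn_const
      refine ContinuousOn.neg ?_
      refine (hV2a.continuousOn (s := B)).comp ?_ ?_
      · exact (Continuous.mul (Complex.continuous_ofReal) continuous_const).continuousOn
      · intro t ht
        exact htzB t ht
    have hintg : IntervalIntegrable (fun t : ℝ => -V2 ((t:ℂ) * z) * z)
        MeasureTheory.volume 0 1 := hcont.intervalIntegrable
    have hFTC := intervalIntegral.integral_eq_sub_of_hasDerivAt hderiv hintg
    have hval : (∫ t in (0:ℝ)..1, -V2 ((t:ℂ) * z) * z) = z * K z := by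
      rw [hFTC]
      simp
    have hbound : ‖∫ t in (0:ℝ)..1, -V2 ((t:ℂ) * z) * z‖ ≤ ‖z‖ * |1 - 0| := by
      apply intervalIntegral.norm_integral_le_of_norm_le_const
      intro t ht
      rw [uIoc_of_le (by norm_num : (0:ℝ) ≤ 1)] at ht
      have hmemB := htzB t ⟨le_of_lt ht.1, ht.2⟩
      rw [norm_mul, norm_neg]
      calc ‖V2 ((t:ℂ) * z)‖ * ‖z‖ ≤ 1 * ‖z‖ :=
            mul_le_mul_of_nonneg_right (hV2le _ hmemB) (norm_nonneg z)
        _ = ‖z‖ := one_mul _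
    have hKz1 : ‖K z‖ ≤ 1 := by
      rw [hval] at hbound
      rw [norm_mul] at hbound
      have hzpos : 0 < ‖z‖ := norm_pos_iff.mpr hz
      have : ‖z‖ * ‖K z‖ ≤ ‖z‖ * 1 := by simpa using hbound
      exact le_of_mul_le_mul_left this hzpos
    have hHz : z / f z - 1 - b 1 * z = z ^ 2 * K z := by
      rw [← hgz z hzB hz, ← hHK z hz, hH]
    rw [hHz, norm_mul, norm_pow]
    calc ‖z‖ ^ 2 * ‖K z‖ ≤ ‖z‖ ^ 2 * 1 :=
          mul_le_mul_of_nonneg_left hKz1 (by positivity)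
      _ = ‖z‖ ^ 2 := mul_one _
  exact ⟨main, hb1val⟩
end

section
/- Let f belong to the class U and suppose f''(0) = 0. Then Re( f(z)/z ) > 1/2 for all z in the unit disk D with z \ne 0 (equivalently, for all z \in D with the convention f(z)/z = 1 at z = 0). -/
open Metric Set Complex Filter Topology

lemma schwarz_two {ω : ℂ → ℂ} (hd : DifferentiableOn ℂ ω (ball 0 1))
    (h0 : ω 0 = 0) (h1 : deriv ω 0 = 0) (hb : ∀ z ∈ ball (0:ℂ) 1, ‖ω z‖ < 1)
    {z : ℂ} (hz : z ∈ ball (0:ℂ) 1) : ‖ω z‖ ≤ ‖z‖ ^ 2 := by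
  have hmem : ball (0:ℂ) 1 ∈ 𝓝 (0:ℂ) := isOpen_ball.mem_nhds (by simp)
  set ω₁ := dslope ω 0 with hω₁
  have hd₁ : DifferentiableOn ℂ ω₁ (ball 0 1) :=
    (differentiableOn_dslope hmem).mpr hd
  have hb₁ : ∀ w ∈ ball (0:ℂ) 1, ‖ω₁ w‖ ≤ 1 := by
    intro w hw
    have hmaps : MapsTo ω (ball 0 1) (ball (ω 0) 1) := by
      intro x hx; rw [h0, mem_ball_zero_iff]; exact hb x hx
    simpa using Complex.norm_dslope_le_div_of_mapsTo_ball hd (hmaps.mono_right ball_subset_closedBall) hw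
  have hω₁0 : ω₁ 0 = 0 := by rw [hω₁, dslope_same]; exact h1
  set ω₂ := dslope ω₁ 0 with hω₂
  have hb₂ : ‖ω₂ z‖ ≤ 1 := by
    have key : ∀ r : ℝ, ‖z‖ < r → r < 1 → ‖ω₂ z‖ ≤ (2 - r) / r := by
      intro r hzr hr1
      have hd₁r : DifferentiableOn ℂ ω₁ (ball 0 r) :=
        hd₁.mono (ball_subset_ball hr1.le)
      have hmaps : MapsTo ω₁ (ball 0 r) (ball (ω₁ 0) (2 - r)) := by
        intro x hx
        rw [hω₁0, mem_ball_zero_iff]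
        calc ‖ω₁ x‖ ≤ 1 := hb₁ x (ball_subset_ball hr1.le hx)
          _ < 2 - r := by linarith
      exact Complex.norm_dslope_le_div_of_mapsTo_ball hd₁r (hmaps.mono_right ball_subset_closedBall) (mem_ball_zero_iff.2 hzr)
    have hzlt : ‖z‖ < 1 := mem_ball_zero_iff.mp hz
    have htend : Tendsto (fun r : ℝ => (2 - r) / r) (𝓝[<] (1:ℝ)) (𝓝 1) := by
      have : Tendsto (fun r : ℝ => (2 - r) / r) (𝓝 (1:ℝ)) (𝓝 ((2 - 1) / 1)) := by
        apply Tendsto.div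
        · exact (tendsto_const_nhds.sub tendsto_id)
        · exact tendsto_id
        · norm_num
      have h2 : ((2:ℝ) - 1) / 1 = 1 := by norm_num
      rw [h2] at this
      exact this.mono_left nhdsWithin_le_nhds
    refine ge_of_tendsto htend ?_
    filter_upwards [Ioo_mem_nhdsLT_of_mem (by constructor <;> [exact hzlt; rfl] :
      (1:ℝ) ∈ Set.Ioc ‖z‖ 1)] with r hr
    exact key r hr.1 hr.2
  rcases eq_or_ne z 0 with rfl | hzne
  · simp [h0]
  · have e1 : ω₁ z = ω z / z := by
      rw [hω₁, dslope_of_ne _ hzne, slope_def_field, h0]; simp [div_eq_mul_inv]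
    have e2 : ω₂ z = ω₁ z / z := by
      rw [hω₂, dslope_of_ne _ hzne, slope_def_field, hω₁0]; simp [div_eq_mul_inv]
    have : ‖ω z‖ = ‖z‖ ^ 2 * ‖ω₂ z‖ := by
      rw [e2, e1]
      have hz' : ‖z‖ ≠ 0 := by simpa using hzne
      have hz' : ‖z‖ ≠ 0 := by simpa using hzne
      rw [norm_div, norm_div]
      field_simp
    rw [this]
    calc ‖z‖ ^ 2 * ‖ω₂ z‖ ≤ ‖z‖ ^ 2 * 1 := by
          apply mul_le_mul_of_nonneg_left hb₂ (by positivity)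
      _ = ‖z‖ ^ 2 := by ring

lemma re_gt_half {w : ℂ} (hw : w ≠ 0) (h : ‖w⁻¹ - 1‖ < 1) : 1 / 2 < w.re := by
  have h1 : ‖1 - w‖ < ‖w‖ := by
    have : w⁻¹ - 1 = (1 - w) / w := by field_simp
    rw [this, norm_div] at h
    have hw' : 0 < ‖w‖ := norm_pos_iff.mpr hw
    calc ‖1 - w‖ = ‖1 - w‖ / ‖w‖ * ‖w‖ := by rw [div_mul_cancel₀ _ (ne_of_gt hw')]
      _ < 1 * ‖w‖ := by exact mul_lt_mul_of_pos_right h hw'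
      _ = ‖w‖ := one_mul _
  have h2 : Complex.normSq (1 - w) < Complex.normSq w := by
    rw [← Complex.sq_norm, ← Complex.sq_norm]
    exact pow_lt_pow_left₀ h1 (norm_nonneg _) two_ne_zero
  simp only [Complex.normSq_apply, Complex.sub_re, Complex.sub_im, Complex.one_re,
    Complex.one_im] at h2
  nlinarith


/-- If `f ∈ U` and `f''(0) = 0`, then `Re(f(z)/z) > 1/2` on the unit disk. -/
theorem stmt18 (f : ℂ → ℂ) (hf : ClassU f) (hf2 : iteratedDeriv 2 f 0 = 0) :
    ∀ z ∈ Metric.ball (0 : ℂ) 1, z ≠ 0 → 1 / 2 < (f z / z).re := by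
  obtain ⟨hdf, hf0, hf1, hfne, hfb⟩ := hf
  have h0B : (0:ℂ) ∈ ball (0:ℂ) 1 := by simp
  have hmem : ball (0:ℂ) 1 ∈ 𝓝 (0:ℂ) := isOpen_ball.mem_nhds h0B
  set q : ℂ → ℂ := dslope f 0 with hqdef
  have hq : DifferentiableOn ℂ q (ball 0 1) := (differentiableOn_dslope hmem).mpr hdf
  have hq0 : q 0 = 1 := by rw [hqdef, dslope_same]; exact hf1
  have hqz : ∀ z : ℂ, z ≠ 0 → q z = f z / z := by
    intro z hz
    rw [hqdef, dslope_of_ne _ hz, slope_def_field, hf0, sub_zero, sub_zero]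
  have hfq : ∀ z : ℂ, f z = z * q z := by
    intro z
    rcases eq_or_ne z 0 with rfl | hz
    · simp [hf0]
    · rw [hqz z hz]; field_simp
  have hqne : ∀ z ∈ ball (0:ℂ) 1, q z ≠ 0 := by
    intro z hz
    rcases eq_or_ne z 0 with rfl | hzne
    · rw [hq0]; exact one_ne_zero
    · rw [hqz z hzne]; exact div_ne_zero (hfne z hz hzne) hzne
  have hqa : ∀ z ∈ ball (0:ℂ) 1, DifferentiableAt ℂ q z := fun z hz =>
    hq.differentiableAt (isOpen_ball.mem_nhds hz)
  have hqa' : AnalyticOnNhd ℂ q (ball 0 1) := fun z hz =>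
    hq.analyticAt (isOpen_ball.mem_nhds hz)
  -- derivative of f on the ball
  have hderivf : ∀ z ∈ ball (0:ℂ) 1, deriv f z = q z + z * deriv q z := by
    intro z hz
    have hev : f =ᶠ[𝓝 z] (fun w => w * q w) := by
      filter_upwards with w using hfq w
    have hprod : HasDerivAt (fun w => w * q w) (1 * q z + z * deriv q z) z :=
      (hasDerivAt_id z).mul (hqa z hz).hasDerivAt
    rw [(hprod.congr_of_eventuallyEq hev).deriv]; ring
  -- second derivative gives deriv q 0 = 0
  have hdq0 : deriv q 0 = 0 := by
    have hev : deriv f =ᶠ[𝓝 0] (fun z => q z + z * deriv q z) := by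
      filter_upwards [hmem] with w hw using hderivf w hw
    have hd2 : HasDerivAt (fun z => q z + z * deriv q z)
        (deriv q 0 + (1 * deriv q 0 + 0 * deriv (deriv q) 0)) 0 :=
      (hqa 0 h0B).hasDerivAt.add
        ((hasDerivAt_id 0).mul ((hqa'.deriv 0 h0B).differentiableAt.hasDerivAt))
    have h2 : iteratedDeriv 2 f 0 = deriv (deriv f) 0 := by
      simp [iteratedDeriv_succ, iteratedDeriv_zero]
    rw [h2, hev.deriv_eq, hd2.deriv] at hf2
    have : (2:ℂ) * deriv q 0 = 0 := by linear_combination hf2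
    have h2ne : (2:ℂ) ≠ 0 := two_ne_zero
    exact (mul_eq_zero.mp this).resolve_left h2ne
  -- g = q⁻¹
  set g : ℂ → ℂ := fun z => (q z)⁻¹ with hgdef
  have hg : DifferentiableOn ℂ g (ball 0 1) := hq.inv hqne
  have hga : AnalyticOnNhd ℂ g (ball 0 1) := fun z hz =>
    hg.analyticAt (isOpen_ball.mem_nhds hz)
  have hg0 : g 0 = 1 := by rw [hgdef]; simp [hq0]
  have hgd : ∀ z ∈ ball (0:ℂ) 1, HasDerivAt g (-deriv q z / q z ^ 2) z := fun z hz =>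
    (hqa z hz).hasDerivAt.inv (hqne z hz)
  have hdg0 : deriv g 0 = 0 := by
    rw [(hgd 0 h0B).deriv, hdq0, hq0]; simp
  -- ω
  set ω : ℂ → ℂ := fun z => g z - z * deriv g z - 1 with hωdef
  have hdga : AnalyticOnNhd ℂ (deriv g) (ball 0 1) := hga.deriv
  have hdω : DifferentiableOn ℂ ω (ball 0 1) := by
    apply DifferentiableOn.sub _ (differentiableOn_const 1)
    exact hg.sub ((differentiableOn_id).mul (hdga.differentiableOn))
  have hω0 : ω 0 = 0 := by rw [hωdef]; simp [hg0]
  have hω'0 : deriv ω 0 = 0 := by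
    have h1 : HasDerivAt g (deriv g 0) 0 :=
      (hg.differentiableAt hmem).hasDerivAt
    have h2 : HasDerivAt (fun z => z * deriv g z) (1 * deriv g 0 + 0 * deriv (deriv g) 0) 0 :=
      (hasDerivAt_id 0).mul ((hdga 0 h0B).differentiableAt.hasDerivAt)
    have h3 : HasDerivAt ω (deriv g 0 - (1 * deriv g 0 + 0 * deriv (deriv g) 0) - 0) 0 :=
      (h1.sub h2).sub_const 1 |>.congr_deriv (by ring)
    rw [h3.deriv]; ring
  have hωb : ∀ z ∈ ball (0:ℂ) 1, ‖ω z‖ < 1 := by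
    intro z hz
    rcases eq_or_ne z 0 with rfl | hzne
    · rw [hω0]; norm_num
    · have hzf : z / f z = (q z)⁻¹ := by
        rw [hfq z, div_mul_cancel_left₀ hzne]
      have : deriv f z * (z / f z) ^ 2 - 1 = ω z := by
        rw [hzf, hderivf z hz, hωdef]
        simp only
        rw [(hgd z hz).deriv, hgdef]
        have := hqne z hz
        field_simp
        ring
      rw [← this]
      exact hfb z hz hzne
  have hωsq : ∀ z ∈ ball (0:ℂ) 1, ‖ω z‖ ≤ ‖z‖ ^ 2 := fun z hz =>
    schwarz_two hdω hω0 hω'0 hωb hz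
  -- m = dslope (g - 1) 0
  set h : ℂ → ℂ := fun z => g z - 1 with hhdef
  have hh : DifferentiableOn ℂ h (ball 0 1) := hg.sub (differentiableOn_const 1)
  set m : ℂ → ℂ := dslope h 0 with hmdef
  have hm : DifferentiableOn ℂ m (ball 0 1) := (differentiableOn_dslope hmem).mpr hh
  have hm0 : m 0 = 0 := by
    rw [hmdef, dslope_same]
    have hd : HasDerivAt h (deriv g 0) 0 := by
      have := ((hg.differentiableAt hmem).hasDerivAt).sub_const 1
      exact this
    rw [hd.deriv, hdg0]
  have hmz : ∀ z : ℂ, z ≠ 0 → m z = (g z - 1) / z := by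
    intro z hz
    rw [hmdef, dslope_of_ne _ hz, slope_def_field, hhdef]
    simp only [hg0]
    rw [sub_zero]
    ring_nf
  have hma : AnalyticOnNhd ℂ m (ball 0 1) := fun z hz =>
    hm.analyticAt (isOpen_ball.mem_nhds hz)
  have hdm : ∀ z ∈ ball (0:ℂ) 1, ‖deriv m z‖ ≤ 1 := by
    have hdm' : ∀ z ∈ ball (0:ℂ) 1, z ≠ 0 → ‖deriv m z‖ ≤ 1 := by
      intro z hz hzne
      -- m agrees with w ↦ (g w - 1)/w near z
      have hopen : IsOpen (ball (0:ℂ) 1 ∩ {w | w ≠ 0}) :=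
        isOpen_ball.inter (isOpen_compl_singleton)
      have hev : m =ᶠ[𝓝 z] (fun w => (g w - 1) / w) := by
        filter_upwards [hopen.mem_nhds ⟨hz, hzne⟩] with w hw using hmz w hw.2
      have hdiv : HasDerivAt (fun w => (g w - 1) / w)
          (((-deriv q z / q z ^ 2) * z - (g z - 1) * 1) / z ^ 2) z :=
        HasDerivAt.div ((hgd z hz).sub_const 1) (hasDerivAt_id z) hzne
      have hderivm : deriv m z = ((-deriv q z / q z ^ 2) * z - (g z - 1) * 1) / z ^ 2 := by
        rw [hev.deriv_eq, hdiv.deriv]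
      have hkey : deriv m z * z ^ 2 = -(ω z) := by
        rw [hderivm, hωdef]
        simp only
        rw [(hgd z hz).deriv]
        have := hqne z hz
        field_simp
        ring
      have hz2 : z ^ 2 ≠ 0 := pow_ne_zero 2 hzne
      have : ‖deriv m z‖ * ‖z‖ ^ 2 ≤ ‖z‖ ^ 2 := by
        calc ‖deriv m z‖ * ‖z‖ ^ 2 = ‖deriv m z * z ^ 2‖ := by
              rw [norm_mul, norm_pow]
          _ = ‖ω z‖ := by rw [hkey, norm_neg]
          _ ≤ ‖z‖ ^ 2 := hωsq z hz
      have hzpos : (0:ℝ) < ‖z‖ ^ 2 := pow_pos (norm_pos_iff.mpr hzne) 2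
      exact le_of_mul_le_mul_right (by linarith) hzpos
    intro z hz
    rcases eq_or_ne z 0 with rfl | hzne
    · have hcont : ContinuousAt (deriv m) 0 := ((hma.deriv) 0 h0B).continuousAt
      have htt : Tendsto (fun w => ‖deriv m w‖) (𝓝[≠] (0:ℂ)) (𝓝 ‖deriv m 0‖) :=
        (hcont.norm.tendsto).mono_left nhdsWithin_le_nhds
      refine le_of_tendsto htt ?_
      have hball : ∀ᶠ w in 𝓝[≠] (0:ℂ), w ∈ ball (0:ℂ) 1 :=
        mem_nhdsWithin_of_mem_nhds hmem
      filter_upwards [hball, self_mem_nhdsWithin] with w hw hwne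
      exact hdm' w hw hwne
    · exact hdm' z hz hzne
  -- conclusion via MVT
  intro z hz hzne
  have hmvt : ‖m z - m 0‖ ≤ 1 * ‖z - 0‖ :=
    (convex_ball (0:ℂ) 1).norm_image_sub_le_of_norm_deriv_le
      (fun x hx => hm.differentiableAt (isOpen_ball.mem_nhds hx)) hdm h0B hz
  rw [hm0, sub_zero, sub_zero, one_mul] at hmvt
  have hgz : ‖g z - 1‖ ≤ ‖z‖ ^ 2 := by
    have : g z - 1 = m z * z := by
      rw [hmz z hzne]; field_simp
    rw [this, norm_mul, sq]
    exact mul_le_mul_of_nonneg_right hmvt (norm_nonneg z)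
  have hlt : ‖g z - 1‖ < 1 := by
    have hz1 : ‖z‖ < 1 := mem_ball_zero_iff.mp hz
    have : ‖z‖ ^ 2 < 1 := by nlinarith [norm_nonneg z]
    linarith
  have hwne : f z / z ≠ 0 := div_ne_zero (hfne z hz hzne) hzne
  apply re_gt_half hwne
  have : (f z / z)⁻¹ = g z := by rw [hgdef]; simp only; rw [hqz z hzne]
  rw [this]
  exact hlt
end
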